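/- arXiv:2003.06021 — 8 statements merged into one kernel-verified Lean document; each statement's English description precedes it below -/
import Mathlib

section
/- A continuous function F : ℝ^n → ℝ is the Lovász extension F = f^L of some set function f : P(V) → ℝ if and only if F is comonotonic additive, i.e., F(x + y) = F(x) + F(y) whenever x and y are comonotonic (meaning (x_i − x_j)(y_i − y_j) ≥ 0 for all i, j ∈ V). -/
open Finset

/-- The Lovász extension of a set function `f : 𝒫(V) → ℝ` on `V = Fin n`:
`f^L(x) = ∫_{min_i x_i}^{max_i x_i} f(V^t(x)) dt + f(V) · min_i x_i`,
where `V^t(x) = {i : x_i > t}`. -/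
noncomputable def lovasz {n : ℕ} (f : Finset (Fin n) → ℝ) (x : Fin n → ℝ) : ℝ :=
  (∫ t in (⨅ i, x i)..(⨆ i, x i), f (Finset.univ.filter (fun i => t < x i))) +
    f Finset.univ * (⨅ i, x i)


section Aux

variable {n : ℕ}

def lidx (hn : 1 ≤ n) (k : ℕ) : Fin n := ⟨min k (n-1), by omega⟩

def lS (σ : Equiv.Perm (Fin n)) (k : ℕ) : Finset (Fin n) :=
  Finset.univ.filter (fun i => ((σ.symm i : Fin n) : ℕ) ≤ k)

def lchi (A : Finset (Fin n)) : Fin n → ℝ := fun i => if i ∈ A then 1 else 0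

lemma exists_common_sort {x y : Fin n → ℝ}
    (h : ∀ i j : Fin n, 0 ≤ (x i - x j) * (y i - y j)) :
    ∃ σ : Equiv.Perm (Fin n), Antitone (x ∘ σ) ∧ Antitone (y ∘ σ) := by
  set g : Fin n → ℝ := fun i => -(x i + y i) with hg
  refine ⟨Tuple.sort g, ?_, ?_⟩
  · intro a b hab
    have hs := Tuple.monotone_sort g hab
    simp only [Function.comp, hg] at hs ⊢
    by_contra hlt
    push_neg at hlt
    have hxy := h (Tuple.sort g b) (Tuple.sort g a)
    nlinarith
  · intro a b hab
    have hs := Tuple.monotone_sort g hab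
    simp only [Function.comp, hg] at hs ⊢
    by_contra hlt
    push_neg at hlt
    have hxy := h (Tuple.sort g b) (Tuple.sort g a)
    nlinarith

lemma key_formula (hn : 1 ≤ n) (f : Finset (Fin n) → ℝ) (σ : Equiv.Perm (Fin n))
    (x : Fin n → ℝ) (hx : Antitone (x ∘ σ)) :
    lovasz f x = (∑ k ∈ Finset.range (n-1),
        (x (σ (lidx hn k)) - x (σ (lidx hn (k+1)))) * f (lS σ k))
      + x (σ (lidx hn (n-1))) * f Finset.univ := by
  haveI : Nonempty (Fin n) := ⟨⟨0, by omega⟩⟩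
  set a : ℕ → ℝ := fun k => x (σ (lidx hn k)) with ha
  have haanti : ∀ j k : ℕ, j ≤ k → a k ≤ a j := by
    intro j k hjk
    exact hx (by simp [lidx, Fin.le_def]; omega)
  have hxval : ∀ i : Fin n, x i = (x ∘ σ) (σ.symm i) := by intro i; simp
  have hlow : ∀ i : Fin n, a (n-1) ≤ x i := by
    intro i
    rw [hxval i]
    exact hx (by simp [lidx, Fin.le_def]; omega)
  have hhigh : ∀ i : Fin n, x i ≤ a 0 := by
    intro i
    rw [hxval i]
    exact hx (by simp [lidx, Fin.le_def])
  have hinf : (⨅ i, x i) = a (n-1) := by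
    apply le_antisymm
    · exact ciInf_le (Set.Finite.bddBelow (Set.finite_range x)) (σ (lidx hn (n-1)))
    · exact le_ciInf hlow
  have hsup : (⨆ i, x i) = a 0 := by
    apply le_antisymm
    · exact ciSup_le hhigh
    · exact le_ciSup (Set.Finite.bddAbove (Set.finite_range x)) (σ (lidx hn 0))
  set g : ℝ → ℝ := fun t => f (Finset.univ.filter (fun i => t < x i)) with hg
  have hC : ∀ j, j < n-1 → ∀ t ∈ Set.Ioo (a (j+1)) (a j),
      Finset.univ.filter (fun i => t < x i) = lS σ j := by
    intro j hj t ht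
    ext i
    simp only [lS, Finset.mem_filter, Finset.mem_univ, true_and]
    constructor
    · intro hti
      by_contra hgt
      push_neg at hgt
      have : x i ≤ a (j+1) := by
        rw [hxval i]
        exact hx (by simp [lidx, Fin.le_def]; omega)
      linarith [ht.1]
    · intro hle
      have : a j ≤ x i := by
        rw [hxval i]
        exact hx (by simp [lidx, Fin.le_def]; omega)
      linarith [ht.2]
  have hae : ∀ j, j < n-1 → ∀ᵐ t : ℝ, t ∈ Set.uIoc (a (j+1)) (a j) → g t = f (lS σ j) := by
    intro j hj
    have h0 : ∀ᵐ t : ℝ, t ∉ ({a j} : Set ℝ) := by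
      rw [← MeasureTheory.measure_eq_zero_iff_ae_notMem]
      exact Real.volume_singleton
    filter_upwards [h0] with t ht hmem
    rw [Set.uIoc_of_le (haanti j (j+1) (Nat.le_succ j))] at hmem
    have : t ∈ Set.Ioo (a (j+1)) (a j) := ⟨hmem.1, lt_of_le_of_ne hmem.2 (by simpa using ht)⟩
    rw [hg]; simp only []
    rw [hC j hj t this]
  have hD : ∀ j, j < n-1 → (∫ t in (a (j+1))..(a j), g t) = (a j - a (j+1)) * f (lS σ j) := by
    intro j hj
    rw [intervalIntegral.integral_congr_ae (hae j hj)]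
    simp [mul_comm]
  have hInt : ∀ j, j < n-1 → IntervalIntegrable g MeasureTheory.volume (a (j+1)) (a j) := by
    intro j hj
    apply (intervalIntegrable_const (c := f (lS σ j))).congr_ae
    exact Filter.EventuallyEq.symm
      ((MeasureTheory.ae_restrict_iff' measurableSet_uIoc).2 (hae j hj))
  set b : ℕ → ℝ := fun k => a (n-1-k) with hb
  have hsum : ∑ k ∈ Finset.range (n-1), ∫ t in (b k)..(b (k+1)), g t
      = ∫ t in (b 0)..(b (n-1)), g t := by
    apply intervalIntegral.sum_integral_adjacent_intervals
    intro k hk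
    have h1 : n-1-(k+1) + 1 = n-1-k := by omega
    have h2 : n-1-(k+1) < n - 1 := by omega
    simp only [hb]
    rw [← h1]
    exact hInt _ h2
  have hterm : ∀ k ∈ Finset.range (n-1), (∫ t in (b k)..(b (k+1)), g t)
      = (fun j => (a j - a (j+1)) * f (lS σ j)) (n - 1 - 1 - k) := by
    intro k hk
    rw [Finset.mem_range] at hk
    have h1 : n-1-(k+1) + 1 = n-1-k := by omega
    have h2 : n-1-(k+1) < n - 1 := by omega
    have h3 : n - 1 - 1 - k = n - 1 - (k+1) := by omega
    simp only [hb, h3]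
    rw [← h1, hD _ h2, h1]
  have hint_eq : ∫ t in (a (n-1))..(a 0), g t
      = ∑ j ∈ Finset.range (n-1), (a j - a (j+1)) * f (lS σ j) := by
    have hb0 : b 0 = a (n-1) := by simp [hb]
    have hbn : b (n-1) = a 0 := by simp [hb]
    rw [← hb0, ← hbn, ← hsum, Finset.sum_congr rfl hterm,
      Finset.sum_range_reflect (fun j => (a j - a (j+1)) * f (lS σ j)) (n-1)]
  rw [lovasz, hinf, hsup]
  rw [hint_eq]
  ring

section Hom
variable {F : (Fin n → ℝ) → ℝ}
  (hco : ∀ x y : Fin n → ℝ,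
    (∀ i j : Fin n, 0 ≤ (x i - x j) * (y i - y j)) → F (x + y) = F x + F y)

include hco

lemma F_zero : F 0 = 0 := by
  have := hco 0 0 (by intro i j; simp)
  simp at this
  linarith

lemma F_add_smul (z : Fin n → ℝ) {c d : ℝ} (hc : 0 ≤ c) (hd : 0 ≤ d) :
    F ((c + d) • z) = F (c • z) + F (d • z) := by
  rw [add_smul]
  apply hco
  intro i j
  have : (c • z) i - (c • z) j = c * (z i - z j) := by simp [smul_eq_mul]; ring
  rw [this]
  have : (d • z) i - (d • z) j = d * (z i - z j) := by simp [smul_eq_mul]; ring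
  rw [this]
  nlinarith [mul_nonneg (mul_nonneg hc hd) (sq_nonneg (z i - z j))]

lemma F_nat_smul (z : Fin n → ℝ) (m : ℕ) {c : ℝ} (hc : 0 ≤ c) :
    F (((m : ℝ) * c) • z) = (m : ℝ) * F (c • z) := by
  induction m with
  | zero => simpa using F_zero hco
  | succ m ih =>
    push_cast
    rw [add_mul, one_mul, F_add_smul hco z (by positivity) hc, ih]
    ring

lemma F_rat_smul (z : Fin n → ℝ) {q : ℚ} (hq : 0 ≤ q) :
    F ((q : ℝ) • z) = (q : ℝ) * F z := by
  have hnum : 0 ≤ q.num := Rat.num_nonneg.2 hq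
  set p : ℕ := q.num.toNat with hp
  have hden : ((q.den : ℝ)) * (q : ℝ) = (p : ℝ) := by
    have : ((q.den : ℚ)) * q = (p : ℚ) := by
      rw [hp]
      rw [mul_comm]
      rw [Rat.mul_den_eq_num]
      exact_mod_cast (Int.toNat_of_nonneg hnum).symm
    exact_mod_cast congrArg (fun r : ℚ => (r : ℝ)) this
  have h1 : F (((p : ℝ)) • z) = (p : ℝ) * F z := by
    have := F_nat_smul hco z p (c := 1) zero_le_one
    simpa using this
  have h2 : F (((q.den : ℝ) * (q : ℝ)) • z) = (q.den : ℝ) * F ((q : ℝ) • z) :=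
    F_nat_smul hco z q.den (by positivity)
  rw [hden, h1] at h2
  have hdpos : (0:ℝ) < q.den := by positivity
  have key : (q.den:ℝ) * F ((q:ℝ) • z) = (q.den:ℝ) * ((q:ℝ) * F z) := by
    rw [← h2, ← mul_assoc, hden]
  exact mul_left_cancel₀ (ne_of_gt hdpos) key

lemma F_smul_nonneg (hF : Continuous F) (z : Fin n → ℝ) {c : ℝ} (hc : 0 ≤ c) :
    F (c • z) = c * F z := by
  have hclosed : IsClosed {c : ℝ | F (c • z) = c * F z} := by
    apply isClosed_eq
    · exact hF.comp (continuous_id.smul continuous_const)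
    · exact continuous_id.mul continuous_const
  have hsub : {x : ℝ | ∃ q : ℚ, 0 ≤ q ∧ (q : ℝ) = x} ⊆ {c : ℝ | F (c • z) = c * F z} := by
    rintro x ⟨q, hq, rfl⟩
    exact F_rat_smul hco z hq
  have hmem : c ∈ closure {x : ℝ | ∃ q : ℚ, 0 ≤ q ∧ (q : ℝ) = x} := by
    rw [Metric.mem_closure_iff]
    intro ε hε
    obtain ⟨q, hq1, hq2⟩ := exists_rat_btwn (show c < c + ε by linarith)
    refine ⟨(q : ℝ), ⟨q, by exact_mod_cast le_of_lt (lt_of_le_of_lt hc hq1), rfl⟩, ?_⟩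
    rw [Real.dist_eq, abs_lt]
    constructor <;> linarith
  exact (hclosed.closure_subset (closure_mono hsub hmem) : _)

lemma F_const (hF : Continuous F) (c : ℝ) :
    F (fun _ => c) = c * F (fun _ => (1:ℝ)) := by
  rcases le_or_gt 0 c with hc | hc
  · have := F_smul_nonneg hco hF (fun _ => (1:ℝ)) hc
    simpa [Pi.smul_def] using this
  · have hadd : F ((fun _ => c) + (fun _ => -c)) = F (fun _ => c) + F (fun _ => -c) := by
      apply hco
      intro i j; simp
    have h0 : ((fun _ => c) + (fun _ => -c) : Fin n → ℝ) = 0 := by funext i; simp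
    rw [h0, F_zero hco] at hadd
    have hneg := F_smul_nonneg hco hF (fun _ => (1:ℝ)) (le_of_lt (neg_pos.2 hc))
    simp only [Pi.smul_def, smul_eq_mul, mul_one] at hneg
    rw [hneg] at hadd
    linarith

lemma F_sum_cone (σ : Equiv.Perm (Fin n)) (m : ℕ) (p : ℕ → (Fin n → ℝ))
    (hp : ∀ k, Antitone (p k ∘ σ)) :
    F (∑ k ∈ Finset.range m, p k) = ∑ k ∈ Finset.range m, F (p k) := by
  induction m with
  | zero => simpa using F_zero hco
  | succ m ih =>
    rw [Finset.sum_range_succ, Finset.sum_range_succ, ← ih]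
    apply hco
    have hsumanti : Antitone ((∑ k ∈ Finset.range m, p k) ∘ σ) := by
      intro a b hab
      simp only [Function.comp, Finset.sum_apply]
      exact Finset.sum_le_sum (fun k _ => hp k hab)
    intro i j
    have hi : ∀ z w : Fin n → ℝ, Antitone (z ∘ σ) → Antitone (w ∘ σ) →
        0 ≤ (z i - z j) * (w i - w j) := by
      intro z w hz hw
      have hiz : z i = (z ∘ σ) (σ.symm i) := by simp
      have hjz : z j = (z ∘ σ) (σ.symm j) := by simp
      have hiw : w i = (w ∘ σ) (σ.symm i) := by simp
      have hjw : w j = (w ∘ σ) (σ.symm j) := by simp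
      rcases le_total (σ.symm i) (σ.symm j) with h | h
      · have h1 := hz h; have h2 := hw h
        rw [hiz, hjz, hiw, hjw]
        nlinarith
      · have h1 := hz h; have h2 := hw h
        rw [hiz, hjz, hiw, hjw]
        nlinarith
    exact hi _ _ hsumanti (hp m)

end Hom

lemma teles (a : ℕ → ℝ) : ∀ m j, j ≤ m →
    ∑ k ∈ Finset.range m, (if j ≤ k then (a k - a (k+1)) else 0) = a j - a m := by
  intro m
  induction m with
  | zero => intro j hj; interval_cases j; simp
  | succ m ih =>
    intro j hj
    rw [Finset.sum_range_succ]
    rcases Nat.lt_or_ge j (m+1) with h | h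
    · have hjm : j ≤ m := by omega
      rw [ih j hjm, if_pos hjm]
      ring
    · have hj1 : j = m + 1 := by omega
      subst hj1
      rw [if_neg (by omega)]
      have hz : ∑ k ∈ Finset.range m, (if m+1 ≤ k then (a k - a (k+1)) else 0) = 0 := by
        apply Finset.sum_eq_zero
        intro k hk
        rw [Finset.mem_range] at hk
        rw [if_neg (by omega)]
      rw [hz]
      ring

lemma decomp (hn : 1 ≤ n) (σ : Equiv.Perm (Fin n)) (x : Fin n → ℝ) (hx : Antitone (x ∘ σ)) :
    x = (∑ k ∈ Finset.range (n-1),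
        (x (σ (lidx hn k)) - x (σ (lidx hn (k+1)))) • lchi (lS σ k))
      + (fun _ => x (σ (lidx hn (n-1)))) := by
  set a : ℕ → ℝ := fun k => x (σ (lidx hn k)) with ha
  funext i
  set j : ℕ := ((σ.symm i : Fin n) : ℕ) with hjdef
  have hjlt : j < n := (σ.symm i).2
  have hxi : x i = a j := by
    have : lidx hn j = σ.symm i := by
      apply Fin.ext
      simp [lidx]
      omega
    rw [ha]
    simp only [this]
    simp
  simp only [Pi.add_apply, Finset.sum_apply, Pi.smul_apply, smul_eq_mul]
  have hterm : ∀ k ∈ Finset.range (n-1),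
      (a k - a (k+1)) * lchi (lS σ k) i = (if j ≤ k then (a k - a (k+1)) else 0) := by
    intro k _
    by_cases h : j ≤ k
    · rw [if_pos h]
      have : i ∈ lS σ k := by simp [lS, ← hjdef, h]
      simp [lchi, this]
    · rw [if_neg h]
      have : i ∉ lS σ k := by simp [lS, ← hjdef]; omega
      simp [lchi, this]
  rw [Finset.sum_congr rfl hterm, teles a (n-1) j (by omega), hxi]
  ring

end Aux

/-- A continuous `F : ℝⁿ → ℝ` is the Lovász extension of some set function iff
it is comonotonic additive. -/
theorem lovasz_iff_comonotone_additive {n : ℕ} (hn : 1 ≤ n)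
    (F : (Fin n → ℝ) → ℝ) (hF : Continuous F) :
    (∃ f : Finset (Fin n) → ℝ, F = lovasz f) ↔
      (∀ x y : Fin n → ℝ,
        (∀ i j : Fin n, 0 ≤ (x i - x j) * (y i - y j)) → F (x + y) = F x + F y) := by
  constructor
  · rintro ⟨f, rfl⟩ x y hxy
    obtain ⟨σ, hx, hy⟩ := exists_common_sort hxy
    have hxy' : Antitone ((x + y) ∘ σ) := fun a b hab => add_le_add (hx hab) (hy hab)
    rw [key_formula hn f σ x hx, key_formula hn f σ y hy, key_formula hn f σ (x+y) hxy']
    simp only [Pi.add_apply]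
    have hterm : ∀ k ∈ Finset.range (n-1),
        ((x (σ (lidx hn k)) + y (σ (lidx hn k))) -
          (x (σ (lidx hn (k+1))) + y (σ (lidx hn (k+1))))) * f (lS σ k)
        = (x (σ (lidx hn k)) - x (σ (lidx hn (k+1)))) * f (lS σ k)
          + (y (σ (lidx hn k)) - y (σ (lidx hn (k+1)))) * f (lS σ k) := by
      intro k _
      ring
    rw [Finset.sum_congr rfl hterm, Finset.sum_add_distrib]
    ring
  · intro hco
    refine ⟨fun A => F (lchi A), ?_⟩
    funext x
    have hself : ∀ i j : Fin n, 0 ≤ (x i - x j) * (x i - x j) := fun i j =>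
      mul_self_nonneg _
    obtain ⟨σ, hx, -⟩ := exists_common_sort hself
    set a : ℕ → ℝ := fun k => x (σ (lidx hn k)) with ha
    have haanti : ∀ u v : ℕ, u ≤ v → a v ≤ a u := by
      intro u v huv
      exact hx (by simp [lidx, Fin.le_def]; omega)
    set p : ℕ → (Fin n → ℝ) := fun k => (a k - a (k+1)) • lchi (lS σ k) with hp
    have hpanti : ∀ k, Antitone (p k ∘ σ) := by
      intro k u v huv
      simp only [hp, Function.comp, Pi.smul_apply, smul_eq_mul]
      have hc : 0 ≤ a k - a (k+1) := by
        have := haanti k (k+1) (Nat.le_succ k)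
        linarith
      apply mul_le_mul_of_nonneg_left _ hc
      by_cases h1 : σ v ∈ lS σ k
      · have h2 : σ u ∈ lS σ k := by
          simp only [lS, Finset.mem_filter, Finset.mem_univ, true_and,
            Equiv.symm_apply_apply] at h1 ⊢
          exact le_trans (by exact_mod_cast huv) h1
        simp [lchi, h1, h2]
      · simp only [lchi]
        rw [if_neg h1]
        by_cases h2 : σ u ∈ lS σ k <;> simp [h2]
    have hdec := decomp hn σ x hx
    have hsplit : F x = F (∑ k ∈ Finset.range (n-1), p k) + F (fun _ => a (n-1)) := by
      conv_lhs => rw [hdec]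
      apply hco
      intro i j
      simp only [sub_self, mul_zero]
      exact le_refl 0
    have hsum := F_sum_cone hco σ (n-1) p hpanti
    have hpk : ∀ k ∈ Finset.range (n-1), F (p k) = (a k - a (k+1)) * F (lchi (lS σ k)) := by
      intro k _
      have hc : 0 ≤ a k - a (k+1) := by
        have := haanti k (k+1) (Nat.le_succ k)
        linarith
      exact F_smul_nonneg hco hF _ hc
    have hconst : F (fun _ => a (n-1)) = a (n-1) * F (lchi Finset.univ) := by
      have huniv : lchi (Finset.univ : Finset (Fin n)) = fun _ => (1:ℝ) := by
        funext i; simp [lchi]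
      rw [F_const hco hF, huniv]
    rw [key_formula hn (fun A => F (lchi A)) σ x hx]
    rw [hsplit, hsum, Finset.sum_congr rfl hpk, hconst]
end

section
/- A continuous function F : ℝ^n → ℝ is the disjoint-pair Lovász extension F = f^L of some function f : P_2(V) → ℝ with f(∅,∅) = 0 if and only if F(x + y) = F(x) + F(y) whenever x and y are absolutely comonotonic (meaning x_i y_i ≥ 0 for all i, and (|x_i| − |x_j|)(|y_i| − |y_j|) ≥ 0 for all i, j). -/
open Finset

/-- The disjoint-pair Lovász extension of `f : 𝒫₂(V) → ℝ` (given as a function of two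
finsets, only its values on disjoint pairs are used):
`f^L(x) = ∫_0^{‖x‖_∞} f(V_+^t(x), V_-^t(x)) dt`, where `V_±^t(x) = {i : ±x_i > t}`. -/
noncomputable def dpLovasz {n : ℕ} (f : Finset (Fin n) → Finset (Fin n) → ℝ)
    (x : Fin n → ℝ) : ℝ :=
  ∫ t in (0:ℝ)..(⨆ i, |x i|),
    f (Finset.univ.filter (fun i => t < x i)) (Finset.univ.filter (fun i => t < -x i))

open MeasureTheory

namespace DPAux

variable {n : ℕ}

/-- signed indicator vector of a pair of finsets -/
noncomputable def chi (A B : Finset (Fin n)) : Fin n → ℝ :=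
  fun i => (if i ∈ A then (1:ℝ) else 0) - (if i ∈ B then (1:ℝ) else 0)

lemma abs_chi_le_one (A B : Finset (Fin n)) (i : Fin n) : |chi A B i| ≤ 1 := by
  unfold chi; split <;> split <;> norm_num

lemma chi_swap (A B : Finset (Fin n)) (i : Fin n) : chi B A i = - chi A B i := by
  unfold chi; ring

lemma chi_eq_one {A B : Finset (Fin n)} (hd : Disjoint A B) {i : Fin n} (hi : i ∈ A) :
    chi A B i = 1 := by
  unfold chi
  rw [if_pos hi, if_neg (fun hB => (Finset.disjoint_left.mp hd) hi hB)]
  ring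

lemma chi_nonneg_of_not_memB {A B : Finset (Fin n)} {i : Fin n} (hi : i ∉ B) :
    0 ≤ chi A B i := by
  unfold chi; rw [if_neg hi]; split <;> norm_num

lemma chi_eq_zero {A B : Finset (Fin n)} {i : Fin n} (hA : i ∉ A) (hB : i ∉ B) :
    chi A B i = 0 := by
  unfold chi; rw [if_neg hA, if_neg hB]; ring

/-- sum of a chain decomposition -/
noncomputable def chainSum (m : ℕ) (c : ℕ → ℝ) (A B : ℕ → Finset (Fin n)) : Fin n → ℝ :=
  fun i => ∑ k ∈ Finset.range m, c k * chi (A k) (B k) i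

lemma chainSum_swap (m : ℕ) (c : ℕ → ℝ) (A B : ℕ → Finset (Fin n)) (i : Fin n) :
    chainSum m c B A i = - chainSum m c A B i := by
  unfold chainSum
  rw [← Finset.sum_neg_distrib]
  exact Finset.sum_congr rfl fun k _ => by rw [chi_swap]; ring

section Chain

variable {m : ℕ} {c : ℕ → ℝ} {A B : ℕ → Finset (Fin n)}

lemma chain_subset (hA : ∀ k, k + 1 < m → A (k + 1) ⊆ A k) :
    ∀ {j k : ℕ}, j ≤ k → k < m → A k ⊆ A j := by
  intro j k hjk hk
  induction k with
  | zero => rw [Nat.le_zero.mp hjk]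
  | succ k ih =>
    rcases Nat.lt_or_ge j (k + 1) with h | h
    · exact (hA k hk).trans (ih (Nat.lt_succ_iff.mp h) (Nat.lt_of_succ_lt hk))
    · rw [Nat.le_antisymm hjk h]

lemma not_memB (hd : ∀ k, k < m → Disjoint (A k) (B k))
    (hA : ∀ k, k + 1 < m → A (k + 1) ⊆ A k) (hB : ∀ k, k + 1 < m → B (k + 1) ⊆ B k)
    {k : ℕ} (hk : k < m) {i : Fin n} (hi : i ∈ A k) {j : ℕ} (hj : j < m) : i ∉ B j := by
  intro hiB
  rcases le_total j k with h | h
  · exact Finset.disjoint_left.mp (hd j hj) (chain_subset hA h hk hi) hiB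
  · exact Finset.disjoint_left.mp (hd k hk) hi (chain_subset hB h hj hiB)

lemma le_chainSum (hc : ∀ k, k < m → 0 ≤ c k) (hd : ∀ k, k < m → Disjoint (A k) (B k))
    (hA : ∀ k, k + 1 < m → A (k + 1) ⊆ A k) (hB : ∀ k, k + 1 < m → B (k + 1) ⊆ B k)
    {k : ℕ} (hk : k < m) {i : Fin n} (hi : i ∈ A k) :
    ∑ j ∈ Finset.range (k + 1), c j ≤ chainSum m c A B i := by
  have h1 : ∑ j ∈ Finset.range (k + 1), c j
      = ∑ j ∈ Finset.range (k + 1), c j * chi (A j) (B j) i := by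
    refine Finset.sum_congr rfl fun j hj => ?_
    rw [Finset.mem_range] at hj
    have hj' : j < m := lt_of_le_of_lt (Nat.lt_succ_iff.mp hj) hk
    rw [chi_eq_one (hd j hj') (chain_subset hA (Nat.lt_succ_iff.mp hj) hk hi)]
    ring
  rw [h1]
  refine Finset.sum_le_sum_of_subset_of_nonneg ?_ fun j hj _ => ?_
  · exact Finset.range_subset_range.mpr hk
  · rw [Finset.mem_range] at hj
    exact mul_nonneg (hc j hj) (chi_nonneg_of_not_memB (not_memB hd hA hB hk hi hj))

lemma chainSum_le (hc : ∀ k, k < m → 0 ≤ c k)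
    (hA : ∀ k, k + 1 < m → A (k + 1) ⊆ A k)
    {k : ℕ} (hk : k < m) {i : Fin n} (hi : i ∉ A k) :
    chainSum m c A B i ≤ ∑ j ∈ Finset.range k, c j := by
  have h1 : chainSum m c A B i
      ≤ ∑ j ∈ Finset.range m, c j * (if i ∈ A j then (1:ℝ) else 0) := by
    refine Finset.sum_le_sum fun j hj => ?_
    rw [Finset.mem_range] at hj
    refine mul_le_mul_of_nonneg_left ?_ (hc j hj)
    unfold chi; split <;> split <;> norm_num
  refine h1.trans ?_
  have h2 : ∑ j ∈ Finset.range m, c j * (if i ∈ A j then (1:ℝ) else 0)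
      = ∑ j ∈ Finset.range k, c j * (if i ∈ A j then (1:ℝ) else 0) := by
    refine (Finset.sum_subset (Finset.range_subset_range.mpr hk.le) fun j hj hj' => ?_).symm
    rw [Finset.mem_range] at hj hj'
    have : i ∉ A j := fun hij => hi (chain_subset hA (Nat.le_of_not_lt hj') hj hij)
    rw [if_neg this]; ring
  rw [h2]
  refine Finset.sum_le_sum fun j hj => ?_
  rw [Finset.mem_range] at hj
  have := hc j (hj.trans hk)
  split <;> nlinarith

lemma abs_chainSum_le (hc : ∀ k, k < m → 0 ≤ c k) (i : Fin n) :
    |chainSum m c A B i| ≤ ∑ j ∈ Finset.range m, c j := by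
  refine (Finset.abs_sum_le_sum_abs _ _).trans (Finset.sum_le_sum fun j hj => ?_)
  rw [Finset.mem_range] at hj
  rw [abs_mul, abs_of_nonneg (hc j hj)]
  nlinarith [abs_chi_le_one (A j) (B j) i, hc j hj, abs_nonneg (chi (A j) (B j) i)]

lemma chainSum_eq_total (hd : ∀ k, k < m → Disjoint (A k) (B k))
    {i : Fin n} (hmem : ∀ k, k < m → i ∈ A k) :
    chainSum m c A B i = ∑ j ∈ Finset.range m, c j := by
  refine Finset.sum_congr rfl fun j hj => ?_
  rw [Finset.mem_range] at hj
  rw [chi_eq_one (hd j hj) (hmem j hj)]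
  ring

lemma filter_chainSum_pos (hc : ∀ k, k < m → 0 ≤ c k)
    (hd : ∀ k, k < m → Disjoint (A k) (B k))
    (hA : ∀ k, k + 1 < m → A (k + 1) ⊆ A k) (hB : ∀ k, k + 1 < m → B (k + 1) ⊆ B k)
    {k : ℕ} (hk : k < m) {t : ℝ} (ht1 : ∑ j ∈ Finset.range k, c j < t)
    (ht2 : t < ∑ j ∈ Finset.range (k + 1), c j) :
    Finset.univ.filter (fun i => t < chainSum m c A B i) = A k := by
  ext i
  simp only [Finset.mem_filter, Finset.mem_univ, true_and]
  constructor
  · intro ht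
    by_contra hi
    exact absurd (ht.trans_le (chainSum_le hc hA hk hi)) (not_lt.mpr ht1.le)
  · intro hi
    exact ht2.trans_le (le_chainSum hc hd hA hB hk hi)

end Chain

end DPAux

namespace DPAux

variable {n : ℕ}

section Integral

variable {m : ℕ} {c : ℕ → ℝ} {A B : ℕ → Finset (Fin n)}

lemma dpLovasz_chainSum (hn : 1 ≤ n) (f : Finset (Fin n) → Finset (Fin n) → ℝ)
    (hf : f ∅ ∅ = 0)
    (hc : ∀ k, k < m → 0 ≤ c k) (hd : ∀ k, k < m → Disjoint (A k) (B k))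
    (hA : ∀ k, k + 1 < m → A (k + 1) ⊆ A k) (hB : ∀ k, k + 1 < m → B (k + 1) ⊆ B k) :
    dpLovasz f (chainSum m c A B) = ∑ k ∈ Finset.range m, c k * f (A k) (B k) := by
  set x : Fin n → ℝ := chainSum m c A B with hx
  set g : ℝ → ℝ := fun t =>
    f (Finset.univ.filter (fun i => t < x i)) (Finset.univ.filter (fun i => t < -x i)) with hg
  set s : ℕ → ℝ := fun k => ∑ j ∈ Finset.range k, c j with hs
  have hsle : ∀ k, k < m → s k ≤ s (k + 1) := by
    intro k hk
    simp only [hs, Finset.sum_range_succ]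
    nlinarith [hc k hk]
  -- a.e. equality on each piece
  have hae : ∀ k, k < m →
      g =ᵐ[volume.restrict (Set.Ioc (s k) (s (k + 1)))] fun _ => f (A k) (B k) := by
    intro k hk
    rw [Filter.EventuallyEq, ae_iff]
    rw [Measure.restrict_apply' measurableSet_Ioc]
    refine measure_mono_null (fun t ht => ?_) (measure_singleton (s (k + 1)))
    simp only [Set.mem_inter_iff, Set.mem_setOf_eq, Set.mem_Ioc] at ht
    obtain ⟨hne, ht1, ht2⟩ := ht
    rcases eq_or_lt_of_le ht2 with h | h
    · exact h
    exfalso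
    apply hne
    have e2 : s (k + 1) = ∑ j ∈ Finset.range (k + 1), c j := rfl
    have hP : Finset.univ.filter (fun i => t < x i) = A k :=
      filter_chainSum_pos hc hd hA hB hk ht1 h
    have hM : Finset.univ.filter (fun i => t < -x i) = B k := by
      have : ∀ i, -x i = chainSum m c B A i := fun i => (chainSum_swap m c A B i) ▸ rfl
      calc Finset.univ.filter (fun i => t < -x i)
          = Finset.univ.filter (fun i => t < chainSum m c B A i) := by
            refine Finset.filter_congr fun i _ => ?_
            rw [this i]
        _ = B k := filter_chainSum_pos hc (fun k hk => (hd k hk).symm) hB hA hk ht1 h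
    simp only [hg, hP, hM]
  have hint : ∀ k, k < m → IntervalIntegrable g volume (s k) (s (k + 1)) := by
    intro k hk
    rw [intervalIntegrable_iff, Set.uIoc_of_le (hsle k hk)]
    exact (MeasureTheory.integrableOn_const measure_Ioc_lt_top.ne).congr
      (hae k hk).symm
  have hval : ∀ k, k < m →
      (∫ t in (s k)..(s (k + 1)), g t) = c k * f (A k) (B k) := by
    intro k hk
    rw [intervalIntegral.integral_of_le (hsle k hk)]
    rw [MeasureTheory.integral_congr_ae (hae k hk)]
    rw [MeasureTheory.setIntegral_const]
    rw [Real.volume_real_Ioc_of_le (hsle k hk), smul_eq_mul]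
    have : s (k + 1) - s k = c k := by simp [hs, Finset.sum_range_succ]
    rw [this]
  have hsum : ∑ k ∈ Finset.range m, (∫ t in (s k)..(s (k + 1)), g t)
      = ∫ t in (s 0)..(s m), g t :=
    intervalIntegral.sum_integral_adjacent_intervals hint
  have hs0 : s 0 = 0 := by simp [hs]
  set M : ℝ := ⨆ i, |x i| with hMdef
  have : Nonempty (Fin n) := Fin.pos_iff_nonempty.mp hn
  have hbdd : BddAbove (Set.range fun i => |x i|) := Set.Finite.bddAbove (Set.finite_range _)
  have hM0 : 0 ≤ M := le_trans (abs_nonneg _) (le_ciSup hbdd (Classical.arbitrary (Fin n)))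
  have hMle : M ≤ s m := ciSup_le fun i => abs_chainSum_le hc i
  have hgzero : ∀ t, M ≤ t → g t = 0 := by
    intro t ht
    have hP : Finset.univ.filter (fun i => t < x i) = ∅ := by
      refine Finset.filter_false_of_mem fun i _ => not_lt.mpr ?_
      exact le_trans (le_trans (le_abs_self _) (le_ciSup hbdd i)) ht
    have hQ : Finset.univ.filter (fun i => t < -x i) = ∅ := by
      refine Finset.filter_false_of_mem fun i _ => not_lt.mpr ?_
      exact le_trans (le_trans (neg_le_abs _) (le_ciSup hbdd i)) ht
    simp only [hg, hP, hQ, hf]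
  have hintfull : IntervalIntegrable g volume (s 0) (s m) :=
    IntervalIntegrable.trans_iterate hint
  have hint1 : IntervalIntegrable g volume 0 M := by
    refine hintfull.mono_set ?_
    rw [hs0]
    rw [Set.uIcc_of_le hM0, Set.uIcc_of_le (le_trans hM0 hMle)]
    exact Set.Icc_subset_Icc le_rfl hMle
  have hint2 : IntervalIntegrable g volume M (s m) := by
    refine hintfull.mono_set ?_
    rw [hs0]
    rw [Set.uIcc_of_le hMle, Set.uIcc_of_le (le_trans hM0 hMle)]
    exact Set.Icc_subset_Icc hM0 le_rfl
  have hzero2 : (∫ t in M..(s m), g t) = 0 := by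
    have : Set.EqOn g (fun _ => (0:ℝ)) (Set.uIcc M (s m)) := by
      intro t ht
      rw [Set.uIcc_of_le hMle] at ht
      exact hgzero t ht.1
    rw [intervalIntegral.integral_congr this, intervalIntegral.integral_const, smul_zero]
  have hsplit : (∫ t in (0:ℝ)..(s m), g t) = (∫ t in (0:ℝ)..M, g t) + ∫ t in M..(s m), g t :=
    (intervalIntegral.integral_add_adjacent_intervals hint1 hint2).symm
  have : dpLovasz f x = ∫ t in (0:ℝ)..M, g t := rfl
  rw [this]
  have : (∫ t in (0:ℝ)..M, g t) = ∫ t in (0:ℝ)..(s m), g t := by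
    rw [hsplit, hzero2, add_zero]
  rw [this, ← hs0, ← hsum]
  exact Finset.sum_congr rfl fun k hk => hval k (Finset.mem_range.mp hk)

end Integral

end DPAux

namespace DPAux

variable {n : ℕ}

section Decomp

/-- the common sorting permutation -/
noncomputable def permOf (x y : Fin n → ℝ) : Equiv.Perm (Fin n) :=
  Tuple.sort (fun i => |x i| + |y i|)

noncomputable def UOf (x y : Fin n → ℝ) : ℕ → ℝ :=
  fun k => if h : k < n then |x (permOf x y ⟨k, h⟩)| else 0

noncomputable def VOf (x y : Fin n → ℝ) : ℕ → ℝ :=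
  fun k => match k with
  | 0 => 0
  | (j + 1) => UOf x y j

noncomputable def cOf (x y : Fin n → ℝ) : ℕ → ℝ :=
  fun k => VOf x y (k + 1) - VOf x y k

noncomputable def AOf (x y : Fin n → ℝ) : ℕ → Finset (Fin n) :=
  fun k => Finset.univ.filter
    (fun i => (0 < x i ∨ 0 < y i) ∧ k ≤ (((permOf x y).symm i : Fin n) : ℕ))

noncomputable def BOf (x y : Fin n → ℝ) : ℕ → Finset (Fin n) :=
  fun k => Finset.univ.filter
    (fun i => (x i < 0 ∨ y i < 0) ∧ k ≤ (((permOf x y).symm i : Fin n) : ℕ))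

variable {x y : Fin n → ℝ}

lemma permOf_comm : permOf (n := n) x y = permOf y x := by
  unfold permOf
  congr 1
  funext i
  ring

lemma AOf_comm : AOf x y = AOf y x := by
  funext k
  unfold AOf
  rw [permOf_comm]
  exact Finset.filter_congr fun i _ => by tauto

lemma BOf_comm : BOf x y = BOf y x := by
  funext k
  unfold BOf
  rw [permOf_comm]
  exact Finset.filter_congr fun i _ => by tauto

lemma UOf_mono (h2 : ∀ i j, 0 ≤ (|x i| - |x j|) * (|y i| - |y j|)) :
    ∀ k, k + 1 < n → UOf x y k ≤ UOf x y (k + 1) := by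
  intro k hk
  have hk' : k < n := Nat.lt_of_succ_lt hk
  unfold UOf
  rw [dif_pos hk', dif_pos hk]
  set i := permOf x y ⟨k, hk'⟩ with hi
  set j := permOf x y ⟨k + 1, hk⟩ with hjd
  have hmono := Tuple.monotone_sort (fun i => |x i| + |y i|)
  have hs : |x i| + |y i| ≤ |x j| + |y j| := by
    have := hmono (a := ⟨k, hk'⟩) (b := ⟨k + 1, hk⟩) (by simp [Fin.le_def])
    simpa [permOf, hi, hjd] using this
  nlinarith [h2 j i]

lemma cOf_nonneg (h2 : ∀ i j, 0 ≤ (|x i| - |x j|) * (|y i| - |y j|)) :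
    ∀ k, k < n → 0 ≤ cOf x y k := by
  intro k hk
  unfold cOf
  rcases k with _ | k
  · simp only [VOf, sub_zero, UOf, dif_pos hk]
    exact abs_nonneg _
  · simp only [VOf, sub_nonneg]
    exact UOf_mono h2 k hk

lemma AOf_disjoint_BOf (h1 : ∀ i, 0 ≤ x i * y i) (k : ℕ) :
    Disjoint (AOf x y k) (BOf x y k) := by
  rw [Finset.disjoint_left]
  intro i hiA hiB
  simp only [AOf, BOf, Finset.mem_filter] at hiA hiB
  obtain ⟨-, hA, -⟩ := hiA
  obtain ⟨-, hB, -⟩ := hiB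
  have := h1 i
  rcases hA with h | h <;> rcases hB with h' | h' <;> nlinarith

lemma AOf_antitone (k : ℕ) : AOf x y (k + 1) ⊆ AOf x y k := by
  intro i hi
  simp only [AOf, Finset.mem_filter] at hi ⊢
  exact ⟨hi.1, hi.2.1, le_trans (Nat.le_succ k) hi.2.2⟩

lemma BOf_antitone (k : ℕ) : BOf x y (k + 1) ⊆ BOf x y k := by
  intro i hi
  simp only [BOf, Finset.mem_filter] at hi ⊢
  exact ⟨hi.1, hi.2.1, le_trans (Nat.le_succ k) hi.2.2⟩

lemma decomp_aux (h1 : ∀ i, 0 ≤ x i * y i) :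
    x = chainSum n (cOf x y) (AOf x y) (BOf x y) := by
  funext i
  set j : Fin n := (permOf x y).symm i with hj
  have hjn : (j : ℕ) < n := j.isLt
  have hUj : UOf x y (j : ℕ) = |x i| := by
    unfold UOf
    rw [dif_pos hjn]
    congr 2
    have : (⟨(j : ℕ), hjn⟩ : Fin n) = j := by ext; rfl
    rw [this, hj, Equiv.apply_symm_apply]
  have htel : ∀ l : ℕ, ∑ k ∈ Finset.range l, cOf x y k = VOf x y l := by
    intro l
    unfold cOf
    rw [Finset.sum_range_sub (VOf x y)]
    simp [VOf]
  have hsum_ite : ∀ (e : ℝ),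
      (∀ k, k ∈ Finset.range n → chi (AOf x y k) (BOf x y k) i
        = if k ≤ (j : ℕ) then e else 0) →
      chainSum n (cOf x y) (AOf x y) (BOf x y) i = |x i| * e := by
    intro e he
    unfold chainSum
    calc ∑ k ∈ Finset.range n, cOf x y k * chi (AOf x y k) (BOf x y k) i
        = ∑ k ∈ Finset.range n, (if k ≤ (j : ℕ) then cOf x y k * e else 0) := by
          refine Finset.sum_congr rfl fun k hk => ?_
          rw [he k hk]
          split <;> ring
      _ = ∑ k ∈ Finset.range ((j : ℕ) + 1), (if k ≤ (j : ℕ) then cOf x y k * e else 0) := by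
          refine (Finset.sum_subset (Finset.range_subset_range.mpr hjn) fun k _ hk' => ?_).symm
          rw [Finset.mem_range] at hk'
          rw [if_neg (by omega)]
      _ = ∑ k ∈ Finset.range ((j : ℕ) + 1), cOf x y k * e := by
          refine Finset.sum_congr rfl fun k hk => ?_
          rw [Finset.mem_range] at hk
          rw [if_pos (by omega)]
      _ = (∑ k ∈ Finset.range ((j : ℕ) + 1), cOf x y k) * e := by
          rw [Finset.sum_mul]
      _ = |x i| * e := by rw [htel, VOf, hUj]
  by_cases hpos : 0 < x i ∨ 0 < y i
  · have hxnn : 0 ≤ x i := by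
      rcases hpos with h | h
      · exact h.le
      · nlinarith [h1 i]
    have hneg : ¬ (x i < 0 ∨ y i < 0) := by
      rintro (h | h) <;> rcases hpos with h' | h' <;> nlinarith [h1 i]
    have he : ∀ k, k ∈ Finset.range n → chi (AOf x y k) (BOf x y k) i
        = if k ≤ (j : ℕ) then (1:ℝ) else 0 := by
      intro k _
      have hmB : i ∉ BOf x y k := by
        simp only [BOf, Finset.mem_filter, Finset.mem_univ, true_and]
        tauto
      have hmA : i ∈ AOf x y k ↔ k ≤ (j : ℕ) := by
        simp only [AOf, Finset.mem_filter, Finset.mem_univ, true_and, ← hj]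
        tauto
      unfold chi
      rw [if_neg hmB]
      by_cases hk : k ≤ (j : ℕ)
      · rw [if_pos (hmA.mpr hk), if_pos hk]; ring
      · rw [if_neg (fun h => hk (hmA.mp h)), if_neg hk]; ring
    rw [hsum_ite 1 he, mul_one, abs_of_nonneg hxnn]
  · by_cases hneg : x i < 0 ∨ y i < 0
    · have hxnp : x i ≤ 0 := by
        rcases hneg with h | h
        · exact h.le
        · nlinarith [h1 i]
      have he : ∀ k, k ∈ Finset.range n → chi (AOf x y k) (BOf x y k) i
          = if k ≤ (j : ℕ) then (-1:ℝ) else 0 := by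
        intro k _
        have hmA : i ∉ AOf x y k := by
          simp only [AOf, Finset.mem_filter, Finset.mem_univ, true_and]
          tauto
        have hmB : i ∈ BOf x y k ↔ k ≤ (j : ℕ) := by
          simp only [BOf, Finset.mem_filter, Finset.mem_univ, true_and, ← hj]
          tauto
        unfold chi
        rw [if_neg hmA]
        by_cases hk : k ≤ (j : ℕ)
        · rw [if_pos (hmB.mpr hk), if_pos hk]; ring
        · rw [if_neg (fun h => hk (hmB.mp h)), if_neg hk]; ring
      rw [hsum_ite (-1) he, abs_of_nonpos hxnp]
      ring
    · push_neg at hpos hneg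
      have hx0 : x i = 0 := le_antisymm hpos.1 hneg.1
      have he : ∀ k, k ∈ Finset.range n → chi (AOf x y k) (BOf x y k) i
          = if k ≤ (j : ℕ) then (0:ℝ) else 0 := by
        intro k _
        have hmA : i ∉ AOf x y k := by
          simp only [AOf, Finset.mem_filter, Finset.mem_univ, true_and]
          rintro ⟨h | h, -⟩ <;> linarith [hpos.1, hpos.2]
        have hmB : i ∉ BOf x y k := by
          simp only [BOf, Finset.mem_filter, Finset.mem_univ, true_and]
          rintro ⟨h | h, -⟩ <;> linarith [hneg.1, hneg.2]
        rw [chi_eq_zero hmA hmB]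
        split <;> rfl
      rw [hsum_ite 0 he, mul_zero, hx0]

lemma decomp (h1 : ∀ i, 0 ≤ x i * y i)
    (h2 : ∀ i j, 0 ≤ (|x i| - |x j|) * (|y i| - |y j|)) :
    ∃ (c d : ℕ → ℝ) (A B : ℕ → Finset (Fin n)),
      (∀ k, k < n → 0 ≤ c k) ∧ (∀ k, k < n → 0 ≤ d k) ∧
      (∀ k, k < n → Disjoint (A k) (B k)) ∧
      (∀ k, k + 1 < n → A (k + 1) ⊆ A k) ∧ (∀ k, k + 1 < n → B (k + 1) ⊆ B k) ∧
      x = chainSum n c A B ∧ y = chainSum n d A B := by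
  refine ⟨cOf x y, cOf y x, AOf x y, BOf x y, cOf_nonneg h2, cOf_nonneg ?_, ?_, ?_, ?_, ?_, ?_⟩
  · intro i j
    nlinarith [h2 i j]
  · exact fun k _ => AOf_disjoint_BOf h1 k
  · exact fun k _ => AOf_antitone k
  · exact fun k _ => BOf_antitone k
  · exact decomp_aux h1
  · have h1' : ∀ i, 0 ≤ y i * x i := fun i => by nlinarith [h1 i]
    rw [AOf_comm, BOf_comm]
    exact decomp_aux h1'

end Decomp

end DPAux

namespace DPAux

variable {n : ℕ}

section FF

variable {F : (Fin n → ℝ) → ℝ}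

/-- abbreviation for the additivity hypothesis -/
def Hadd (F : (Fin n → ℝ) → ℝ) : Prop :=
  ∀ x y : Fin n → ℝ,
    (∀ i : Fin n, 0 ≤ x i * y i) →
    (∀ i j : Fin n, 0 ≤ (|x i| - |x j|) * (|y i| - |y j|)) →
    F (x + y) = F x + F y

lemma F_zero (hadd : Hadd F) : F 0 = 0 := by
  have := hadd 0 0 (fun i => by simp) (fun i j => by simp)
  simp only [add_zero] at this
  linarith

lemma F_smul (hF : Continuous F) (hadd : Hadd F) (v : Fin n → ℝ) {c : ℝ} (hc : 0 ≤ c) :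
    F (c • v) = c * F v := by
  have hg : ∀ a b : ℝ, 0 ≤ a → 0 ≤ b → F ((a + b) • v) = F (a • v) + F (b • v) := by
    intro a b ha hb
    rw [add_smul]
    refine hadd (a • v) (b • v) (fun i => ?_) (fun i j => ?_)
    · simp only [Pi.smul_apply, smul_eq_mul]
      nlinarith [sq_nonneg (v i), mul_nonneg ha hb]
    · simp only [Pi.smul_apply, smul_eq_mul, abs_mul, abs_of_nonneg ha, abs_of_nonneg hb]
      nlinarith [sq_nonneg (|v i| - |v j|), mul_nonneg ha hb]
  have h0 : F 0 = 0 := F_zero hadd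
  set g : ℝ → ℝ := fun a => F (max a 0 • v) - F (max (-a) 0 • v) with hgdef
  have hmax : ∀ a : ℝ, max a 0 = (a + |a|) / 2 := by
    intro a
    rcases le_total a 0 with h | h
    · rw [max_eq_right h, abs_of_nonpos h]; ring
    · rw [max_eq_left h, abs_of_nonneg h]; ring
  have hgadd : ∀ a b, g (a + b) = g a + g b := by
    intro a b
    have hid : max (a + b) 0 + (max (-a) 0 + max (-b) 0)
        = max a 0 + (max b 0 + max (-(a + b)) 0) := by
      rw [hmax, hmax, hmax, hmax, hmax, hmax, abs_neg, abs_neg, abs_neg]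
      ring
    have e1 : F ((max (a + b) 0 + (max (-a) 0 + max (-b) 0)) • v)
        = F (max (a + b) 0 • v) + (F (max (-a) 0 • v) + F (max (-b) 0 • v)) := by
      rw [hg _ _ (le_max_right _ _) (add_nonneg (le_max_right _ _) (le_max_right _ _)),
        hg _ _ (le_max_right _ _) (le_max_right _ _)]
    have e2 : F ((max a 0 + (max b 0 + max (-(a + b)) 0)) • v)
        = F (max a 0 • v) + (F (max b 0 • v) + F (max (-(a + b)) 0 • v)) := by
      rw [hg _ _ (le_max_right _ _) (add_nonneg (le_max_right _ _) (le_max_right _ _)),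
        hg _ _ (le_max_right _ _) (le_max_right _ _)]
    rw [hid, e2] at e1
    simp only [hgdef]
    linarith
  let G : ℝ →+ ℝ := AddMonoidHom.mk' g hgadd
  have hGcont : Continuous G := by
    have c1 : Continuous fun a : ℝ => F (max a 0 • v) :=
      hF.comp ((continuous_id.max continuous_const).smul continuous_const)
    have c2 : Continuous fun a : ℝ => F (max (-a) 0 • v) :=
      hF.comp ((continuous_neg.max continuous_const).smul continuous_const)
    exact c1.sub c2
  have hlin : G c = c • G 1 := by
    have := map_real_smul G hGcont c 1
    simpa using this
  have hc1 : g c = c * g 1 := by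
    exact hlin
  have hgc : g c = F (c • v) := by
    simp only [hgdef, max_eq_left hc, max_eq_right (neg_nonpos.mpr hc), zero_smul, h0]
    ring
  have hg1 : g 1 = F v := by
    simp only [hgdef]
    norm_num [h0]
  rw [← hgc, hc1, hg1]

lemma F_chain (hF : Continuous F) (hadd : Hadd F) {m : ℕ} {c : ℕ → ℝ}
    {A B : ℕ → Finset (Fin n)}
    (hc : ∀ k, k < m → 0 ≤ c k) (hd : ∀ k, k < m → Disjoint (A k) (B k))
    (hA : ∀ k, k + 1 < m → A (k + 1) ⊆ A k) (hB : ∀ k, k + 1 < m → B (k + 1) ⊆ B k) :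
    F (chainSum m c A B) = ∑ k ∈ Finset.range m, c k * F (chi (A k) (B k)) := by
  induction m with
  | zero =>
    have : chainSum 0 c A B = 0 := by
      funext i; simp [chainSum]
    rw [this, Finset.sum_range_zero, F_zero hadd]
  | succ m ih =>
    have hc' : ∀ k, k < m → 0 ≤ c k := fun k hk => hc k (hk.trans (Nat.lt_succ_self m))
    have hd' : ∀ k, k < m → Disjoint (A k) (B k) :=
      fun k hk => hd k (hk.trans (Nat.lt_succ_self m))
    have hA' : ∀ k, k + 1 < m → A (k + 1) ⊆ A k :=
      fun k hk => hA k (hk.trans (Nat.lt_succ_self m))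
    have hB' : ∀ k, k + 1 < m → B (k + 1) ⊆ B k :=
      fun k hk => hB k (hk.trans (Nat.lt_succ_self m))
    have hmm : m < m + 1 := Nat.lt_succ_self m
    have hx : chainSum (m + 1) c A B = chainSum m c A B + c m • chi (A m) (B m) := by
      funext i
      simp only [chainSum, Finset.sum_range_succ, Pi.add_apply, Pi.smul_apply, smul_eq_mul]
    -- facts about membership in A m / B m
    have hmemA : ∀ i : Fin n, i ∈ A m → chainSum m c A B i = ∑ k ∈ Finset.range m, c k := by
      intro i hi
      exact chainSum_eq_total hd' fun k hk => chain_subset hA hk.le hmm hi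
    have hmemB : ∀ i : Fin n, i ∈ B m → chainSum m c A B i = -∑ k ∈ Finset.range m, c k := by
      intro i hi
      have := chainSum_eq_total (A := B) (B := A) (c := c) (m := m)
        (fun k hk => (hd' k hk).symm) (fun k hk => chain_subset hB hk.le hmm hi)
      rw [chainSum_swap] at this
      linarith
    have hsnn : 0 ≤ ∑ k ∈ Finset.range m, c k :=
      Finset.sum_nonneg fun k hk => hc' k (Finset.mem_range.mp hk)
    have habs : ∀ i : Fin n, i ∈ A m ∪ B m →
        |chainSum m c A B i| = ∑ k ∈ Finset.range m, c k := by
      intro i hi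
      rcases Finset.mem_union.mp hi with h | h
      · rw [hmemA i h, abs_of_nonneg hsnn]
      · rw [hmemB i h, abs_neg, abs_of_nonneg hsnn]
    have hchi_mem : ∀ i : Fin n, i ∈ A m ∪ B m → |chi (A m) (B m) i| = 1 := by
      intro i hi
      rcases Finset.mem_union.mp hi with h | h
      · rw [chi_eq_one (hd m hmm) h]; norm_num
      · rw [chi_swap, abs_neg, chi_eq_one (hd m hmm).symm h]; norm_num
    have hchi_not : ∀ i : Fin n, i ∉ A m ∪ B m → chi (A m) (B m) i = 0 := by
      intro i hi
      rw [Finset.mem_union] at hi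
      push_neg at hi
      exact chi_eq_zero hi.1 hi.2
    have key := hadd (chainSum m c A B) (c m • chi (A m) (B m)) ?_ ?_
    · rw [hx, key, ih hc' hd' hA' hB', Finset.sum_range_succ,
        F_smul hF hadd _ (hc m hmm)]
    · -- sign condition
      intro i
      simp only [Pi.smul_apply, smul_eq_mul]
      by_cases hi : i ∈ A m ∪ B m
      · rcases Finset.mem_union.mp hi with h | h
        · rw [hmemA i h, chi_eq_one (hd m hmm) h]
          nlinarith [hc m hmm]
        · rw [hmemB i h, chi_swap]
          rw [chi_eq_one (hd m hmm).symm h]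
          nlinarith [hc m hmm]
      · rw [hchi_not i hi]
        ring_nf
        simp
    · -- comonotonicity condition
      intro i j
      simp only [Pi.smul_apply, smul_eq_mul, abs_mul, abs_of_nonneg (hc m hmm)]
      by_cases hi : i ∈ A m ∪ B m <;> by_cases hj : j ∈ A m ∪ B m
      · rw [hchi_mem i hi, hchi_mem j hj]
        ring_nf
        simp
      · rw [hchi_mem i hi, hchi_not j hj, habs i hi, abs_zero]
        nlinarith [abs_chainSum_le (A := A) (B := B) hc' j, hc m hmm]
      · rw [hchi_mem j hj, hchi_not i hi, habs j hj, abs_zero]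
        nlinarith [abs_chainSum_le (A := A) (B := B) hc' i, hc m hmm]
      · rw [hchi_not i hi, hchi_not j hj]
        ring_nf
        simp

end FF

end DPAux


open DPAux

/-- A continuous `F : ℝⁿ → ℝ` is the disjoint-pair Lovász extension of some
`f : 𝒫₂(V) → ℝ` with `f(∅,∅) = 0` iff `F(x+y) = F(x)+F(y)` whenever `x, y` are
absolutely comonotonic. -/
theorem dpLovasz_iff_absolutely_comonotone_additive {n : ℕ} (hn : 1 ≤ n)
    (F : (Fin n → ℝ) → ℝ) (hF : Continuous F) :
    (∃ f : Finset (Fin n) → Finset (Fin n) → ℝ, f ∅ ∅ = 0 ∧ F = dpLovasz f) ↔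
      (∀ x y : Fin n → ℝ,
        (∀ i : Fin n, 0 ≤ x i * y i) →
        (∀ i j : Fin n, 0 ≤ (|x i| - |x j|) * (|y i| - |y j|)) →
        F (x + y) = F x + F y) := by

  constructor
  · rintro ⟨f, hf0, rfl⟩ x y h1 h2
    obtain ⟨c, d, A, B, hc, hd, hdis, hA, hB, hx, hy⟩ := decomp h1 h2
    have hxy : x + y = chainSum n (fun k => c k + d k) A B := by
      funext i
      simp only [Pi.add_apply, hx, hy, chainSum, ← Finset.sum_add_distrib]
      exact Finset.sum_congr rfl fun k _ => by ring
    rw [hxy, hx, hy,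
      dpLovasz_chainSum hn f hf0 (fun k hk => add_nonneg (hc k hk) (hd k hk)) hdis hA hB,
      dpLovasz_chainSum hn f hf0 hc hdis hA hB,
      dpLovasz_chainSum hn f hf0 hd hdis hA hB,
      ← Finset.sum_add_distrib]
    exact Finset.sum_congr rfl fun k _ => by ring
  · intro hadd
    refine ⟨fun A B => F (chi A B), ?_, ?_⟩
    · show F (chi (∅ : Finset (Fin n)) ∅) = 0
      have : chi (∅ : Finset (Fin n)) (∅ : Finset (Fin n)) = 0 := by
        funext i; simp [chi]
      rw [this]
      exact F_zero hadd
    · funext x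
      obtain ⟨c, d, A, B, hc, hd, hdis, hA, hB, hx, -⟩ :=
        decomp (x := x) (y := x) (fun i => mul_self_nonneg _)
          (fun i j => mul_self_nonneg _)
      rw [hx, F_chain hF hadd hc hdis hA hB,
        dpLovasz_chainSum hn _ (by
          show F (chi (∅ : Finset (Fin n)) ∅) = 0
          have : chi (∅ : Finset (Fin n)) (∅ : Finset (Fin n)) = 0 := by
            funext i; simp [chi]
          rw [this]; exact F_zero hadd) hc hdis hA hB]
end

section
/- Under the k-way setting below: (i) the feasible domain D_𝒜 is closed under the componentwise lattice operations ∨ (componentwise maximum) and ∧ (componentwise minimum); (ii) the following are equivalent: (a) f is k-way submodular on 𝒜; (b) the k-way Lovász extension f^L is convex on every convex subset of D_𝒜, i.e., for all x, y ∈ D_𝒜 and λ ∈ [0,1] such that the segment from x to y lies in D_𝒜, f^L(λx + (1−λ)y) ≤ λ f^L(x) + (1−λ) f^L(y); (c) f^L is submodular on D_𝒜, i.e., f^L(x) + f^L(y) ≥ f^L(x ∨ y) + f^L(x ∧ y) for all x, y ∈ D_𝒜. -/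
set_option maxHeartbeats 1000000

open MeasureTheory


open Finset

/-- The `k`-way Lovász extension of `f : 𝒫(V₁)×⋯×𝒫(V_k) → ℝ`. -/
noncomputable def kwayLovasz {k : ℕ} {n : Fin k → ℕ}
    (f : (∀ i, Finset (Fin (n i))) → ℝ) (x : ∀ i, Fin (n i) → ℝ) : ℝ :=
  (∫ t in (⨅ i, ⨅ j, x i j)..(⨆ i, ⨆ j, x i j),
      f (fun i => Finset.univ.filter (fun j => t < x i j))) +
    f (fun _ => Finset.univ) * (⨅ i, ⨅ j, x i j)



open Finset MeasureTheory

namespace KwayAux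

variable {k : ℕ} {n : Fin k → ℕ}

noncomputable def lev (x : ∀ i, Fin (n i) → ℝ) (t : ℝ) : ∀ i, Finset (Fin (n i)) :=
  fun i => Finset.univ.filter (fun j => t < x i j)

lemma measurableSet_lev_eq (x : ∀ i, Fin (n i) → ℝ) (A : ∀ i, Finset (Fin (n i))) :
    MeasurableSet {t : ℝ | lev x t = A} := by
  have h : {t : ℝ | lev x t = A} = ⋂ i, ⋂ j, {t : ℝ | t < x i j ↔ j ∈ A i} := by
    ext t
    simp only [Set.mem_setOf_eq, Set.mem_iInter, funext_iff, Finset.ext_iff, lev,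
      Finset.mem_filter, Finset.mem_univ, true_and]
  rw [h]
  refine MeasurableSet.iInter fun i => MeasurableSet.iInter fun j => ?_
  by_cases hj : j ∈ A i
  · have h2 : {t : ℝ | t < x i j ↔ j ∈ A i} = Set.Iio (x i j) := by
      ext t; simp [hj]
    rw [h2]; exact measurableSet_Iio
  · have h2 : {t : ℝ | t < x i j ↔ j ∈ A i} = Set.Ici (x i j) := by
      ext t; simp [hj, not_lt]
    rw [h2]; exact measurableSet_Ici

lemma intervalIntegrable_indicator {s : Set ℝ} (hs : MeasurableSet s) (c a b : ℝ) :
    IntervalIntegrable (s.indicator fun _ => c) volume a b := by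
  rw [intervalIntegrable_iff]
  refine (integrable_indicator_iff hs).2 ?_
  refine integrableOn_const (ne_of_lt ?_) enorm_ne_top
  calc (volume.restrict (Set.uIoc a b)) s ≤ volume (Set.uIoc a b) := by
        rw [Measure.restrict_apply hs]; exact measure_mono Set.inter_subset_right
    _ < ⊤ := measure_Ioc_lt_top

lemma intervalIntegrable_lev (g : (∀ i, Finset (Fin (n i))) → ℝ)
    (x : ∀ i, Fin (n i) → ℝ) (a b : ℝ) :
    IntervalIntegrable (fun t => g (lev x t)) volume a b := by
  classical
  have hfe : (fun t => g (lev x t)) =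
      ∑ A : ∀ i, Finset (Fin (n i)),
        Set.indicator {u : ℝ | lev x u = A} (fun _ => g A) := by
    funext t
    rw [Finset.sum_apply, Finset.sum_eq_single (lev x t)]
    · simp [Set.indicator]
    · intro A _ hA
      apply Set.indicator_of_notMem
      simpa [eq_comm] using hA
    · simp
  rw [hfe]
  exact IntervalIntegrable.sum _ fun A _ =>
    intervalIntegrable_indicator (measurableSet_lev_eq x A) (g A) a b


lemma ae_ne (c : ℝ) : ∀ᵐ (t : ℝ), t ≠ c := by
  refine MeasureTheory.ae_iff.2 ?_
  have : {t : ℝ | ¬ t ≠ c} = {c} := by ext t; simp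
  rw [this]
  exact measure_singleton c

lemma integral_if_lt {c M : ℝ} (W : ℝ) (hc0 : 0 ≤ c) (hcM : c ≤ M) :
    ∫ t in (0:ℝ)..M, (if t < c then W else 0) = W * c := by
  have hind : (fun t : ℝ => if t < c then W else 0) =
      (Set.Iio c).indicator (fun _ => W) := by
    funext t; simp [Set.indicator_apply]
  have h1 : IntervalIntegrable (fun t : ℝ => if t < c then W else 0) volume 0 c := by
    rw [hind]; exact intervalIntegrable_indicator measurableSet_Iio W 0 c
  have h2 : IntervalIntegrable (fun t : ℝ => if t < c then W else 0) volume c M := by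
    rw [hind]; exact intervalIntegrable_indicator measurableSet_Iio W c M
  have hsplit := intervalIntegral.integral_add_adjacent_intervals h1 h2
  have e1 : ∫ t in (0:ℝ)..c, (if t < c then W else 0) = W * c := by
    rw [intervalIntegral.integral_congr_ae (g := fun _ => W) ?_]
    · rw [intervalIntegral.integral_const, smul_eq_mul, sub_zero, mul_comm]
    · filter_upwards [ae_ne c] with t ht hmem
      rw [Set.uIoc_of_le hc0] at hmem
      have : t < c := lt_of_le_of_ne hmem.2 ht
      simp [this]
  have e2 : ∫ t in c..M, (if t < c then W else 0) = 0 := by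
    rw [intervalIntegral.integral_congr (g := fun _ => (0:ℝ)) ?_, intervalIntegral.integral_zero]
    intro t hmem
    rw [Set.uIcc_of_le hcM] at hmem
    simp [not_lt.2 hmem.1]
  rw [← hsplit, e1, e2, add_zero]

lemma integral_wsum (w x : ∀ i, Fin (n i) → ℝ) {M : ℝ}
    (hx0 : ∀ i j, 0 ≤ x i j) (hxM : ∀ i j, x i j ≤ M) :
    ∫ t in (0:ℝ)..M, (∑ i, ∑ j ∈ lev x t i, w i j) = ∑ i, ∑ j, w i j * x i j := by
  have hint : ∀ (i : Fin k) (j : Fin (n i)),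
      IntervalIntegrable (fun t : ℝ => if t < x i j then w i j else 0) volume 0 M := by
    intro i j
    have hind : (fun t : ℝ => if t < x i j then w i j else 0) =
        (Set.Iio (x i j)).indicator (fun _ => w i j) := by
      funext t; simp [Set.indicator_apply]
    rw [hind]; exact intervalIntegrable_indicator measurableSet_Iio _ 0 M
  have hrw : (fun t : ℝ => ∑ i, ∑ j ∈ lev x t i, w i j) =
      fun t : ℝ => ∑ i, ∑ j, if t < x i j then w i j else 0 := by
    funext t
    refine Finset.sum_congr rfl fun i _ => ?_
    rw [lev, Finset.sum_filter]
  have hint1 : ∀ i : Fin k,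
      IntervalIntegrable (fun t : ℝ => ∑ j, if t < x i j then w i j else 0) volume 0 M := by
    intro i
    have h := IntervalIntegrable.sum (μ := volume) (a := 0) (b := M)
      (univ : Finset (Fin (n i))) (f := fun j t => if t < x i j then w i j else 0)
      (fun j _ => hint i j)
    have he : (∑ j : Fin (n i), fun t : ℝ => if t < x i j then w i j else 0) =
        fun t : ℝ => ∑ j, if t < x i j then w i j else 0 := by
      funext t; rw [Finset.sum_apply]
    rwa [he] at h
  rw [hrw]
  rw [intervalIntegral.integral_finset_sum (fun i _ => hint1 i)]
  refine Finset.sum_congr rfl fun i _ => ?_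
  rw [intervalIntegral.integral_finset_sum (fun j _ => hint i j)]
  exact Finset.sum_congr rfl fun j _ => integral_if_lt (w i j) (hx0 i j) (hxM i j)


lemma lovasz_eq_integral (hk : 1 ≤ k) (hn : ∀ i, 1 ≤ n i)
    (f : (∀ i, Finset (Fin (n i))) → ℝ) (hf0 : f (fun _ => ∅) = 0)
    (x : ∀ i, Fin (n i) → ℝ) {M : ℝ}
    (hx0 : ∀ i j, 0 ≤ x i j) (hxM : ∀ i j, x i j ≤ M) :
    kwayLovasz f x = ∫ t in (0:ℝ)..M, f (lev x t) := by
  haveI : Nonempty (Fin k) := ⟨⟨0, hk⟩⟩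
  haveI : ∀ i, Nonempty (Fin (n i)) := fun i => ⟨⟨0, hn i⟩⟩
  set m := ⨅ i, ⨅ j, x i j with hm
  set S := ⨆ i, ⨆ j, x i j with hS
  have hm0 : 0 ≤ m := le_ciInf fun i => le_ciInf fun j => hx0 i j
  have hmx : ∀ i j, m ≤ x i j := fun i j =>
    le_trans (ciInf_le (Set.Finite.bddBelow (Set.finite_range _)) i)
      (ciInf_le (Set.Finite.bddBelow (Set.finite_range _)) j)
  have hxS : ∀ i j, x i j ≤ S := fun i j =>
    le_trans (le_ciSup (Set.Finite.bddAbove (Set.finite_range (x i))) j)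
      (le_ciSup (f := fun i => ⨆ j, x i j) (Set.Finite.bddAbove (Set.finite_range _)) i)
  have hSM : S ≤ M := ciSup_le fun i => ciSup_le fun j => hxM i j
  have hdef : kwayLovasz f x = (∫ t in m..S, f (lev x t)) + f (fun _ => univ) * m := rfl
  have e1 : ∫ t in (0:ℝ)..m, f (lev x t) = f (fun _ => univ) * m := by
    rw [intervalIntegral.integral_congr_ae (g := fun _ => f (fun _ => univ)) ?_]
    · rw [intervalIntegral.integral_const, smul_eq_mul, sub_zero, mul_comm]
    · filter_upwards [ae_ne m] with t ht hmem
      rw [Set.uIoc_of_le hm0] at hmem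
      have htm : t < m := lt_of_le_of_ne hmem.2 ht
      have : lev x t = fun _ => univ := by
        funext i
        refine Finset.filter_true_of_mem fun j _ => lt_of_lt_of_le htm (hmx i j)
      rw [this]
  have e3 : ∫ t in S..M, f (lev x t) = 0 := by
    rw [intervalIntegral.integral_congr (g := fun _ => (0:ℝ)) ?_, intervalIntegral.integral_zero]
    intro t hmem
    rw [Set.uIcc_of_le hSM] at hmem
    have : lev x t = fun _ => ∅ := by
      funext i
      refine Finset.filter_false_of_mem fun j _ => not_lt.2 (le_trans (hxS i j) hmem.1)
    simp only [this, hf0]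
  have hadd1 := intervalIntegral.integral_add_adjacent_intervals
    (intervalIntegrable_lev f x 0 m) (intervalIntegrable_lev f x m S)
  have hadd2 := intervalIntegral.integral_add_adjacent_intervals
    (intervalIntegrable_lev f x 0 S) (intervalIntegrable_lev f x S M)
  rw [hdef]
  rw [← hadd2, ← hadd1, e1, e3]
  ring


noncomputable def indVec (A : ∀ i, Finset (Fin (n i))) : ∀ i, Fin (n i) → ℝ :=
  fun i j => if j ∈ A i then 1 else 0

lemma indVec_nonneg (A : ∀ i, Finset (Fin (n i))) : ∀ i j, 0 ≤ indVec A i j := by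
  intro i j; unfold indVec; split <;> norm_num

lemma indVec_le_one (A : ∀ i, Finset (Fin (n i))) : ∀ i j, indVec A i j ≤ 1 := by
  intro i j; unfold indVec; split <;> norm_num

lemma lev_indVec_mid (A : ∀ i, Finset (Fin (n i))) {t : ℝ} (h0 : 0 ≤ t) (h1 : t < 1) :
    lev (indVec A) t = A := by
  funext i; ext j
  simp only [lev, mem_filter, mem_univ, true_and]
  by_cases hj : j ∈ A i <;> simp [indVec, hj] <;> [linarith; linarith]

lemma lovasz_ind (hk : 1 ≤ k) (hn : ∀ i, 1 ≤ n i)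
    (f : (∀ i, Finset (Fin (n i))) → ℝ) (hf0 : f (fun _ => ∅) = 0)
    (A : ∀ i, Finset (Fin (n i))) :
    kwayLovasz f (indVec A) = f A := by
  rw [lovasz_eq_integral hk hn f hf0 (indVec A) (indVec_nonneg A) (indVec_le_one A)]
  rw [intervalIntegral.integral_congr_ae (g := fun _ => f A) ?_]
  · rw [intervalIntegral.integral_const, smul_eq_mul, sub_zero, one_mul]
  · filter_upwards [ae_ne (1:ℝ)] with t ht hmem
    rw [Set.uIoc_of_le (by norm_num : (0:ℝ) ≤ 1)] at hmem
    rw [lev_indVec_mid A (le_of_lt hmem.1) (lt_of_le_of_ne hmem.2 ht)]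

lemma lev_half_lo {A B : ∀ i, Finset (Fin (n i))} {t : ℝ} (h0 : 0 ≤ t) (h2 : t < 1/2) :
    lev (fun i j => (1/2 : ℝ) * indVec A i j + (1 - 1/2) * indVec B i j) t =
      fun i => A i ∪ B i := by
  funext i; ext j
  simp only [lev, mem_filter, mem_univ, true_and, mem_union]
  by_cases hA : j ∈ A i <;> by_cases hB : j ∈ B i <;>
    simp [indVec, hA, hB] <;> linarith

lemma lev_half_hi {A B : ∀ i, Finset (Fin (n i))} {t : ℝ} (h2 : 1/2 ≤ t) (h1 : t < 1) :
    lev (fun i j => (1/2 : ℝ) * indVec A i j + (1 - 1/2) * indVec B i j) t =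
      fun i => A i ∩ B i := by
  funext i; ext j
  simp only [lev, mem_filter, mem_univ, true_and, mem_inter]
  by_cases hA : j ∈ A i <;> by_cases hB : j ∈ B i <;>
    simp [indVec, hA, hB] <;> linarith

lemma lovasz_half (hk : 1 ≤ k) (hn : ∀ i, 1 ≤ n i)
    (f : (∀ i, Finset (Fin (n i))) → ℝ) (hf0 : f (fun _ => ∅) = 0)
    (A B : ∀ i, Finset (Fin (n i))) :
    kwayLovasz f (fun i j => (1/2 : ℝ) * indVec A i j + (1 - 1/2) * indVec B i j) =
      (1/2) * f (fun i => A i ∪ B i) + (1/2) * f (fun i => A i ∩ B i) := by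
  have hx0 : ∀ i j, 0 ≤ (1/2 : ℝ) * indVec A i j + (1 - 1/2) * indVec B i j := by
    intro i j
    have := indVec_nonneg A i j; have := indVec_nonneg B i j; nlinarith
  have hx1 : ∀ i j, (1/2 : ℝ) * indVec A i j + (1 - 1/2) * indVec B i j ≤ 1 := by
    intro i j
    have := indVec_le_one A i j; have := indVec_le_one B i j; nlinarith
  rw [lovasz_eq_integral hk hn f hf0 _ hx0 (M := 1) hx1]
  set v : ∀ i, Fin (n i) → ℝ := fun i j => (1/2 : ℝ) * indVec A i j + (1 - 1/2) * indVec B i j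
  have hsplit := intervalIntegral.integral_add_adjacent_intervals
    (intervalIntegrable_lev f v 0 (1/2)) (intervalIntegrable_lev f v (1/2) 1)
  have e1 : ∫ t in (0:ℝ)..(1/2), f (lev v t) = (1/2) * f (fun i => A i ∪ B i) := by
    rw [intervalIntegral.integral_congr_ae (g := fun _ => f (fun i => A i ∪ B i)) ?_]
    · rw [intervalIntegral.integral_const, smul_eq_mul, sub_zero, mul_comm]
    · filter_upwards [ae_ne (1/2 : ℝ)] with t ht hmem
      rw [Set.uIoc_of_le (by norm_num : (0:ℝ) ≤ 1/2)] at hmem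
      have h2 : t < 1/2 := lt_of_le_of_ne hmem.2 ht
      have h0 : 0 ≤ t := le_of_lt hmem.1
      rw [lev_half_lo h0 h2]
  have e2 : ∫ t in (1/2 : ℝ)..1, f (lev v t) = (1/2) * f (fun i => A i ∩ B i) := by
    rw [intervalIntegral.integral_congr_ae (g := fun _ => f (fun i => A i ∩ B i)) ?_]
    · rw [intervalIntegral.integral_const, smul_eq_mul]; norm_num
    · filter_upwards [ae_ne (1:ℝ)] with t ht hmem
      rw [Set.uIoc_of_le (by norm_num : (1/2:ℝ) ≤ 1)] at hmem
      have h2 : (1:ℝ)/2 ≤ t := le_of_lt hmem.1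
      have h1 : t < 1 := lt_of_le_of_ne hmem.2 ht
      rw [lev_half_hi h2 h1]
  rw [← hsplit, e1, e2]


section Greedy

abbrev Key : Type := Lex (ℝ × Lex (ℝ × ℝ))

noncomputable def UpsSet (κ : ∀ i, Fin (n i) → Key) (c : Key) : ∀ i, Finset (Fin (n i)) :=
  fun i => univ.filter (fun j => c < κ i j)

noncomputable def UpSet (κ : ∀ i, Fin (n i) → Key) (c : Key) : ∀ i, Finset (Fin (n i)) :=
  fun i => univ.filter (fun j => c ≤ κ i j)

noncomputable def clsSet (κ : ∀ i, Fin (n i) → Key) (c : Key) : ∀ i, Finset (Fin (n i)) :=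
  fun i => univ.filter (fun j => κ i j = c)

def Ncard (A : ∀ i, Finset (Fin (n i))) : ℕ := ∑ i, (A i).card

def wSum (w : ∀ i, Fin (n i) → ℝ) (A : ∀ i, Finset (Fin (n i))) : ℝ :=
  ∑ i, ∑ j ∈ A i, w i j

noncomputable def gw (f : (∀ i, Finset (Fin (n i))) → ℝ) (κ : ∀ i, Fin (n i) → Key) :
    ∀ i, Fin (n i) → ℝ :=
  fun i j => (f (UpSet κ (κ i j)) - f (UpsSet κ (κ i j))) / (Ncard (clsSet κ (κ i j)) : ℝ)

lemma Ncard_eq_zero {A : ∀ i, Finset (Fin (n i))} (h : Ncard A = 0) : A = fun _ => ∅ := by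
  funext i
  rw [Ncard, Finset.sum_eq_zero_iff] at h
  exact Finset.card_eq_zero.1 (h i (mem_univ i))

lemma wSum_empty (w : ∀ i, Fin (n i) → ℝ) : wSum w (fun _ => ∅) = 0 := by simp [wSum]

lemma exists_min_key (κ : ∀ i, Fin (n i) → Key) (c : Key)
    (h : Ncard (UpsSet κ c) ≠ 0) :
    ∃ c', c < c' ∧ (∃ i j, κ i j = c') ∧ (∀ i j, c < κ i j → c' ≤ κ i j) := by
  classical
  have h1 : ∃ i, (UpsSet κ c i).card ≠ 0 := by
    by_contra hno
    push_neg at hno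
    exact h (Finset.sum_eq_zero fun i _ => hno i)
  obtain ⟨i0, hi0⟩ := h1
  obtain ⟨j0, hj0⟩ := Finset.card_ne_zero.1 hi0
  have hj0' : c < κ i0 j0 := by
    simpa [UpsSet] using hj0
  set KS : Finset Key :=
    ((univ : Finset (Fin k)).biUnion (fun i => (univ : Finset (Fin (n i))).image (κ i))).filter
      (fun d => c < d) with hKS
  have hmemKS : ∀ i j, c < κ i j → κ i j ∈ KS := by
    intro i j hj
    rw [hKS, mem_filter]
    exact ⟨Finset.mem_biUnion.2 ⟨i, mem_univ i, Finset.mem_image_of_mem _ (mem_univ j)⟩, hj⟩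
  have hne : KS.Nonempty := ⟨κ i0 j0, hmemKS i0 j0 hj0'⟩
  refine ⟨KS.min' hne, ?_, ?_, ?_⟩
  · exact (mem_filter.1 (KS.min'_mem hne)).2
  · have := (mem_filter.1 (KS.min'_mem hne)).1
    obtain ⟨i, _, hmem⟩ := Finset.mem_biUnion.1 this
    obtain ⟨j, _, hj⟩ := Finset.mem_image.1 hmem
    exact ⟨i, j, hj⟩
  · exact fun i j hj => KS.min'_le _ (hmemKS i j hj)

lemma UpsSet_eq_UpSet {κ : ∀ i, Fin (n i) → Key} {c c' : Key} (hcc' : c < c')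
    (hmin : ∀ i j, c < κ i j → c' ≤ κ i j) : UpsSet κ c = UpSet κ c' := by
  funext i; ext j
  simp only [UpsSet, UpSet, mem_filter, mem_univ, true_and]
  exact ⟨fun h => hmin i j h, fun h => lt_of_lt_of_le hcc' h⟩

lemma upSet_union {κ : ∀ i, Fin (n i) → Key} {c' : Key} (i : Fin k) :
    UpSet κ c' i = UpsSet κ c' i ∪ clsSet κ c' i := by
  ext j
  simp only [UpSet, UpsSet, clsSet, mem_filter, mem_univ, true_and, mem_union]
  constructor
  · intro h
    rcases lt_or_eq_of_le h with h | h
    · exact Or.inl h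
    · exact Or.inr h.symm
  · rintro (h | h)
    exacts [le_of_lt h, le_of_eq h.symm]

lemma upSet_disj {κ : ∀ i, Fin (n i) → Key} {c' : Key} (i : Fin k) :
    Disjoint (UpsSet κ c' i) (clsSet κ c' i) := by
  rw [Finset.disjoint_left]
  intro j hj hj2
  simp only [UpsSet, mem_filter, mem_univ, true_and] at hj
  simp only [clsSet, mem_filter, mem_univ, true_and] at hj2
  exact absurd hj2 (ne_of_gt hj)

lemma wSum_decomp (w : ∀ i, Fin (n i) → ℝ) {κ : ∀ i, Fin (n i) → Key} {c' : Key} :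
    wSum w (UpSet κ c') = wSum w (UpsSet κ c') + wSum w (clsSet κ c') := by
  rw [wSum, wSum, wSum, ← Finset.sum_add_distrib]
  refine Finset.sum_congr rfl fun i _ => ?_
  rw [upSet_union i, Finset.sum_union (upSet_disj i)]

lemma Ncard_cls_ne_zero {κ : ∀ i, Fin (n i) → Key} {c' : Key}
    (hach : ∃ i j, κ i j = c') : Ncard (clsSet κ c') ≠ 0 := by
  obtain ⟨i1, j1, h1⟩ := hach
  intro h
  have h2 := congrFun (Ncard_eq_zero h) i1
  have h3 : j1 ∈ clsSet κ c' i1 := by simp [clsSet, h1]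
  rw [h2] at h3
  simp at h3

lemma gw_clsSum (f : (∀ i, Finset (Fin (n i))) → ℝ) {κ : ∀ i, Fin (n i) → Key} {c' : Key}
    (hach : ∃ i j, κ i j = c') :
    wSum (gw f κ) (clsSet κ c') = f (UpSet κ c') - f (UpsSet κ c') := by
  have hconst : ∀ i, ∀ j ∈ clsSet κ c' i, gw f κ i j =
      (f (UpSet κ c') - f (UpsSet κ c')) / (Ncard (clsSet κ c') : ℝ) := by
    intro i j hj
    have hj' : κ i j = c' := by simpa [clsSet] using hj
    rw [gw, hj']
  rw [wSum, Finset.sum_congr rfl (fun i _ => Finset.sum_congr rfl (hconst i))]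
  simp only [Finset.sum_const, nsmul_eq_mul]
  rw [← Finset.sum_mul, ← Nat.cast_sum]
  rw [show ∑ i, (clsSet κ c' i).card = Ncard (clsSet κ c') from rfl]
  have hne : (Ncard (clsSet κ c') : ℝ) ≠ 0 := Nat.cast_ne_zero.2 (Ncard_cls_ne_zero hach)
  field_simp

lemma Ncard_lt {κ : ∀ i, Fin (n i) → Key} {c c' : Key} (hcc' : c < c')
    (hach : ∃ i j, κ i j = c') : Ncard (UpsSet κ c') < Ncard (UpsSet κ c) := by
  obtain ⟨i1, j1, h1⟩ := hach
  have hsub : ∀ i, UpsSet κ c' i ⊆ UpsSet κ c i := by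
    intro i j hj
    simp only [UpsSet, mem_filter, mem_univ, true_and] at hj ⊢
    exact lt_trans hcc' hj
  have hj1in : j1 ∈ UpsSet κ c i1 := by
    simp only [UpsSet, mem_filter, mem_univ, true_and, h1]
    exact hcc'
  have hj1out : j1 ∉ UpsSet κ c' i1 := by
    simp [UpsSet, h1]
  refine Finset.sum_lt_sum (fun i _ => Finset.card_le_card (hsub i)) ?_
  exact ⟨i1, mem_univ i1, Finset.card_lt_card ⟨hsub i1, fun hcon => hj1out (hcon hj1in)⟩⟩

lemma gw_telescope (f : (∀ i, Finset (Fin (n i))) → ℝ) (hf0 : f (fun _ => ∅) = 0)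
    (κ : ∀ i, Fin (n i) → Key) :
    ∀ N (c : Key), Ncard (UpsSet κ c) ≤ N →
      wSum (gw f κ) (UpsSet κ c) = f (UpsSet κ c) := by
  intro N
  induction N with
  | zero =>
    intro c hc
    rw [Ncard_eq_zero (Nat.le_zero.1 hc), wSum_empty, hf0]
  | succ N ih =>
    intro c hc
    by_cases h0 : Ncard (UpsSet κ c) = 0
    · rw [Ncard_eq_zero h0, wSum_empty, hf0]
    · obtain ⟨c', hcc', hach, hmin⟩ := exists_min_key κ c h0
      have hN : Ncard (UpsSet κ c') ≤ N :=
        Nat.lt_succ_iff.1 (lt_of_lt_of_le (Ncard_lt hcc' hach) hc)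
      rw [UpsSet_eq_UpSet hcc' hmin, wSum_decomp, ih c' hN, gw_clsSum f hach]
      ring

lemma gw_le (𝒜 : Set (∀ i, Finset (Fin (n i))))
    (hcap : ∀ A ∈ 𝒜, ∀ B ∈ 𝒜, (fun i => A i ∩ B i) ∈ 𝒜)
    (f : (∀ i, Finset (Fin (n i))) → ℝ) (hf0 : f (fun _ => ∅) = 0)
    (hsub : ∀ A ∈ 𝒜, ∀ B ∈ 𝒜,
      f (fun i => A i ∪ B i) + f (fun i => A i ∩ B i) ≤ f A + f B)
    (κ : ∀ i, Fin (n i) → Key)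
    (hUp : ∀ i j, UpSet κ (κ i j) ∈ 𝒜) (hUps : ∀ i j, UpsSet κ (κ i j) ∈ 𝒜)
    (S : ∀ i, Finset (Fin (n i))) (hS : S ∈ 𝒜)
    (hcls : ∀ i j i' j', κ i j = κ i' j' → (j ∈ S i ↔ j' ∈ S i')) :
    ∀ N (c : Key), Ncard (UpsSet κ c) ≤ N →
      wSum (gw f κ) (fun i => S i ∩ UpsSet κ c i) ≤ f (fun i => S i ∩ UpsSet κ c i) := by
  intro N
  induction N with
  | zero =>
    intro c hc
    have hE : (fun i => S i ∩ UpsSet κ c i) = (fun _ => ∅ : ∀ i, Finset (Fin (n i))) := by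
      funext i
      rw [show UpsSet κ c i = ∅ from congrFun (Ncard_eq_zero (Nat.le_zero.1 hc)) i,
        Finset.inter_empty]
    rw [hE, wSum_empty, hf0]
  | succ N ih =>
    intro c hc
    by_cases h0 : Ncard (UpsSet κ c) = 0
    · have hE : (fun i => S i ∩ UpsSet κ c i) = (fun _ => ∅ : ∀ i, Finset (Fin (n i))) := by
        funext i
        rw [show UpsSet κ c i = ∅ from congrFun (Ncard_eq_zero h0) i, Finset.inter_empty]
      rw [hE, wSum_empty, hf0]
    · obtain ⟨c', hcc', hach, hmin⟩ := exists_min_key κ c h0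
      obtain ⟨i1, j1, hach1⟩ := hach
      have hN : Ncard (UpsSet κ c') ≤ N :=
        Nat.lt_succ_iff.1 (lt_of_lt_of_le (Ncard_lt hcc' ⟨i1, j1, hach1⟩) hc)
      have hUU := UpsSet_eq_UpSet hcc' hmin
      have hUp' : UpSet κ c' ∈ 𝒜 := hach1 ▸ hUp i1 j1
      have hUps' : UpsSet κ c' ∈ 𝒜 := hach1 ▸ hUps i1 j1
      by_cases hj1S : j1 ∈ S i1
      · -- class contained in S
        have hclsS : ∀ i j, κ i j = c' → j ∈ S i := by
          intro i j h
          exact (hcls i j i1 j1 (by rw [h, hach1])).2 hj1S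
        have hdecS : ∀ i, S i ∩ UpSet κ c' i =
            (S i ∩ UpsSet κ c' i) ∪ clsSet κ c' i := by
          intro i
          ext j
          simp only [mem_inter, mem_union, UpSet, UpsSet, clsSet, mem_filter, mem_univ,
            true_and]
          constructor
          · rintro ⟨hjS, hle⟩
            rcases lt_or_eq_of_le hle with h | h
            · exact Or.inl ⟨hjS, h⟩
            · exact Or.inr h.symm
          · rintro (⟨hjS, hlt⟩ | heq)
            · exact ⟨hjS, le_of_lt hlt⟩
            · exact ⟨hclsS i j heq, le_of_eq heq.symm⟩
        have hdisj : ∀ i, Disjoint (S i ∩ UpsSet κ c' i) (clsSet κ c' i) :=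
          fun i => Finset.disjoint_of_subset_left Finset.inter_subset_right (upSet_disj i)
        have hwdec : wSum (gw f κ) (fun i => S i ∩ UpSet κ c' i) =
            wSum (gw f κ) (fun i => S i ∩ UpsSet κ c' i) + wSum (gw f κ) (clsSet κ c') := by
          rw [wSum, wSum, wSum, ← Finset.sum_add_distrib]
          refine Finset.sum_congr rfl fun i _ => ?_
          rw [hdecS i, Finset.sum_union (hdisj i)]
        -- submodularity
        have hsub' := hsub (fun i => S i ∩ UpSet κ c' i) (hcap S hS _ hUp')
          (UpsSet κ c') hUps'
        have he1 : (fun i => (S i ∩ UpSet κ c' i) ∪ UpsSet κ c' i) = UpSet κ c' := by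
          funext i; ext j
          simp only [mem_union, mem_inter, UpSet, UpsSet, mem_filter, mem_univ, true_and]
          constructor
          · rintro (⟨_, h⟩ | h)
            exacts [h, le_of_lt h]
          · intro h
            rcases lt_or_eq_of_le h with h' | h'
            · exact Or.inr h'
            · exact Or.inl ⟨hclsS i j h'.symm, h⟩
        have he2 : (fun i => (S i ∩ UpSet κ c' i) ∩ UpsSet κ c' i) =
            fun i => S i ∩ UpsSet κ c' i := by
          funext i; ext j
          simp only [mem_inter, UpSet, UpsSet, mem_filter, mem_univ, true_and]
          exact ⟨fun h => ⟨h.1.1, h.2⟩, fun h => ⟨⟨h.1, le_of_lt h.2⟩, h.2⟩⟩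
        rw [he1, he2] at hsub'
        have hih := ih c' hN
        have hfin : (fun i => S i ∩ UpsSet κ c i) = fun i => S i ∩ UpSet κ c' i := by
          funext i; rw [hUU]
        rw [hfin, hwdec, gw_clsSum f ⟨i1, j1, hach1⟩]
        have htel : wSum (gw f κ) (UpsSet κ c') = f (UpsSet κ c') :=
          gw_telescope f hf0 κ N c' hN
        linarith
      · -- class disjoint from S
        have hclsS : ∀ i j, κ i j = c' → j ∉ S i := by
          intro i j h hjS
          exact hj1S ((hcls i j i1 j1 (by rw [h, hach1])).1 hjS)
        have hfin : (fun i => S i ∩ UpsSet κ c i) = fun i => S i ∩ UpsSet κ c' i := by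
          funext i; ext j
          simp only [mem_inter, UpsSet, mem_filter, mem_univ, true_and]
          constructor
          · rintro ⟨hjS, hlt⟩
            refine ⟨hjS, ?_⟩
            rcases lt_or_eq_of_le (hmin i j hlt) with h | h
            · exact h
            · exact absurd hjS (hclsS i j h.symm)
          · rintro ⟨hjS, hlt⟩
            exact ⟨hjS, lt_trans hcc' hlt⟩
        rw [hfin]
        exact ih c' hN


noncomputable def kap (z x y : ∀ i, Fin (n i) → ℝ) : ∀ i, Fin (n i) → Key :=
  fun i j => toLex (z i j, toLex (x i j, y i j))

noncomputable def geSet (v : ∀ i, Fin (n i) → ℝ) (c : ℝ) : ∀ i, Finset (Fin (n i)) :=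
  fun i => univ.filter (fun j => c ≤ v i j)

lemma geSet_mem (𝒜 : Set (∀ i, Finset (Fin (n i)))) (v : ∀ i, Fin (n i) → ℝ)
    (hv : ∀ t, lev v t ∈ 𝒜) (c : ℝ) : geSet v c ∈ 𝒜 := by
  classical
  set s : Finset ℝ :=
    ((univ : Finset (Fin k)).biUnion fun i => (univ : Finset (Fin (n i))).image (v i)).filter
      (fun r => r < c) with hs
  set t : ℝ := if h : s.Nonempty then s.max' h else c - 1 with ht
  have hlt : t < c := by
    by_cases h : s.Nonempty
    · rw [ht, dif_pos h]
      exact (mem_filter.1 (s.max'_mem h)).2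
    · rw [ht, dif_neg h]; linarith
  have heq : geSet v c = lev v t := by
    funext i; ext j
    simp only [geSet, lev, mem_filter, mem_univ, true_and]
    constructor
    · intro h; exact lt_of_lt_of_le hlt h
    · intro h
      by_contra hc
      push_neg at hc
      have hmem : v i j ∈ s := by
        rw [hs, mem_filter]
        exact ⟨Finset.mem_biUnion.2 ⟨i, mem_univ i, Finset.mem_image_of_mem _ (mem_univ j)⟩, hc⟩
      have hne : s.Nonempty := ⟨_, hmem⟩
      have hle : v i j ≤ t := by
        rw [ht, dif_pos hne]
        exact s.le_max' _ hmem
      linarith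
  rw [heq]; exact hv t

lemma kapUp_mem (𝒜 : Set (∀ i, Finset (Fin (n i))))
    (hcup : ∀ A ∈ 𝒜, ∀ B ∈ 𝒜, (fun i => A i ∪ B i) ∈ 𝒜)
    (hcap : ∀ A ∈ 𝒜, ∀ B ∈ 𝒜, (fun i => A i ∩ B i) ∈ 𝒜)
    (z x y : ∀ i, Fin (n i) → ℝ)
    (hzA : ∀ t, lev z t ∈ 𝒜) (hxA : ∀ t, lev x t ∈ 𝒜) (hyA : ∀ t, lev y t ∈ 𝒜)
    (a b d : ℝ) :
    UpSet (kap z x y) (toLex (a, toLex (b, d))) ∈ 𝒜 ∧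
      UpsSet (kap z x y) (toLex (a, toLex (b, d))) ∈ 𝒜 := by
  constructor
  · have hE : UpSet (kap z x y) (toLex (a, toLex (b, d))) =
        fun i => lev z a i ∪ (geSet z a i ∩ (lev x b i ∪ (geSet x b i ∩ geSet y d i))) := by
      funext i; ext j
      simp only [UpSet, lev, geSet, mem_filter, mem_univ, true_and, mem_union, mem_inter,
        kap, Prod.Lex.le_iff]
      constructor
      · rintro (h | ⟨h1, (h2 | ⟨h3, h4⟩)⟩)
        · exact Or.inl h
        · exact Or.inr ⟨le_of_eq h1, Or.inl h2⟩
        · exact Or.inr ⟨le_of_eq h1, Or.inr ⟨le_of_eq h3, h4⟩⟩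
      · rintro (h | ⟨h1, (h2 | ⟨h3, h4⟩)⟩)
        · exact Or.inl h
        · rcases lt_or_eq_of_le h1 with h' | h'
          · exact Or.inl h'
          · exact Or.inr ⟨h', Or.inl h2⟩
        · rcases lt_or_eq_of_le h1 with h' | h'
          · exact Or.inl h'
          · refine Or.inr ⟨h', ?_⟩
            rcases lt_or_eq_of_le h3 with h'' | h''
            · exact Or.inl h''
            · exact Or.inr ⟨h'', h4⟩
    rw [hE]
    exact hcup _ (hzA a) _ (hcap _ (geSet_mem 𝒜 z hzA a) _
      (hcup _ (hxA b) _ (hcap _ (geSet_mem 𝒜 x hxA b) _ (geSet_mem 𝒜 y hyA d))))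
  · have hE : UpsSet (kap z x y) (toLex (a, toLex (b, d))) =
        fun i => lev z a i ∪ (geSet z a i ∩ (lev x b i ∪ (geSet x b i ∩ lev y d i))) := by
      funext i; ext j
      simp only [UpsSet, lev, geSet, mem_filter, mem_univ, true_and, mem_union, mem_inter,
        kap, Prod.Lex.lt_iff]
      constructor
      · rintro (h | ⟨h1, (h2 | ⟨h3, h4⟩)⟩)
        · exact Or.inl h
        · exact Or.inr ⟨le_of_eq h1, Or.inl h2⟩
        · exact Or.inr ⟨le_of_eq h1, Or.inr ⟨le_of_eq h3, h4⟩⟩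
      · rintro (h | ⟨h1, (h2 | ⟨h3, h4⟩)⟩)
        · exact Or.inl h
        · rcases lt_or_eq_of_le h1 with h' | h'
          · exact Or.inl h'
          · exact Or.inr ⟨h', Or.inl h2⟩
        · rcases lt_or_eq_of_le h1 with h' | h'
          · exact Or.inl h'
          · refine Or.inr ⟨h', ?_⟩
            rcases lt_or_eq_of_le h3 with h'' | h''
            · exact Or.inl h''
            · exact Or.inr ⟨h'', h4⟩
    rw [hE]
    exact hcup _ (hzA a) _ (hcap _ (geSet_mem 𝒜 z hzA a) _
      (hcup _ (hxA b) _ (hcap _ (geSet_mem 𝒜 x hxA b) _ (hyA d))))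

lemma kap_inj {z x y : ∀ i, Fin (n i) → ℝ} {i : Fin k} {j : Fin (n i)} {i' : Fin k}
    {j' : Fin (n i')} (h : kap z x y i j = kap z x y i' j') :
    z i j = z i' j' ∧ x i j = x i' j' ∧ y i j = y i' j' := by
  unfold kap at h
  have h1 := toLex_inj.1 h
  have h2 : z i j = z i' j' := congrArg Prod.fst h1
  have h3 := toLex_inj.1 (congrArg Prod.snd h1)
  exact ⟨h2, congrArg Prod.fst h3, congrArg Prod.snd h3⟩

lemma greedy_exists (𝒜 : Set (∀ i, Finset (Fin (n i))))
    (hcup : ∀ A ∈ 𝒜, ∀ B ∈ 𝒜, (fun i => A i ∪ B i) ∈ 𝒜)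
    (hcap : ∀ A ∈ 𝒜, ∀ B ∈ 𝒜, (fun i => A i ∩ B i) ∈ 𝒜)
    (f : (∀ i, Finset (Fin (n i))) → ℝ) (hf0 : f (fun _ => ∅) = 0)
    (hsub : ∀ A ∈ 𝒜, ∀ B ∈ 𝒜,
      f (fun i => A i ∪ B i) + f (fun i => A i ∩ B i) ≤ f A + f B)
    (z x y : ∀ i, Fin (n i) → ℝ) (hz0 : ∀ i j, 0 ≤ z i j)
    (hzA : ∀ t, lev z t ∈ 𝒜) (hxA : ∀ t, lev x t ∈ 𝒜) (hyA : ∀ t, lev y t ∈ 𝒜) :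
    ∃ w : ∀ i, Fin (n i) → ℝ,
      (∀ t, wSum w (lev z t) = f (lev z t)) ∧
      (∀ t, wSum w (lev x t) ≤ f (lev x t)) ∧
      (∀ t, wSum w (lev y t) ≤ f (lev y t)) := by
  classical
  set κ := kap z x y with hκ
  have hUp : ∀ (i : Fin k) (j : Fin (n i)), UpSet κ (κ i j) ∈ 𝒜 := fun i j =>
    (kapUp_mem 𝒜 hcup hcap z x y hzA hxA hyA (z i j) (x i j) (y i j)).1
  have hUps : ∀ (i : Fin k) (j : Fin (n i)), UpsSet κ (κ i j) ∈ 𝒜 := fun i j =>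
    (kapUp_mem 𝒜 hcup hcap z x y hzA hxA hyA (z i j) (x i j) (y i j)).2
  set M : ℝ := 1 + ∑ i, ∑ j, (|x i j| + |y i j|) with hM
  have hsum_nonneg : (0:ℝ) ≤ ∑ i, ∑ j, (|x i j| + |y i j|) :=
    Finset.sum_nonneg fun i _ => Finset.sum_nonneg fun j _ => by positivity
  have hbound : ∀ (i : Fin k) (j : Fin (n i)), x i j < M ∧ y i j < M := by
    intro i j
    have h1 : |x i j| + |y i j| ≤ ∑ j', (|x i j'| + |y i j'|) :=
      Finset.single_le_sum (f := fun j' => |x i j'| + |y i j'|)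
        (fun j' _ => by positivity) (mem_univ j)
    have h2 : ∑ j', (|x i j'| + |y i j'|) ≤ ∑ i', ∑ j', (|x i' j'| + |y i' j'|) :=
      Finset.single_le_sum (f := fun i' => ∑ j', (|x i' j'| + |y i' j'|))
        (fun i' _ => Finset.sum_nonneg fun j' _ => by positivity) (mem_univ i)
    have hx := abs_nonneg (x i j)
    have hy := abs_nonneg (y i j)
    have hx' := le_abs_self (x i j)
    have hy' := le_abs_self (y i j)
    constructor <;> [linarith; linarith]
  -- the equality facts
  have hlevz : ∀ t : ℝ, lev z t = UpsSet κ (toLex (t, toLex (M, M))) := by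
    intro t
    funext i; ext j
    simp only [lev, UpsSet, mem_filter, mem_univ, true_and, hκ, kap]
    rw [Prod.Lex.lt_iff]
    constructor
    · intro h; exact Or.inl h
    · rintro (h | ⟨h1, h2⟩)
      · exact h
      · exfalso
        rw [Prod.Lex.lt_iff] at h2
        rcases h2 with h2 | ⟨h2, h3⟩
        · exact absurd h2 (not_lt.2 (le_of_lt (hbound i j).1))
        · exact absurd h2.symm (ne_of_lt (hbound i j).1)
  have hbotkey : UpsSet κ (toLex (-1, toLex (0, 0))) = fun i => (univ : Finset (Fin (n i))) := by
    funext i; ext j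
    simp only [UpsSet, mem_filter, mem_univ, true_and, hκ, kap, iff_true]
    rw [Prod.Lex.lt_iff]
    exact Or.inl (lt_of_lt_of_le (by norm_num) (hz0 i j))
  refine ⟨gw f κ, ?_, ?_, ?_⟩
  · intro t
    rw [hlevz t]
    exact gw_telescope f hf0 κ _ _ le_rfl
  · intro t
    have hcls : ∀ (i : Fin k) (j : Fin (n i)) (i' : Fin k) (j' : Fin (n i')),
        κ i j = κ i' j' → (j ∈ lev x t i ↔ j' ∈ lev x t i') := by
      intro i j i' j' h
      have := (kap_inj (z := z) (x := x) (y := y) h).2.1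
      simp only [lev, mem_filter, mem_univ, true_and, this]
    have h0 := gw_le 𝒜 hcap f hf0 hsub κ hUp hUps (lev x t) (hxA t) hcls
      (Ncard (UpsSet κ (toLex (-1, toLex (0, 0))))) _ le_rfl
    have he : (fun i => lev x t i ∩ UpsSet κ (toLex (-1, toLex (0, 0))) i) = lev x t := by
      funext i; rw [congrFun hbotkey i, Finset.inter_univ]
    rwa [he] at h0
  · intro t
    have hcls : ∀ (i : Fin k) (j : Fin (n i)) (i' : Fin k) (j' : Fin (n i')),
        κ i j = κ i' j' → (j ∈ lev y t i ↔ j' ∈ lev y t i') := by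
      intro i j i' j' h
      have := (kap_inj (z := z) (x := x) (y := y) h).2.2
      simp only [lev, mem_filter, mem_univ, true_and, this]
    have h0 := gw_le 𝒜 hcap f hf0 hsub κ hUp hUps (lev y t) (hyA t) hcls
      (Ncard (UpsSet κ (toLex (-1, toLex (0, 0))))) _ le_rfl
    have he : (fun i => lev y t i ∩ UpsSet κ (toLex (-1, toLex (0, 0))) i) = lev y t := by
      funext i; rw [congrFun hbotkey i, Finset.inter_univ]
    rwa [he] at h0

end Greedy


lemma lev_max (x y : ∀ i, Fin (n i) → ℝ) (t : ℝ) :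
    lev (fun i j => max (x i j) (y i j)) t = fun i => lev x t i ∪ lev y t i := by
  funext i; ext j
  simp [lev, lt_max_iff]

lemma lev_min (x y : ∀ i, Fin (n i) → ℝ) (t : ℝ) :
    lev (fun i j => min (x i j) (y i j)) t = fun i => lev x t i ∩ lev y t i := by
  funext i; ext j
  simp [lev, lt_min_iff]

lemma indVec_max (A B : ∀ i, Finset (Fin (n i))) :
    (fun i j => max (indVec A i j) (indVec B i j)) = indVec (fun i => A i ∪ B i) := by
  funext i j
  by_cases hA : j ∈ A i <;> by_cases hB : j ∈ B i <;> simp [indVec, hA, hB]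

lemma indVec_min (A B : ∀ i, Finset (Fin (n i))) :
    (fun i j => min (indVec A i j) (indVec B i j)) = indVec (fun i => A i ∩ B i) := by
  funext i j
  by_cases hA : j ∈ A i <;> by_cases hB : j ∈ B i <;> simp [indVec, hA, hB]

lemma lev_indVec_lo (A : ∀ i, Finset (Fin (n i))) {t : ℝ} (h : t < 0) :
    lev (indVec A) t = fun i => (univ : Finset (Fin (n i))) := by
  funext i
  exact Finset.filter_true_of_mem fun j _ => lt_of_lt_of_le h (indVec_nonneg A i j)

lemma lev_indVec_hi (A : ∀ i, Finset (Fin (n i))) {t : ℝ} (h : 1 ≤ t) :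
    lev (indVec A) t = fun _ => ∅ := by
  funext i
  exact Finset.filter_false_of_mem fun j _ => not_lt.2 (le_trans (indVec_le_one A i j) h)

lemma indVec_lev_mem (𝒜 : Set (∀ i, Finset (Fin (n i))))
    (hbot : (fun _ => (∅ : Finset _)) ∈ 𝒜)
    (htop : (fun i => (Finset.univ : Finset (Fin (n i)))) ∈ 𝒜)
    {A : ∀ i, Finset (Fin (n i))} (hA : A ∈ 𝒜) (t : ℝ) :
    lev (indVec A) t ∈ 𝒜 := by
  rcases lt_or_ge t 0 with h | h
  · rw [lev_indVec_lo A h]; exact htop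
  rcases lt_or_ge t 1 with h1 | h1
  · rw [lev_indVec_mid A h h1]; exact hA
  · rw [lev_indVec_hi A h1]; exact hbot

lemma lev_seg_mem (𝒜 : Set (∀ i, Finset (Fin (n i))))
    (hbot : (fun _ => (∅ : Finset _)) ∈ 𝒜)
    (htop : (fun i => (Finset.univ : Finset (Fin (n i)))) ∈ 𝒜)
    (hcup : ∀ A ∈ 𝒜, ∀ B ∈ 𝒜, (fun i => A i ∪ B i) ∈ 𝒜)
    (hcap : ∀ A ∈ 𝒜, ∀ B ∈ 𝒜, (fun i => A i ∩ B i) ∈ 𝒜)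
    {A B : ∀ i, Finset (Fin (n i))} (hA : A ∈ 𝒜) (hB : B ∈ 𝒜)
    {mu : ℝ} (h0 : 0 ≤ mu) (h1 : mu ≤ 1) (t : ℝ) :
    lev (fun i j => mu * indVec A i j + (1 - mu) * indVec B i j) t ∈ 𝒜 := by
  rcases lt_or_ge t 0 with ht0 | ht0
  · have he : lev (fun i j => mu * indVec A i j + (1 - mu) * indVec B i j) t =
        fun i => (univ : Finset (Fin (n i))) := by
      funext i
      refine Finset.filter_true_of_mem fun j _ => ?_
      by_cases hjA : j ∈ A i <;> by_cases hjB : j ∈ B i <;>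
        simp [indVec, hjA, hjB] <;> linarith
    rw [he]; exact htop
  rcases le_or_gt 1 t with ht1 | ht1
  · have he : lev (fun i j => mu * indVec A i j + (1 - mu) * indVec B i j) t =
        fun _ => ∅ := by
      funext i
      refine Finset.filter_false_of_mem fun j _ => ?_
      by_cases hjA : j ∈ A i <;> by_cases hjB : j ∈ B i <;>
        simp [indVec, hjA, hjB] <;> linarith
    rw [he]; exact hbot
  by_cases hmu : t < mu <;> by_cases hnu : t < 1 - mu
  · have he : lev (fun i j => mu * indVec A i j + (1 - mu) * indVec B i j) t =
        fun i => A i ∪ B i := by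
      funext i; ext j
      simp only [lev, mem_filter, mem_univ, true_and, mem_union]
      by_cases hjA : j ∈ A i <;> by_cases hjB : j ∈ B i <;>
        simp [indVec, hjA, hjB] <;> first | linarith | (intro h; linarith)
    rw [he]; exact hcup _ hA _ hB
  · have he : lev (fun i j => mu * indVec A i j + (1 - mu) * indVec B i j) t = A := by
      funext i; ext j
      simp only [lev, mem_filter, mem_univ, true_and]
      by_cases hjA : j ∈ A i <;> by_cases hjB : j ∈ B i <;>
        simp [indVec, hjA, hjB] <;> first | linarith | (intro h; linarith)
    rw [he]; exact hA
  · have he : lev (fun i j => mu * indVec A i j + (1 - mu) * indVec B i j) t = B := by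
      funext i; ext j
      simp only [lev, mem_filter, mem_univ, true_and]
      by_cases hjA : j ∈ A i <;> by_cases hjB : j ∈ B i <;>
        simp [indVec, hjA, hjB] <;> first | linarith | (intro h; linarith)
    rw [he]; exact hB
  · have he : lev (fun i j => mu * indVec A i j + (1 - mu) * indVec B i j) t =
        fun i => A i ∩ B i := by
      funext i; ext j
      simp only [lev, mem_filter, mem_univ, true_and, mem_inter]
      by_cases hjA : j ∈ A i <;> by_cases hjB : j ∈ B i <;>
        simp [indVec, hjA, hjB] <;> first | linarith | (intro h; linarith)
    rw [he]; exact hcap _ hA _ hB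

end KwayAux

open KwayAux

/-- For a lattice family `𝒜` of `k`-tuples of sets (closed under componentwise union
and intersection, containing the bottom and top tuples) and `f : 𝒜 → ℝ` with
`f(∅,…,∅) = 0`: the feasible domain `D_𝒜` is closed under componentwise `max` and
`min`, and `f` is `k`-way submodular iff its `k`-way Lovász extension is convex on
every convex subset of `D_𝒜`, iff the extension is submodular on `D_𝒜`. -/
theorem kway_submodular_iff_convex_iff_submodular {k : ℕ} (hk : 1 ≤ k)
    {n : Fin k → ℕ} (hn : ∀ i, 1 ≤ n i)
    (𝒜 : Set (∀ i, Finset (Fin (n i))))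
    (hbot : (fun _ => (∅ : Finset _)) ∈ 𝒜)
    (htop : (fun i => (Finset.univ : Finset (Fin (n i)))) ∈ 𝒜)
    (hcup : ∀ A ∈ 𝒜, ∀ B ∈ 𝒜, (fun i => A i ∪ B i) ∈ 𝒜)
    (hcap : ∀ A ∈ 𝒜, ∀ B ∈ 𝒜, (fun i => A i ∩ B i) ∈ 𝒜)
    (f : (∀ i, Finset (Fin (n i))) → ℝ) (hf0 : f (fun _ => ∅) = 0)
    (D : Set (∀ i, Fin (n i) → ℝ))
    (hD : D = {x | (∀ i j, 0 ≤ x i j) ∧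
      ∀ t : ℝ, (fun i => Finset.univ.filter (fun j => t < x i j)) ∈ 𝒜}) :
    -- (i) `D_𝒜` is closed under the lattice operations
    (∀ x ∈ D, ∀ y ∈ D,
      (fun i j => max (x i j) (y i j)) ∈ D ∧ (fun i j => min (x i j) (y i j)) ∈ D) ∧
    -- (ii) (a) ↔ (b)
    ((∀ A ∈ 𝒜, ∀ B ∈ 𝒜,
        f (fun i => A i ∪ B i) + f (fun i => A i ∩ B i) ≤ f A + f B) ↔
      (∀ x ∈ D, ∀ y ∈ D, ∀ lam ∈ Set.Icc (0:ℝ) 1,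
        (∀ mu ∈ Set.Icc (0:ℝ) 1, (fun i j => mu * x i j + (1 - mu) * y i j) ∈ D) →
        kwayLovasz f (fun i j => lam * x i j + (1 - lam) * y i j) ≤
          lam * kwayLovasz f x + (1 - lam) * kwayLovasz f y)) ∧
    -- (ii) (a) ↔ (c)
    ((∀ A ∈ 𝒜, ∀ B ∈ 𝒜,
        f (fun i => A i ∪ B i) + f (fun i => A i ∩ B i) ≤ f A + f B) ↔
      (∀ x ∈ D, ∀ y ∈ D,
        kwayLovasz f (fun i j => max (x i j) (y i j)) +
            kwayLovasz f (fun i j => min (x i j) (y i j)) ≤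
          kwayLovasz f x + kwayLovasz f y)) := by
  classical
  subst hD
  have hmemD : ∀ {v : ∀ i, Fin (n i) → ℝ},
      v ∈ {x : ∀ i, Fin (n i) → ℝ | (∀ i j, 0 ≤ x i j) ∧
        ∀ t : ℝ, (fun i => Finset.univ.filter (fun j => t < x i j)) ∈ 𝒜} ↔
      ((∀ i j, 0 ≤ v i j) ∧ ∀ t : ℝ, lev v t ∈ 𝒜) := Iff.rfl
  have hindD : ∀ {A : ∀ i, Finset (Fin (n i))}, A ∈ 𝒜 →
      indVec A ∈ {x : ∀ i, Fin (n i) → ℝ | (∀ i j, 0 ≤ x i j) ∧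
        ∀ t : ℝ, (fun i => Finset.univ.filter (fun j => t < x i j)) ∈ 𝒜} := by
    intro A hA
    exact ⟨indVec_nonneg A, fun t => indVec_lev_mem 𝒜 hbot htop hA t⟩
  refine ⟨?_, ?_, ?_⟩
  · -- (i) closure
    rintro x ⟨hx0, hxA⟩ y ⟨hy0, hyA⟩
    constructor
    · refine ⟨fun i j => le_trans (hx0 i j) (le_max_left _ _), fun t => ?_⟩
      show lev (fun i j => max (x i j) (y i j)) t ∈ 𝒜
      rw [lev_max x y t]
      exact hcup _ (hxA t) _ (hyA t)
    · refine ⟨fun i j => le_min (hx0 i j) (hy0 i j), fun t => ?_⟩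
      show lev (fun i j => min (x i j) (y i j)) t ∈ 𝒜
      rw [lev_min x y t]
      exact hcap _ (hxA t) _ (hyA t)
  · -- (a) ↔ (b)
    constructor
    · -- submodular → convex
      rintro hsub x ⟨hx0, hxA⟩ y ⟨hy0, hyA⟩ lam ⟨hl0, hl1⟩ hseg
      set z : ∀ i, Fin (n i) → ℝ := fun i j => lam * x i j + (1 - lam) * y i j with hzdef
      obtain ⟨hz0, hzA⟩ := hseg lam ⟨hl0, hl1⟩
      obtain ⟨w, hwz, hwx, hwy⟩ := greedy_exists 𝒜 hcup hcap f hf0 hsub z x y hz0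
        (fun t => hzA t) (fun t => hxA t) (fun t => hyA t)
      set M : ℝ := 1 + ∑ i, ∑ j, (|x i j| + |y i j|) with hMdef
      have habs : ∀ (i : Fin k) (j : Fin (n i)), |x i j| + |y i j| ≤ M - 1 := by
        intro i j
        have h1 : |x i j| + |y i j| ≤ ∑ j', (|x i j'| + |y i j'|) :=
          Finset.single_le_sum (f := fun j' => |x i j'| + |y i j'|)
            (fun j' _ => by positivity) (mem_univ j)
        have h2 : ∑ j', (|x i j'| + |y i j'|) ≤ ∑ i', ∑ j', (|x i' j'| + |y i' j'|) :=
          Finset.single_le_sum (f := fun i' => ∑ j', (|x i' j'| + |y i' j'|))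
            (fun i' _ => Finset.sum_nonneg fun j' _ => by positivity) (mem_univ i)
        simp only [hMdef]
        linarith
      have hxM : ∀ i j, x i j ≤ M := by
        intro i j
        have := habs i j
        have h1 := le_abs_self (x i j)
        have h2 := abs_nonneg (y i j)
        linarith
      have hyM : ∀ i j, y i j ≤ M := by
        intro i j
        have := habs i j
        have h1 := le_abs_self (y i j)
        have h2 := abs_nonneg (x i j)
        linarith
      have hzM : ∀ i j, z i j ≤ M := by
        intro i j
        have h1 := hxM i j
        have h2 := hyM i j
        have h3 := hx0 i j
        have h4 := hy0 i j
        have : z i j = lam * x i j + (1 - lam) * y i j := rfl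
        rw [this]
        nlinarith
      -- Lovász values as integrals
      have hLz := lovasz_eq_integral hk hn f hf0 z hz0 hzM
      have hLx := lovasz_eq_integral hk hn f hf0 x hx0 hxM
      have hLy := lovasz_eq_integral hk hn f hf0 y hy0 hyM
      have hIz : ∫ t in (0:ℝ)..M, f (lev z t) = ∫ t in (0:ℝ)..M, wSum w (lev z t) := by
        refine intervalIntegral.integral_congr fun t _ => (hwz t).symm
      have hIzw : ∫ t in (0:ℝ)..M, wSum w (lev z t) = ∑ i, ∑ j, w i j * z i j :=
        integral_wsum w z hz0 hzM
      have hIxw : ∫ t in (0:ℝ)..M, wSum w (lev x t) = ∑ i, ∑ j, w i j * x i j :=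
        integral_wsum w x hx0 hxM
      have hIyw : ∫ t in (0:ℝ)..M, wSum w (lev y t) = ∑ i, ∑ j, w i j * y i j :=
        integral_wsum w y hy0 hyM
      have hM0 : (0:ℝ) ≤ M := by
        have : (0:ℝ) ≤ ∑ i, ∑ j, (|x i j| + |y i j|) :=
          Finset.sum_nonneg fun i _ => Finset.sum_nonneg fun j _ => by positivity
        simp only [hMdef]; linarith
      have hIx : ∫ t in (0:ℝ)..M, wSum w (lev x t) ≤ ∫ t in (0:ℝ)..M, f (lev x t) := by
        refine intervalIntegral.integral_mono_on hM0 ?_ ?_ fun t _ => hwx t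
        · exact intervalIntegrable_lev (wSum w) x 0 M
        · exact intervalIntegrable_lev f x 0 M
      have hIy : ∫ t in (0:ℝ)..M, wSum w (lev y t) ≤ ∫ t in (0:ℝ)..M, f (lev y t) := by
        refine intervalIntegral.integral_mono_on hM0 ?_ ?_ fun t _ => hwy t
        · exact intervalIntegrable_lev (wSum w) y 0 M
        · exact intervalIntegrable_lev f y 0 M
      have hsplit : ∑ i, ∑ j, w i j * z i j =
          lam * (∑ i, ∑ j, w i j * x i j) + (1 - lam) * (∑ i, ∑ j, w i j * y i j) := by
        rw [Finset.mul_sum, Finset.mul_sum, ← Finset.sum_add_distrib]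
        refine Finset.sum_congr rfl fun i _ => ?_
        rw [Finset.mul_sum, Finset.mul_sum, ← Finset.sum_add_distrib]
        refine Finset.sum_congr rfl fun j _ => ?_
        show w i j * (lam * x i j + (1 - lam) * y i j) = _
        ring
      have hfinx : lam * (∑ i, ∑ j, w i j * x i j) ≤ lam * kwayLovasz f x := by
        rw [hLx, ← hIxw]
        exact mul_le_mul_of_nonneg_left hIx hl0
      have hfiny : (1 - lam) * (∑ i, ∑ j, w i j * y i j) ≤ (1 - lam) * kwayLovasz f y := by
        rw [hLy, ← hIyw]
        exact mul_le_mul_of_nonneg_left hIy (by linarith)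
      calc kwayLovasz f z = ∑ i, ∑ j, w i j * z i j := by rw [hLz, hIz, hIzw]
        _ = lam * (∑ i, ∑ j, w i j * x i j) + (1 - lam) * (∑ i, ∑ j, w i j * y i j) := hsplit
        _ ≤ lam * kwayLovasz f x + (1 - lam) * kwayLovasz f y := add_le_add hfinx hfiny
    · -- convex → submodular
      intro hconv A hA B hB
      have hseg : ∀ mu ∈ Set.Icc (0:ℝ) 1,
          (fun i j => mu * indVec A i j + (1 - mu) * indVec B i j) ∈
            {x : ∀ i, Fin (n i) → ℝ | (∀ i j, 0 ≤ x i j) ∧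
              ∀ t : ℝ, (fun i => Finset.univ.filter (fun j => t < x i j)) ∈ 𝒜} := by
        rintro mu ⟨hm0, hm1⟩
        refine ⟨fun i j => ?_, fun t => lev_seg_mem 𝒜 hbot htop hcup hcap hA hB hm0 hm1 t⟩
        have h1 := indVec_nonneg A i j
        have h2 := indVec_nonneg B i j
        show 0 ≤ mu * indVec A i j + (1 - mu) * indVec B i j
        nlinarith
      have happ := hconv (indVec A) (hindD hA) (indVec B) (hindD hB) (1/2)
        ⟨by norm_num, by norm_num⟩ hseg
      rw [lovasz_ind hk hn f hf0 A, lovasz_ind hk hn f hf0 B,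
        lovasz_half hk hn f hf0 A B] at happ
      linarith
  · -- (a) ↔ (c)
    constructor
    · -- submodular → L-submodular
      rintro hsub x ⟨hx0, hxA⟩ y ⟨hy0, hyA⟩
      set M : ℝ := 1 + ∑ i, ∑ j, (|x i j| + |y i j|) with hMdef
      have habs : ∀ (i : Fin k) (j : Fin (n i)), |x i j| + |y i j| ≤ M - 1 := by
        intro i j
        have h1 : |x i j| + |y i j| ≤ ∑ j', (|x i j'| + |y i j'|) :=
          Finset.single_le_sum (f := fun j' => |x i j'| + |y i j'|)
            (fun j' _ => by positivity) (mem_univ j)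
        have h2 : ∑ j', (|x i j'| + |y i j'|) ≤ ∑ i', ∑ j', (|x i' j'| + |y i' j'|) :=
          Finset.single_le_sum (f := fun i' => ∑ j', (|x i' j'| + |y i' j'|))
            (fun i' _ => Finset.sum_nonneg fun j' _ => by positivity) (mem_univ i)
        simp only [hMdef]
        linarith
      have hxM : ∀ i j, x i j ≤ M := by
        intro i j
        have := habs i j
        have h1 := le_abs_self (x i j)
        have h2 := abs_nonneg (y i j)
        linarith
      have hyM : ∀ i j, y i j ≤ M := by
        intro i j
        have := habs i j
        have h1 := le_abs_self (y i j)
        have h2 := abs_nonneg (x i j)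
        linarith
      have hmax0 : ∀ i j, 0 ≤ max (x i j) (y i j) :=
        fun i j => le_trans (hx0 i j) (le_max_left _ _)
      have hmaxM : ∀ i j, max (x i j) (y i j) ≤ M :=
        fun i j => max_le (hxM i j) (hyM i j)
      have hmin0 : ∀ i j, 0 ≤ min (x i j) (y i j) :=
        fun i j => le_min (hx0 i j) (hy0 i j)
      have hminM : ∀ i j, min (x i j) (y i j) ≤ M :=
        fun i j => le_trans (min_le_left _ _) (hxM i j)
      have hLx := lovasz_eq_integral hk hn f hf0 x hx0 hxM
      have hLy := lovasz_eq_integral hk hn f hf0 y hy0 hyM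
      have hLmax := lovasz_eq_integral hk hn f hf0 _ hmax0 hmaxM
      have hLmin := lovasz_eq_integral hk hn f hf0 _ hmin0 hminM
      have hM0 : (0:ℝ) ≤ M := by
        have : (0:ℝ) ≤ ∑ i, ∑ j, (|x i j| + |y i j|) :=
          Finset.sum_nonneg fun i _ => Finset.sum_nonneg fun j _ => by positivity
        simp only [hMdef]; linarith
      have hmono : ∫ t in (0:ℝ)..M,
            (f (lev (fun i j => max (x i j) (y i j)) t) +
              f (lev (fun i j => min (x i j) (y i j)) t)) ≤
          ∫ t in (0:ℝ)..M, (f (lev x t) + f (lev y t)) := by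
        refine intervalIntegral.integral_mono_on hM0 ?_ ?_ fun t _ => ?_
        · exact (intervalIntegrable_lev f _ 0 M).add (intervalIntegrable_lev f _ 0 M)
        · exact (intervalIntegrable_lev f _ 0 M).add (intervalIntegrable_lev f _ 0 M)
        · rw [lev_max x y t, lev_min x y t]
          exact hsub _ (hxA t) _ (hyA t)
      have hadd1 : ∫ t in (0:ℝ)..M,
            (f (lev (fun i j => max (x i j) (y i j)) t) +
              f (lev (fun i j => min (x i j) (y i j)) t)) =
          (∫ t in (0:ℝ)..M, f (lev (fun i j => max (x i j) (y i j)) t)) +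
            ∫ t in (0:ℝ)..M, f (lev (fun i j => min (x i j) (y i j)) t) :=
        intervalIntegral.integral_add (intervalIntegrable_lev f _ 0 M)
          (intervalIntegrable_lev f _ 0 M)
      have hadd2 : ∫ t in (0:ℝ)..M, (f (lev x t) + f (lev y t)) =
          (∫ t in (0:ℝ)..M, f (lev x t)) + ∫ t in (0:ℝ)..M, f (lev y t) :=
        intervalIntegral.integral_add (intervalIntegrable_lev f _ 0 M)
          (intervalIntegrable_lev f _ 0 M)
      rw [hLx, hLy, hLmax, hLmin]
      rw [hadd1, hadd2] at hmono
      linarith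
    · -- L-submodular → submodular
      intro hLsub A hA B hB
      have happ := hLsub (indVec A) (hindD hA) (indVec B) (hindD hB)
      rw [show (fun i j => max (indVec A i j) (indVec B i j)) = indVec (fun i => A i ∪ B i)
          from indVec_max A B,
        show (fun i j => min (indVec A i j) (indVec B i j)) = indVec (fun i => A i ∩ B i)
          from indVec_min A B,
        lovasz_ind hk hn f hf0 A, lovasz_ind hk hn f hf0 B,
        lovasz_ind hk hn f hf0 (fun i => A i ∪ B i),
        lovasz_ind hk hn f hf0 (fun i => A i ∩ B i)] at happ
      linarith
end

section
/- Let S be a nonempty compact metric space and F, G : S → ℝ continuous with G(x) > 0 for all x ∈ S. Let x^0 ∈ S, r^0 = F(x^0)/G(x^0), and suppose the sequences (x^k) in S and (r^k) in ℝ satisfy the Dinkelbach-type scheme: x^{k+1} is a minimizer of x ↦ F(x) − r^k G(x) over S, and r^{k+1} = F(x^{k+1})/G(x^{k+1}). Then the sequence (r^k) is monotonically non-increasing and converges to min_{x ∈ S} F(x)/G(x). Dually, if x^{k+1} is chosen as a maximizer of F(x) − r^k G(x) over S, then (r^k) is monotonically non-decreasing and converges to max_{x ∈ S} F(x)/G(x).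 -/
open Filter

private lemma iInf_neg_eq_neg_iSup {ι : Sort*} [Nonempty ι] (f : ι → ℝ)
    (hbdd : BddAbove (Set.range f)) : ⨅ i, -f i = -⨆ i, f i := by
  have hbdd' : BddBelow (Set.range fun i => -f i) := by
    obtain ⟨M, hM⟩ := hbdd
    refine ⟨-M, ?_⟩
    rintro a ⟨i, rfl⟩
    exact neg_le_neg (hM ⟨i, rfl⟩)
  refine le_antisymm ?_ (le_ciInf fun i => neg_le_neg (le_ciSup hbdd i))
  rw [le_neg]
  exact ciSup_le fun i => le_neg.mpr (ciInf_le hbdd' i)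

private lemma dinkelbach_min {S : Type*} [MetricSpace S] [CompactSpace S]
    [Nonempty S] (F G : S → ℝ) (hF : Continuous F) (hG : Continuous G)
    (hGpos : ∀ y : S, 0 < G y) (x : ℕ → S) (r : ℕ → ℝ)
    (hr0 : r 0 = F (x 0) / G (x 0))
    (hmin : ∀ k : ℕ, IsMinOn (fun y : S => F y - r k * G y) Set.univ (x (k + 1)))
    (hrk : ∀ k : ℕ, r (k + 1) = F (x (k + 1)) / G (x (k + 1))) :
    Antitone r ∧ Tendsto r atTop (nhds (⨅ y : S, F y / G y)) := by
  have hGne : ∀ y : S, G y ≠ 0 := fun y => (hGpos y).ne'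
  have hcont : Continuous fun y : S => F y / G y := hF.div hG hGne
  -- minimizer of the ratio
  obtain ⟨y₀, -, hy₀⟩ := isCompact_univ.exists_isMinOn Set.univ_nonempty
    hcont.continuousOn
  set μ := F y₀ / G y₀ with hμdef
  have hy₀' : ∀ z : S, μ ≤ F z / G z := fun z => hy₀ (Set.mem_univ z)
  -- maximizer of G
  obtain ⟨z₀, -, hz₀⟩ := isCompact_univ.exists_isMaxOn Set.univ_nonempty
    hG.continuousOn
  have hz₀' : ∀ z : S, G z ≤ G z₀ := fun z => hz₀ (Set.mem_univ z)
  -- every r k is a ratio value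
  have hratio : ∀ k : ℕ, ∃ p : S, r k = F p / G p := by
    intro k
    cases k with
    | zero => exact ⟨x 0, hr0⟩
    | succ n => exact ⟨x (n + 1), hrk n⟩
  have hμle : ∀ k : ℕ, μ ≤ r k := by
    intro k
    obtain ⟨p, hp⟩ := hratio k
    rw [hp]; exact hy₀' p
  -- key minimizer inequality at arbitrary point
  have hminle : ∀ (k : ℕ) (z : S),
      F (x (k + 1)) - r k * G (x (k + 1)) ≤ F z - r k * G z :=
    fun k z => hmin k (Set.mem_univ z)
  have hstep : ∀ k : ℕ, r (k + 1) ≤ r k := by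
    intro k
    obtain ⟨p, hp⟩ := hratio k
    have h1 : F (x (k + 1)) - r k * G (x (k + 1)) ≤ 0 := by
      have := hminle k p
      have hFp : r k * G p = F p := by
        rw [hp]; exact div_mul_cancel₀ _ (hGne p)
      linarith
    rw [hrk k, div_le_iff₀ (hGpos _)]
    linarith
  have hant : Antitone r := antitone_nat_of_succ_le hstep
  have hbb : BddBelow (Set.range r) := ⟨μ, by rintro a ⟨k, rfl⟩; exact hμle k⟩
  have htend : Tendsto r atTop (nhds (⨅ k, r k)) := tendsto_atTop_ciInf hant hbb
  -- identify the limit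
  have hratio_bb : BddBelow (Set.range fun y : S => F y / G y) :=
    ⟨μ, by rintro a ⟨z, rfl⟩; exact hy₀' z⟩
  have hμeq : (⨅ y : S, F y / G y) = μ :=
    le_antisymm (ciInf_le hratio_bb y₀) (le_ciInf hy₀')
  set L := ⨅ k, r k with hLdef
  have hμL : μ ≤ L := le_ciInf hμle
  have hLμ : L ≤ μ := by
    -- (r k - μ) * G y₀ ≤ (r k - r (k+1)) * G z₀
    have hineq : ∀ k : ℕ, (r k - μ) * G y₀ ≤ (r k - r (k + 1)) * G z₀ := by
      intro k
      have h1 := hminle k y₀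
      have hFx : F (x (k + 1)) = r (k + 1) * G (x (k + 1)) := by
        rw [hrk k]; exact (div_mul_cancel₀ _ (hGne _)).symm
      have hFy : F y₀ = μ * G y₀ := by
        rw [hμdef]; exact (div_mul_cancel₀ _ (hGne _)).symm
      have h2 : (r k - μ) * G y₀ ≤ (r k - r (k + 1)) * G (x (k + 1)) := by
        nlinarith [hGpos (x (k + 1)), hGpos y₀]
      refine h2.trans ?_
      have : 0 ≤ r k - r (k + 1) := by linarith [hstep k]
      exact mul_le_mul_of_nonneg_left (hz₀' _) this
    have htend1 : Tendsto (fun k => r (k + 1)) atTop (nhds L) :=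
      htend.comp (tendsto_add_atTop_nat 1)
    have hlhs : Tendsto (fun k => (r k - μ) * G y₀) atTop (nhds ((L - μ) * G y₀)) :=
      (htend.sub tendsto_const_nhds).mul tendsto_const_nhds
    have hrhs : Tendsto (fun k => (r k - r (k + 1)) * G z₀) atTop
        (nhds ((L - L) * G z₀)) := (htend.sub htend1).mul tendsto_const_nhds
    have hle : (L - μ) * G y₀ ≤ (L - L) * G z₀ :=
      le_of_tendsto_of_tendsto' hlhs hrhs hineq
    nlinarith [hGpos y₀]
  have : L = μ := le_antisymm hLμ hμL
  rw [hμeq, ← this]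
  exact ⟨hant, htend⟩

/-- Global convergence of the Dinkelbach-type iterative scheme: on a nonempty compact
metric space `S`, with `F, G : S → ℝ` continuous and `G > 0`, if `x^{k+1}` minimizes
(resp. maximizes) `F(·) − r^k G(·)` over `S` and `r^{k+1} = F(x^{k+1})/G(x^{k+1})`,
then `(r^k)` is monotone and converges to the global minimum (resp. maximum) of
`F/G` over `S`. -/
theorem dinkelbach_global_convergence {S : Type*} [MetricSpace S] [CompactSpace S]
    [Nonempty S] (F G : S → ℝ) (hF : Continuous F) (hG : Continuous G)
    (hGpos : ∀ y : S, 0 < G y) (x : ℕ → S) (r : ℕ → ℝ)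
    (hr0 : r 0 = F (x 0) / G (x 0)) :
    ((∀ k : ℕ, IsMinOn (fun y : S => F y - r k * G y) Set.univ (x (k + 1))) →
      (∀ k : ℕ, r (k + 1) = F (x (k + 1)) / G (x (k + 1))) →
      Antitone r ∧ Tendsto r atTop (nhds (⨅ y : S, F y / G y))) ∧
    ((∀ k : ℕ, IsMaxOn (fun y : S => F y - r k * G y) Set.univ (x (k + 1))) →
      (∀ k : ℕ, r (k + 1) = F (x (k + 1)) / G (x (k + 1))) →
      Monotone r ∧ Tendsto r atTop (nhds (⨆ y : S, F y / G y))) := by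
  constructor
  · exact fun hmin hrk => dinkelbach_min F G hF hG hGpos x r hr0 hmin hrk
  · intro hmax hrk
    have key := dinkelbach_min (fun y => -F y) G (hF.neg) hG hGpos x (fun k => -r k)
      (by rw [hr0, neg_div])
      (by
        intro k
        intro z _
        have := hmax k (Set.mem_univ z)
        simp only [Set.mem_setOf_eq] at this ⊢
        linarith)
      (by intro k; rw [hrk k, neg_div])
    obtain ⟨hant, htend⟩ := key
    constructor
    · intro a b hab
      have := hant hab
      dsimp at this
      linarith
    · have hbdd : BddAbove (Set.range fun y : S => F y / G y) := by
        obtain ⟨w, -, hw⟩ := isCompact_univ.exists_isMaxOn Set.univ_nonempty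
          ((hF.div hG fun y => (hGpos y).ne').continuousOn)
        exact ⟨F w / G w, by rintro a ⟨z, rfl⟩; exact hw (Set.mem_univ z)⟩
      have heq : (⨅ y : S, -F y / G y) = -⨆ y : S, F y / G y := by
        have := iInf_neg_eq_neg_iSup (fun y : S => F y / G y) hbdd
        simpa [neg_div] using this
      rw [heq] at htend
      have := htend.neg
      simpa using this
end

section
/- Let V be a finite set. For every function f : P(V) → ℝ there exist submodular functions f_1, f_2 : P(V) → ℝ such that f = f_1 − f_2, where a function h : P(V) → ℝ is submodular if h(A) + h(B) ≥ h(A ∪ B) + h(A ∩ B) for all A, B ⊆ V. -/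
open Finset

/-- `h : 𝒫(V) → ℝ` is submodular. -/
def Submodular {V : Type*} [DecidableEq V] (h : Finset V → ℝ) : Prop :=
  ∀ A B : Finset V, h (A ∪ B) + h (A ∩ B) ≤ h A + h B

/-- Every set function on a finite set is the difference of two submodular
functions. -/
theorem exists_submodular_decomposition {V : Type*} [Fintype V] [DecidableEq V]
    (f : Finset V → ℝ) :
    ∃ f₁ f₂ : Finset V → ℝ, Submodular f₁ ∧ Submodular f₂ ∧
      ∀ A : Finset V, f A = f₁ A - f₂ A := by
  set S : ℝ := ∑ X : Finset V, |f X| with hS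
  have hbound : ∀ X : Finset V, |f X| ≤ S := by
    intro X
    exact Finset.single_le_sum (fun i _ => abs_nonneg (f i)) (Finset.mem_univ X)
  have hSnn : 0 ≤ S := Finset.sum_nonneg fun i _ => abs_nonneg (f i)
  set M : ℝ := 2 * S with hM
  have hMnn : 0 ≤ M := by positivity
  set s : Finset V → ℝ := fun A => -((A.card : ℝ))^2 with hs
  -- basic gap fact
  have card_eq : ∀ A B : Finset V,
      ((A ∪ B).card : ℝ) + ((A ∩ B).card : ℝ) = (A.card : ℝ) + (B.card : ℝ) := by
    intro A B
    have := Finset.card_union_add_card_inter A B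
    exact_mod_cast congrArg (fun n : ℕ => (n : ℝ)) this
  have gap_nonneg : ∀ A B : Finset V, s (A ∪ B) + s (A ∩ B) ≤ s A + s B := by
    intro A B
    have h1 := card_eq A B
    have h2 : ((A ∩ B).card : ℝ) ≤ (A.card : ℝ) := by
      exact_mod_cast Finset.card_le_card (Finset.inter_subset_left)
    have h3 : ((A ∩ B).card : ℝ) ≤ (B.card : ℝ) := by
      exact_mod_cast Finset.card_le_card (Finset.inter_subset_right)
    simp only [hs]
    nlinarith [h1, h2, h3]
  refine ⟨fun A => f A + M * s A, fun A => M * s A, ?_, ?_, fun A => by ring⟩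
  · intro A B
    by_cases hAB : A ⊆ B
    · have h1 : A ∪ B = B := Finset.union_eq_right.mpr hAB
      have h2 : A ∩ B = A := Finset.inter_eq_left.mpr hAB
      simp only [h1, h2]; linarith
    · by_cases hBA : B ⊆ A
      · have h1 : A ∪ B = A := Finset.union_eq_left.mpr hBA
        have h2 : A ∩ B = B := Finset.inter_eq_right.mpr hBA
        simp only [h1, h2]; linarith
      · -- incomparable: strict gap ≥ 2
        have hi1 : (A ∩ B).card < A.card :=
          Finset.card_lt_card ⟨Finset.inter_subset_left,
            fun h => hAB (fun x hx => (Finset.mem_inter.mp (h hx)).2)⟩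
        have hi2 : (A ∩ B).card < B.card :=
          Finset.card_lt_card ⟨Finset.inter_subset_right,
            fun h => hBA (fun x hx => (Finset.mem_inter.mp (h hx)).1)⟩
        have h2 : ((A ∩ B).card : ℝ) + 1 ≤ (A.card : ℝ) := by exact_mod_cast hi1
        have h3 : ((A ∩ B).card : ℝ) + 1 ≤ (B.card : ℝ) := by exact_mod_cast hi2
        have h1 := card_eq A B
        have gap : s (A ∪ B) + s (A ∩ B) + 2 ≤ s A + s B := by
          simp only [hs]
          nlinarith [h1, h2, h3]
        have hf : ∀ X : Finset V, f X ≤ S ∧ -S ≤ f X := by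
          intro X
          constructor
          · linarith [hbound X, le_abs_self (f X)]
          · linarith [hbound X, neg_abs_le (f X)]
        have b1 := hf (A ∪ B)
        have b2 := hf (A ∩ B)
        have b3 := hf A
        have b4 := hf B
        have hmul := mul_le_mul_of_nonneg_left gap hMnn
        simp only []
        nlinarith [hmul, hM, b1.1, b2.1, b3.2, b4.2]
  · intro A B
    have hmul := mul_le_mul_of_nonneg_left (gap_nonneg A B) hMnn
    simp only []
    linarith [hmul]
end

section
/- Let G = (V,E) be a finite unweighted undirected simple graph with V = {1,…,n}, n ≥ 1, and vertex degrees deg_i. Then the independence number satisfies α(G) = max over x ∈ ℝ^n ∖ {0} of [Σ_{{i,j}∈E}(|x_i − x_j| + |x_i + x_j|) − 2·Σ_{i∈V}(deg_i − 1)|x_i|] / (2‖x‖_∞), and equivalently α(G) = max over x ∈ ℝ^n ∖ {0} of (‖x‖_1 − Σ_{{i,j}∈E} min{|x_i|, |x_j|}) / ‖x‖_∞, where ‖x‖_1 = Σ_i |x_i| and ‖x‖_∞ = max_i |x_i|. -/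
set_option maxHeartbeats 1000000


open Finset

/-- The independence number of a finite simple graph: the largest cardinality of a
set of pairwise non-adjacent vertices. -/
def indepNum {n : ℕ} (G : SimpleGraph (Fin n)) [DecidableRel G.Adj] : ℕ :=
  Finset.sup
    (Finset.univ.filter (fun S : Finset (Fin n) => ∀ i ∈ S, ∀ j ∈ S, ¬ G.Adj i j))
    Finset.card

/-- The sum of a symmetric expression `F i j` over the edges `{i,j} ∈ E` of `G`,
each edge counted once (via its representation with `i < j`). -/
def sumOverEdges {n : ℕ} (G : SimpleGraph (Fin n)) [DecidableRel G.Adj]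
    (F : Fin n → Fin n → ℝ) : ℝ :=
  ∑ p ∈ Finset.univ.filter
      (fun p : Fin n × Fin n => p.1 < p.2 ∧ G.Adj p.1 p.2), F p.1 p.2

variable {n : ℕ} (G : SimpleGraph (Fin n)) [DecidableRel G.Adj]

/-- number of edges inside S -/
def edgeIn (S : Finset (Fin n)) : ℕ :=
  (Finset.univ.filter (fun p : Fin n × Fin n =>
    (p.1 < p.2 ∧ G.Adj p.1 p.2) ∧ p.1 ∈ S ∧ p.2 ∈ S)).card

lemma indep_card_le {S : Finset (Fin n)} (hS : ∀ i ∈ S, ∀ j ∈ S, ¬ G.Adj i j) :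
    S.card ≤ indepNum G := by
  apply Finset.le_sup (f := Finset.card)
  simp only [Finset.mem_filter, Finset.mem_univ, true_and]
  exact hS

lemma card_le_indep_add_edgeIn (S : Finset (Fin n)) :
    S.card ≤ indepNum G + edgeIn G S := by
  induction S using Finset.strongInductionOn with
  | _ S ih =>
    by_cases hS : ∀ i ∈ S, ∀ j ∈ S, ¬ G.Adj i j
    · exact le_trans (indep_card_le G hS) (Nat.le_add_right _ _)
    · push_neg at hS
      obtain ⟨i, hi, j, hj, hadj⟩ := hS
      have hij : i ≠ j := hadj.ne
      set S' := S.erase i with hS'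
      have hsub : S' ⊂ S := Finset.erase_ssubset hi
      have ihS' := ih S' hsub
      have hcard : S'.card + 1 = S.card := Finset.card_erase_add_one hi
      -- the set underlying `edgeIn S'` is a strict subset of the one for `edgeIn S`
      have hedge : edgeIn G S' + 1 ≤ edgeIn G S := by
        have hss : (Finset.univ.filter (fun p : Fin n × Fin n =>
            (p.1 < p.2 ∧ G.Adj p.1 p.2) ∧ p.1 ∈ S' ∧ p.2 ∈ S')) ⊂
            (Finset.univ.filter (fun p : Fin n × Fin n =>
            (p.1 < p.2 ∧ G.Adj p.1 p.2) ∧ p.1 ∈ S ∧ p.2 ∈ S)) := by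
          constructor
          · intro p hp
            simp only [Finset.mem_filter, Finset.mem_univ, true_and] at hp ⊢
            exact ⟨hp.1, Finset.mem_of_mem_erase hp.2.1, Finset.mem_of_mem_erase hp.2.2⟩
          · intro hcon
            rcases lt_or_gt_of_ne hij with hlt | hlt
            · have hq : ((i, j) : Fin n × Fin n) ∈ Finset.univ.filter (fun p : Fin n × Fin n =>
                (p.1 < p.2 ∧ G.Adj p.1 p.2) ∧ p.1 ∈ S ∧ p.2 ∈ S) := by
                simp [hlt, hadj, hi, hj]
              have := (Finset.mem_filter.mp (hcon hq)).2.2.1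
              simp [hS'] at this
            · have hq : ((j, i) : Fin n × Fin n) ∈ Finset.univ.filter (fun p : Fin n × Fin n =>
                (p.1 < p.2 ∧ G.Adj p.1 p.2) ∧ p.1 ∈ S ∧ p.2 ∈ S) := by
                simp [hlt, hadj.symm, hi, hj]
              have := (Finset.mem_filter.mp (hcon hq)).2.2.2
              simp [hS'] at this
        exact Finset.card_lt_card hss
      omega

lemma two_max_abs (a b : ℝ) : |a - b| + |a + b| = 2 * max |a| |b| := by
  rcases le_total |a| |b| with h | h
  · rw [max_eq_right h]
    rcases le_total 0 b with hb | hb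
    · rw [abs_of_nonneg hb] at h
      have h1 : -b ≤ a := (abs_le.mp h).1
      have h2 : a ≤ b := (abs_le.mp h).2
      rw [abs_of_nonpos (by linarith), abs_of_nonneg (by linarith), abs_of_nonneg hb]; ring
    · rw [abs_of_nonpos hb] at h
      have h1 : b ≤ a := by have := (abs_le.mp h).1; linarith
      have h2 : a ≤ -b := (abs_le.mp h).2
      rw [abs_of_nonneg (by linarith), abs_of_nonpos (by linarith)]
      rw [abs_of_nonpos hb]; ring
  · rw [max_eq_left h]
    rcases le_total 0 a with ha | ha
    · rw [abs_of_nonneg ha] at h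
      have h1 : -a ≤ b := (abs_le.mp h).1
      have h2 : b ≤ a := (abs_le.mp h).2
      rw [abs_of_nonneg (by linarith), abs_of_nonneg (by linarith)]
      rw [abs_of_nonneg ha]; ring
    · rw [abs_of_nonpos ha] at h
      have h1 : a ≤ b := by have := (abs_le.mp h).1; linarith
      have h2 : b ≤ -a := (abs_le.mp h).2
      rw [abs_of_nonpos (by linarith), abs_of_nonpos (by linarith)]
      rw [abs_of_nonpos ha]; ring

lemma sumOverEdges_pair_sum (f : Fin n → ℝ) :
    sumOverEdges G (fun i j => f i + f j) = ∑ i, (G.degree i : ℝ) * f i := by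
  classical
  set A := Finset.univ.filter (fun p : Fin n × Fin n => G.Adj p.1 p.2) with hA
  have hAfst : ∑ p ∈ A, f p.1 = ∑ i, (G.degree i : ℝ) * f i := by
    rw [hA, Finset.sum_filter, Fintype.sum_prod_type]
    refine Finset.sum_congr rfl fun i _ => ?_
    rw [← Finset.sum_filter]
    have h1 : Finset.univ.filter (fun j => G.Adj (i, j).1 (i, j).2) = G.neighborFinset i := by
      ext j; simp
    rw [h1]
    simp only [Finset.sum_const, nsmul_eq_mul]
    rw [SimpleGraph.card_neighborFinset_eq_degree]
  have hAswap : ∀ p ∈ A, p.swap ∈ A := by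
    intro p hp
    simp only [hA, Finset.mem_filter, Finset.mem_univ, true_and] at hp ⊢
    exact hp.symm
  have hAsnd : ∑ p ∈ A, f p.2 = ∑ i, (G.degree i : ℝ) * f i := by
    rw [← hAfst]
    exact Finset.sum_nbij' Prod.swap Prod.swap hAswap hAswap
      (fun p _ => rfl) (fun p _ => rfl) (fun p _ => rfl)
  have hsplit : ∑ p ∈ A.filter (fun p => p.1 < p.2), (f p.1 + f p.2)
      + ∑ p ∈ A.filter (fun p => ¬ p.1 < p.2), (f p.1 + f p.2)
      = ∑ p ∈ A, (f p.1 + f p.2) :=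
    Finset.sum_filter_add_sum_filter_not A _ _
  have hgt : A.filter (fun p => ¬ p.1 < p.2) = A.filter (fun p => p.2 < p.1) := by
    ext p
    simp only [hA, Finset.mem_filter, Finset.mem_univ, true_and]
    constructor
    · rintro ⟨hadj, hlt⟩
      exact ⟨hadj, lt_of_le_of_ne (not_lt.mp hlt) (Ne.symm hadj.ne)⟩
    · rintro ⟨hadj, hlt⟩
      exact ⟨hadj, not_lt.mpr hlt.le⟩
  have hswapsum : ∑ p ∈ A.filter (fun p => p.2 < p.1), (f p.1 + f p.2)
      = ∑ p ∈ A.filter (fun p => p.1 < p.2), (f p.1 + f p.2) := by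
    refine Finset.sum_nbij' Prod.swap Prod.swap ?_ ?_
      (fun p _ => rfl) (fun p _ => rfl) ?_
    · intro p hp
      simp only [Finset.mem_filter] at hp ⊢
      exact ⟨hAswap p hp.1, hp.2⟩
    · intro p hp
      simp only [Finset.mem_filter] at hp ⊢
      exact ⟨hAswap p hp.1, hp.2⟩
    · intro p _
      simp [add_comm]
  have hidx : A.filter (fun p => p.1 < p.2)
      = Finset.univ.filter (fun p : Fin n × Fin n => p.1 < p.2 ∧ G.Adj p.1 p.2) := by
    rw [hA, Finset.filter_filter]
    ext p
    simp [and_comm]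
  have hsum : ∑ p ∈ A, (f p.1 + f p.2) = 2 * ∑ i, (G.degree i : ℝ) * f i := by
    rw [Finset.sum_add_distrib, hAfst, hAsnd]; ring
  have : 2 * sumOverEdges G (fun i j => f i + f j) = 2 * ∑ i, (G.degree i : ℝ) * f i := by
    rw [← hsum, ← hsplit, hgt, hswapsum, sumOverEdges, ← hidx]; ring
  linarith

lemma key_ineq (hne : (Finset.univ : Finset (Fin n)).Nonempty) :
    ∀ k : ℕ, ∀ y : Fin n → ℝ, (∀ i, 0 ≤ y i) →
    ((Finset.univ.image y).filter (fun v => 0 < v)).card ≤ k →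
    (∑ i, y i) - sumOverEdges G (fun i j => min (y i) (y j)) ≤
      (indepNum G : ℝ) * (Finset.univ.sup' hne y) := by
  intro k
  induction k with
  | zero =>
    intro y hy hcard
    have hzero : ∀ i, y i = 0 := by
      intro i
      by_contra h
      have hpos : 0 < y i := lt_of_le_of_ne (hy i) (Ne.symm h)
      have hmem : y i ∈ (Finset.univ.image y).filter (fun v => 0 < v) := by
        simp only [Finset.mem_filter, Finset.mem_image]
        exact ⟨⟨i, Finset.mem_univ i, rfl⟩, hpos⟩
      have := Finset.card_pos.mpr ⟨_, hmem⟩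
      omega
    have h1 : ∑ i, y i = 0 := Finset.sum_eq_zero fun i _ => hzero i
    have h2 : sumOverEdges G (fun i j => min (y i) (y j)) = 0 :=
      Finset.sum_eq_zero fun p _ => by simp [hzero]
    have h3 : Finset.univ.sup' hne y = 0 := by
      apply le_antisymm
      · exact Finset.sup'_le _ _ fun i _ => le_of_eq (hzero i)
      · obtain ⟨i0, hi0⟩ := hne
        calc (0:ℝ) = y i0 := (hzero i0).symm
        _ ≤ _ := Finset.le_sup' y hi0
    rw [h1, h2, h3]; simp
  | succ k ih =>
    intro y hy hcard
    set M := Finset.univ.sup' hne y with hM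
    obtain ⟨i0, -, hi0⟩ := Finset.exists_mem_eq_sup' hne y
    have hyleM : ∀ i, y i ≤ M := fun i => Finset.le_sup' y (Finset.mem_univ i)
    by_cases hM0 : M ≤ 0
    · have hzero : ∀ i, y i = 0 := fun i => le_antisymm (le_trans (hyleM i) hM0) (hy i)
      have h1 : ∑ i, y i = 0 := Finset.sum_eq_zero fun i _ => hzero i
      have h2 : sumOverEdges G (fun i j => min (y i) (y j)) = 0 :=
        Finset.sum_eq_zero fun p _ => by simp [hzero]
      have h3 : M = 0 := le_antisymm hM0 (by rw [hM, hi0]; exact hy i0)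
      rw [h1, h2, h3]; simp
    · push_neg at hM0
      set T := Finset.univ.filter (fun i => y i = M) with hT
      set V' := insert (0:ℝ) ((Finset.univ.image y).filter (fun v => v < M)) with hV'
      have hV'ne : V'.Nonempty := Finset.insert_nonempty _ _
      set M' := V'.max' hV'ne with hM'
      have hM'0 : 0 ≤ M' := Finset.le_max' _ 0 (Finset.mem_insert_self _ _)
      have hV'lt : ∀ v ∈ V', v < M := by
        intro v hv
        rcases Finset.mem_insert.mp hv with h | h
        · rw [h]; exact hM0
        · exact (Finset.mem_filter.mp h).2
      have hM'M : M' < M := hV'lt _ (Finset.max'_mem _ _)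
      have hle : ∀ i, y i ≠ M → y i ≤ M' := by
        intro i h
        apply Finset.le_max'
        apply Finset.mem_insert_of_mem
        exact Finset.mem_filter.mpr ⟨Finset.mem_image_of_mem y (Finset.mem_univ i),
          lt_of_le_of_ne (hyleM i) h⟩
      set y' := fun i => if y i = M then M' else y i with hy'def
      have hy' : ∀ i, 0 ≤ y' i := by
        intro i; simp only [hy'def]; split
        · exact hM'0
        · exact hy i
      have hy'le : ∀ i, y' i ≤ M' := by
        intro i; simp only [hy'def]; split
        · exact le_refl _
        · next h => exact hle i h
      -- card bound for y'
      have hMmemfilter : M ∈ (Finset.univ.image y).filter (fun v => 0 < v) := by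
        simp only [Finset.mem_filter, Finset.mem_image]
        exact ⟨⟨i0, Finset.mem_univ i0, hi0.symm⟩, hM0⟩
      have hsub : (Finset.univ.image y').filter (fun v => 0 < v) ⊆
          ((Finset.univ.image y).filter (fun v => 0 < v)).erase M := by
        intro v hv
        simp only [Finset.mem_filter, Finset.mem_image] at hv
        obtain ⟨⟨i, -, hiv⟩, hvpos⟩ := hv
        rw [Finset.mem_erase]
        simp only [hy'def] at hiv
        by_cases h : y i = M
        · rw [if_pos h] at hiv
          subst hiv
          refine ⟨ne_of_lt hM'M, ?_⟩
          have hM'mem : M' ∈ V' := Finset.max'_mem _ _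
          rcases Finset.mem_insert.mp hM'mem with h0 | h0
          · exact absurd h0 hvpos.ne'
          · exact Finset.mem_filter.mpr ⟨(Finset.mem_filter.mp h0).1, hvpos⟩
        · rw [if_neg h] at hiv
          subst hiv
          exact ⟨h, Finset.mem_filter.mpr ⟨Finset.mem_image_of_mem y (Finset.mem_univ i), hvpos⟩⟩
      have hcard' : ((Finset.univ.image y').filter (fun v => 0 < v)).card ≤ k := by
        have h1 := Finset.card_le_card hsub
        have h2 := Finset.card_erase_of_mem hMmemfilter
        have h3 := Finset.card_pos.mpr ⟨_, hMmemfilter⟩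
        omega
      have hIH := ih y' hy' hcard'
      have hsup' : Finset.univ.sup' hne y' ≤ M' := Finset.sup'_le _ _ fun i _ => hy'le i
      have halpha : (0:ℝ) ≤ (indepNum G : ℝ) := Nat.cast_nonneg _
      have hIH' : (∑ i, y' i) - sumOverEdges G (fun i j => min (y' i) (y' j)) ≤
          (indepNum G : ℝ) * M' :=
        le_trans hIH (mul_le_mul_of_nonneg_left hsup' halpha)
      -- sum difference
      have hsumdiff : ∑ i, y i - ∑ i, y' i = (M - M') * T.card := by
        rw [← Finset.sum_sub_distrib]
        have : ∀ i ∈ Finset.univ, y i - y' i = if y i = M then M - M' else 0 := by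
          intro i _
          simp only [hy'def]; split <;> simp_all
        rw [Finset.sum_congr rfl this, ← Finset.sum_filter, Finset.sum_const, nsmul_eq_mul, ← hT]
        ring
      -- edge sum difference
      have hedgediff : sumOverEdges G (fun i j => min (y i) (y j)) -
          sumOverEdges G (fun i j => min (y' i) (y' j)) = (M - M') * (edgeIn G T) := by
        rw [sumOverEdges, sumOverEdges, ← Finset.sum_sub_distrib]
        have hterm : ∀ p ∈ Finset.univ.filter
            (fun p : Fin n × Fin n => p.1 < p.2 ∧ G.Adj p.1 p.2),
            min (y p.1) (y p.2) - min (y' p.1) (y' p.2)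
              = if p.1 ∈ T ∧ p.2 ∈ T then M - M' else 0 := by
          intro p _
          have hTm : ∀ i, i ∈ T ↔ y i = M := by
            intro i; simp [hT]
          by_cases h1 : y p.1 = M <;> by_cases h2 : y p.2 = M
          · rw [if_pos ⟨(hTm p.1).mpr h1, (hTm p.2).mpr h2⟩]
            simp only [hy'def, if_pos h1, if_pos h2, h1, h2, min_self]
          · rw [if_neg (by rw [hTm p.1, hTm p.2]; tauto)]
            have hle2 : y p.2 ≤ M' := hle _ h2
            simp only [hy'def, if_pos h1, if_neg h2, h1]
            rw [min_eq_right (le_trans hle2 hM'M.le), min_eq_right hle2]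
            ring
          · rw [if_neg (by rw [hTm p.1, hTm p.2]; tauto)]
            have hle1 : y p.1 ≤ M' := hle _ h1
            simp only [hy'def, if_neg h1, if_pos h2, h2]
            rw [min_eq_left (le_trans hle1 hM'M.le), min_eq_left hle1]
            ring
          · rw [if_neg (by rw [hTm p.1, hTm p.2]; tauto)]
            simp only [hy'def, if_neg h1, if_neg h2]
            ring
        rw [Finset.sum_congr rfl hterm, ← Finset.sum_filter, Finset.sum_const, nsmul_eq_mul,
          edgeIn, Finset.filter_filter]
        ring
      have hTbound : (T.card : ℝ) ≤ (indepNum G : ℝ) + (edgeIn G T : ℝ) := by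
        exact_mod_cast card_le_indep_add_edgeIn G T
      have hMM' : (0:ℝ) ≤ M - M' := by linarith
      have hmul : (M - M') * ((T.card : ℝ) - (edgeIn G T : ℝ)) ≤ (M - M') * (indepNum G : ℝ) :=
        mul_le_mul_of_nonneg_left (by linarith) hMM'
      nlinarith [hsumdiff, hedgediff, hIH', hmul]

/-- Two equivalent continuous representations of the independence number:
`α(G) = max_{x ≠ 0} [Σ_{{i,j}∈E}(|x_i−x_j|+|x_i+x_j|) − 2Σ_i(deg_i−1)|x_i|]/(2‖x‖_∞)`
and `α(G) = max_{x ≠ 0} (‖x‖₁ − Σ_{{i,j}∈E} min{|x_i|,|x_j|})/‖x‖_∞`. -/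
theorem indepNum_continuous_representations {n : ℕ} (hn : 1 ≤ n)
    (G : SimpleGraph (Fin n)) [DecidableRel G.Adj] :
    ((indepNum G : ℝ) =
      sSup {r : ℝ | ∃ x : Fin n → ℝ, x ≠ 0 ∧
        r = (sumOverEdges G (fun i j => |x i - x j| + |x i + x j|) -
              2 * ∑ i, ((G.degree i : ℝ) - 1) * |x i|) / (2 * ⨆ i, |x i|)}) ∧
    ((indepNum G : ℝ) =
      sSup {r : ℝ | ∃ x : Fin n → ℝ, x ≠ 0 ∧
        r = ((∑ i, |x i|) - sumOverEdges G (fun i j => min |x i| |x j|)) /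
              (⨆ i, |x i|)}) := by
  haveI : Nonempty (Fin n) := ⟨⟨0, hn⟩⟩
  have hne : (Finset.univ : Finset (Fin n)).Nonempty := Finset.univ_nonempty
  -- numerator identity
  have hident : ∀ x : Fin n → ℝ,
      sumOverEdges G (fun i j => |x i - x j| + |x i + x j|) -
        2 * ∑ i, ((G.degree i : ℝ) - 1) * |x i|
      = 2 * ((∑ i, |x i|) - sumOverEdges G (fun i j => min |x i| |x j|)) := by
    intro x
    have h1 : sumOverEdges G (fun i j => |x i - x j| + |x i + x j|)
        = 2 * sumOverEdges G (fun i j => |x i| + |x j|)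
          - 2 * sumOverEdges G (fun i j => min |x i| |x j|) := by
      rw [sumOverEdges, sumOverEdges, sumOverEdges]
      calc ∑ p ∈ Finset.univ.filter (fun p : Fin n × Fin n => p.1 < p.2 ∧ G.Adj p.1 p.2),
            (fun i j => |x i - x j| + |x i + x j|) p.1 p.2
          = ∑ p ∈ Finset.univ.filter (fun p : Fin n × Fin n => p.1 < p.2 ∧ G.Adj p.1 p.2),
            (2 * ((fun i j => |x i| + |x j|) p.1 p.2)
              - 2 * ((fun i j => min |x i| |x j|) p.1 p.2)) := by
            refine Finset.sum_congr rfl fun p _ => ?_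
            have := two_max_abs (x p.1) (x p.2)
            have hmm := min_add_max |x p.1| |x p.2|
            dsimp only
            linarith
        _ = _ := by
            rw [Finset.sum_sub_distrib, ← Finset.mul_sum, ← Finset.mul_sum]
    have h2 : sumOverEdges G (fun i j => |x i| + |x j|) = ∑ i, (G.degree i : ℝ) * |x i| :=
      sumOverEdges_pair_sum G _
    have h3 : ∑ i, ((G.degree i : ℝ) - 1) * |x i|
        = ∑ i, (G.degree i : ℝ) * |x i| - ∑ i, |x i| := by
      rw [← Finset.sum_sub_distrib]
      exact Finset.sum_congr rfl fun i _ => by ring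
    rw [h1, h2, h3]; ring
  -- the two target sets are equal
  have hseteq : {r : ℝ | ∃ x : Fin n → ℝ, x ≠ 0 ∧
        r = (sumOverEdges G (fun i j => |x i - x j| + |x i + x j|) -
              2 * ∑ i, ((G.degree i : ℝ) - 1) * |x i|) / (2 * ⨆ i, |x i|)}
      = {r : ℝ | ∃ x : Fin n → ℝ, x ≠ 0 ∧
        r = ((∑ i, |x i|) - sumOverEdges G (fun i j => min |x i| |x j|)) /
              (⨆ i, |x i|)} := by
    ext r
    simp only [Set.mem_setOf_eq]
    constructor
    · rintro ⟨x, hx, rfl⟩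
      exact ⟨x, hx, by rw [hident x, mul_div_mul_left _ _ (two_ne_zero)]⟩
    · rintro ⟨x, hx, rfl⟩
      exact ⟨x, hx, by rw [hident x, mul_div_mul_left _ _ (two_ne_zero)]⟩
  -- main equality for the second representation
  have hsupeq : ∀ x : Fin n → ℝ, (⨆ i, |x i|) = Finset.univ.sup' hne (fun i => |x i|) := by
    intro x
    exact (Finset.sup'_univ_eq_ciSup _).symm
  have hub : ∀ r ∈ {r : ℝ | ∃ x : Fin n → ℝ, x ≠ 0 ∧
        r = ((∑ i, |x i|) - sumOverEdges G (fun i j => min |x i| |x j|)) /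
              (⨆ i, |x i|)}, r ≤ (indepNum G : ℝ) := by
    rintro r ⟨x, hx0, rfl⟩
    have hxi : ∃ i, x i ≠ 0 := by
      by_contra h
      push_neg at h
      exact hx0 (funext fun i => h i)
    obtain ⟨i1, hi1⟩ := hxi
    have hpos : 0 < Finset.univ.sup' hne (fun i => |x i|) :=
      lt_of_lt_of_le (abs_pos.mpr hi1) (Finset.le_sup' (fun i => |x i|) (Finset.mem_univ i1))
    rw [hsupeq x, div_le_iff₀ hpos]
    exact key_ineq G hne _ (fun i => |x i|) (fun i => abs_nonneg _) le_rfl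
  -- the maximum independent set witness
  have hFne : (Finset.univ.filter (fun S : Finset (Fin n) =>
      ∀ i ∈ S, ∀ j ∈ S, ¬ G.Adj i j)).Nonempty :=
    ⟨∅, by simp⟩
  obtain ⟨S, hSmem, hScard⟩ := Finset.exists_mem_eq_sup _ hFne Finset.card
  have hSind : ∀ i ∈ S, ∀ j ∈ S, ¬ G.Adj i j := (Finset.mem_filter.mp hSmem).2
  have hScard' : S.card = indepNum G := hScard.symm
  have halpha1 : 1 ≤ indepNum G := by
    have : ({(⟨0, hn⟩ : Fin n)} : Finset (Fin n)).card ≤ indepNum G := by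
      apply indep_card_le G
      intro i hi j hj
      simp only [Finset.mem_singleton] at hi hj
      subst hi; subst hj
      exact G.irrefl
    simpa using this
  have hSne : S.Nonempty := by
    rw [← Finset.card_pos, hScard']; omega
  -- indicator vector
  set x₀ := fun i : Fin n => if i ∈ S then (1:ℝ) else 0 with hx₀
  obtain ⟨iS, hiS⟩ := hSne
  have hx₀ne : x₀ ≠ 0 := by
    intro h
    have := congrFun h iS
    simp [hx₀, hiS] at this
  have habs : ∀ i, |x₀ i| = x₀ i := by
    intro i
    simp only [hx₀]
    split <;> simp
  have hsum : ∑ i, |x₀ i| = S.card := by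
    simp only [habs]; simp only [hx₀]
    rw [Finset.sum_ite_mem, Finset.univ_inter, Finset.sum_const, nsmul_eq_mul, mul_one]
  have hmin : sumOverEdges G (fun i j => min |x₀ i| |x₀ j|) = 0 := by
    apply Finset.sum_eq_zero
    intro p hp
    simp only [Finset.mem_filter, Finset.mem_univ, true_and] at hp
    have hnot : ¬ (p.1 ∈ S ∧ p.2 ∈ S) := by
      rintro ⟨h1, h2⟩
      exact hSind p.1 h1 p.2 h2 hp.2
    dsimp only
    rcases not_and_or.mp hnot with h | h
    · have : x₀ p.1 = 0 := by simp [hx₀, h]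
      rw [habs, habs, this]
      simp only [hx₀]
      rcases em (p.2 ∈ S) with h2 | h2 <;> simp [h2]
    · have : x₀ p.2 = 0 := by simp [hx₀, h]
      rw [habs, habs, this]
      simp only [hx₀]
      rcases em (p.1 ∈ S) with h2 | h2 <;> simp [h2]
  have hsupx : Finset.univ.sup' hne (fun i => |x₀ i|) = 1 := by
    apply le_antisymm
    · apply Finset.sup'_le
      intro i _
      simp only [habs, hx₀]
      split <;> norm_num
    · calc (1:ℝ) = |x₀ iS| := by simp [hx₀, hiS]
      _ ≤ _ := Finset.le_sup' (fun i => |x₀ i|) (Finset.mem_univ iS)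
  have hmem : (indepNum G : ℝ) ∈ {r : ℝ | ∃ x : Fin n → ℝ, x ≠ 0 ∧
        r = ((∑ i, |x i|) - sumOverEdges G (fun i j => min |x i| |x j|)) /
              (⨆ i, |x i|)} := by
    refine ⟨x₀, hx₀ne, ?_⟩
    rw [hsupeq x₀, hsupx, hsum, hmin, hScard']
    simp
  have h2 : (indepNum G : ℝ) =
      sSup {r : ℝ | ∃ x : Fin n → ℝ, x ≠ 0 ∧
        r = ((∑ i, |x i|) - sumOverEdges G (fun i j => min |x i| |x j|)) /
              (⨆ i, |x i|)} := by
    apply le_antisymm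
    · exact le_csSup ⟨(indepNum G : ℝ), hub⟩ hmem
    · exact csSup_le ⟨_, hmem⟩ hub
  exact ⟨by rw [hseteq]; exact h2, h2⟩
end

section
/- Let G = (V,E) be a finite simple graph with E ≠ ∅ and let c : V → [0,∞). Then max over edges {i,j} ∈ E of (c_i + c_j) equals max over x ∈ ℝ^E ∖ {0} of (Σ_{i∈V} c_i · |Σ_{e∈E, i∈e} x_e|) / (Σ_{e∈E} |x_e|). In particular, if G has no isolated vertices, taking c_i = 1/deg_i yields that the Cheeger-like constant max_{{v,w}∈E}(1/deg v + 1/deg w) equals max_{x∈ℝ^E∖{0}} (Σ_{v∈V} (1/deg v)·|Σ_{e∋v} x_e|) / (Σ_{e∈E} |x_e|). -/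
open Finset

theorem cheeger_aux {V : Type*} [Fintype V] [DecidableEq V]
    (G : SimpleGraph V) [DecidableRel G.Adj] (hE : G.edgeFinset.Nonempty)
    (c : V → ℝ) (hc : ∀ i, 0 ≤ c i) :
    (sSup {r : ℝ | ∃ i j : V, G.Adj i j ∧ r = c i + c j} =
      sSup {r : ℝ | ∃ x : Sym2 V → ℝ, (∃ e ∈ G.edgeFinset, x e ≠ 0) ∧
        r = (∑ i, c i * |∑ e ∈ G.edgeFinset.filter (fun e => i ∈ e), x e|) /
            (∑ e ∈ G.edgeFinset, |x e|)}) := by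
  classical
  set f : Sym2 V → ℝ := Sym2.lift ⟨fun i j => c i + c j, fun i j => add_comm _ _⟩ with hf
  have edge_sum : ∀ e ∈ G.edgeFinset, ∑ i, (if i ∈ e then c i else 0) = f e := by
    intro e he
    induction e with
    | _ a b =>
      have hadj : G.Adj a b := by simpa [SimpleGraph.mem_edgeFinset] using he
      have hab : a ≠ b := hadj.ne
      have : ∀ i : V, (if i ∈ (s(a,b) : Sym2 V) then c i else 0)
          = (if i = a then c i else 0) + (if i = b then c i else 0) := by
        intro i
        by_cases h1 : i = a <;> by_cases h2 : i = b <;>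
          simp [Sym2.mem_iff, h1, h2] <;> simp_all
      rw [Finset.sum_congr rfl fun i _ => this i, Finset.sum_add_distrib]
      simp [hf]
  set M : ℝ := G.edgeFinset.sup' hE f with hM
  obtain ⟨e0, he0, hfe0⟩ := Finset.exists_mem_eq_sup' hE f
  obtain ⟨i0, j0, rfl⟩ : ∃ i j, e0 = s(i,j) := Sym2.ind (fun i j => ⟨i, j, rfl⟩) e0
  have hadj0 : G.Adj i0 j0 := by simpa [SimpleGraph.mem_edgeFinset] using he0
  have hfe0' : f s(i0,j0) = c i0 + c j0 := by simp [hf]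
  -- upper bound for quotient set
  have key : ∀ x : Sym2 V → ℝ, (∃ e ∈ G.edgeFinset, x e ≠ 0) →
      (∑ i, c i * |∑ e ∈ G.edgeFinset.filter (fun e => i ∈ e), x e|) /
            (∑ e ∈ G.edgeFinset, |x e|) ≤ M := by
    intro x ⟨e1, he1, hx1⟩
    have hD : 0 < ∑ e ∈ G.edgeFinset, |x e| :=
      Finset.sum_pos' (fun e _ => abs_nonneg _) ⟨e1, he1, abs_pos.mpr hx1⟩
    rw [div_le_iff₀ hD]
    calc ∑ i, c i * |∑ e ∈ G.edgeFinset.filter (fun e => i ∈ e), x e|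
        ≤ ∑ i, c i * ∑ e ∈ G.edgeFinset.filter (fun e => i ∈ e), |x e| := by
          refine Finset.sum_le_sum fun i _ => ?_
          exact mul_le_mul_of_nonneg_left (Finset.abs_sum_le_sum_abs _ _) (hc i)
      _ = ∑ i, ∑ e ∈ G.edgeFinset, (if i ∈ e then c i * |x e| else 0) := by
          refine Finset.sum_congr rfl fun i _ => ?_
          rw [Finset.mul_sum, Finset.sum_filter]
      _ = ∑ e ∈ G.edgeFinset, ∑ i, (if i ∈ e then c i * |x e| else 0) :=
          Finset.sum_comm
      _ = ∑ e ∈ G.edgeFinset, f e * |x e| := by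
          refine Finset.sum_congr rfl fun e he => ?_
          rw [← edge_sum e he, Finset.sum_mul]
          exact Finset.sum_congr rfl fun i _ => by split <;> simp
      _ ≤ ∑ e ∈ G.edgeFinset, M * |x e| := by
          refine Finset.sum_le_sum fun e he => ?_
          exact mul_le_mul_of_nonneg_right (Finset.le_sup' f he) (abs_nonneg _)
      _ = M * ∑ e ∈ G.edgeFinset, |x e| := by rw [Finset.mul_sum]
  -- M is in the quotient set
  have hMmemB : M ∈ {r : ℝ | ∃ x : Sym2 V → ℝ, (∃ e ∈ G.edgeFinset, x e ≠ 0) ∧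
        r = (∑ i, c i * |∑ e ∈ G.edgeFinset.filter (fun e => i ∈ e), x e|) /
            (∑ e ∈ G.edgeFinset, |x e|)} := by
    refine ⟨fun e => if e = s(i0,j0) then 1 else 0, ⟨s(i0,j0), he0, by simp⟩, ?_⟩
    have habs : ∀ e : Sym2 V, |if e = s(i0,j0) then (1:ℝ) else 0|
        = if e = s(i0,j0) then 1 else 0 := fun e => by split <;> simp
    have hden : (∑ e ∈ G.edgeFinset, |if e = s(i0,j0) then (1:ℝ) else 0|) = 1 := by
      simp only [habs, Finset.sum_ite_eq' G.edgeFinset s(i0,j0) (fun _ => (1:ℝ)), he0,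
        if_true]
    have hnum : ∀ i : V, (∑ e ∈ G.edgeFinset.filter (fun e => i ∈ e),
        (if e = s(i0,j0) then (1:ℝ) else 0)) = if i ∈ (s(i0,j0) : Sym2 V) then 1 else 0 := by
      intro i
      rw [Finset.sum_ite_eq' (G.edgeFinset.filter (fun e => i ∈ e)) s(i0,j0) (fun _ => (1:ℝ))]
      simp [he0]
    have h2 : ∀ i : V, c i * |if i ∈ (s(i0,j0) : Sym2 V) then (1:ℝ) else 0|
        = if i ∈ (s(i0,j0) : Sym2 V) then c i else 0 := fun i => by split <;> simp
    simp only [hnum, hden, h2, div_one]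
    rw [edge_sum _ he0]
    rw [hM, hfe0]
  have hMmemA : M ∈ {r : ℝ | ∃ i j : V, G.Adj i j ∧ r = c i + c j} :=
    ⟨i0, j0, hadj0, by rw [hM, hfe0, hfe0']⟩
  have hubA : ∀ r ∈ {r : ℝ | ∃ i j : V, G.Adj i j ∧ r = c i + c j}, r ≤ M := by
    rintro r ⟨i, j, hadj, rfl⟩
    have hmem : (s(i,j) : Sym2 V) ∈ G.edgeFinset := by
      simpa [SimpleGraph.mem_edgeFinset] using hadj
    have hfij : f s(i,j) = c i + c j := by simp [hf]
    rw [hM, ← hfij]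
    exact Finset.le_sup' f hmem
  have hubB : ∀ r ∈ {r : ℝ | ∃ x : Sym2 V → ℝ, (∃ e ∈ G.edgeFinset, x e ≠ 0) ∧
        r = (∑ i, c i * |∑ e ∈ G.edgeFinset.filter (fun e => i ∈ e), x e|) /
            (∑ e ∈ G.edgeFinset, |x e|)}, r ≤ M := by
    rintro r ⟨x, hx, rfl⟩
    exact key x hx
  have hA : sSup {r : ℝ | ∃ i j : V, G.Adj i j ∧ r = c i + c j} = M :=
    le_antisymm (csSup_le ⟨M, hMmemA⟩ hubA) (le_csSup ⟨M, hubA⟩ hMmemA)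
  have hB : sSup {r : ℝ | ∃ x : Sym2 V → ℝ, (∃ e ∈ G.edgeFinset, x e ≠ 0) ∧
        r = (∑ i, c i * |∑ e ∈ G.edgeFinset.filter (fun e => i ∈ e), x e|) /
            (∑ e ∈ G.edgeFinset, |x e|)} = M :=
    le_antisymm (csSup_le ⟨M, hMmemB⟩ hubB) (le_csSup ⟨M, hubB⟩ hMmemB)
  rw [hA, hB]


/-- For a finite simple graph with at least one edge and vertex weights
`c : V → [0,∞)`, `max_{{i,j}∈E}(c_i + c_j)` equals
`max_{x ∈ ℝ^E ∖ {0}} (Σ_{i∈V} c_i·|Σ_{e∋i} x_e|)/(Σ_{e∈E}|x_e|)`; in particular,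
if `G` has no isolated vertices, taking `c_i = 1/deg i` gives the Cheeger-like
constant identity. -/
theorem cheeger_like_constant {V : Type*} [Fintype V] [DecidableEq V]
    (G : SimpleGraph V) [DecidableRel G.Adj] (hE : G.edgeFinset.Nonempty)
    (c : V → ℝ) (hc : ∀ i, 0 ≤ c i) :
    (sSup {r : ℝ | ∃ i j : V, G.Adj i j ∧ r = c i + c j} =
      sSup {r : ℝ | ∃ x : Sym2 V → ℝ, (∃ e ∈ G.edgeFinset, x e ≠ 0) ∧
        r = (∑ i, c i * |∑ e ∈ G.edgeFinset.filter (fun e => i ∈ e), x e|) /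
            (∑ e ∈ G.edgeFinset, |x e|)}) ∧
    ((∀ v : V, 0 < G.degree v) →
      sSup {r : ℝ | ∃ i j : V, G.Adj i j ∧
          r = 1 / (G.degree i : ℝ) + 1 / (G.degree j : ℝ)} =
        sSup {r : ℝ | ∃ x : Sym2 V → ℝ, (∃ e ∈ G.edgeFinset, x e ≠ 0) ∧
          r = (∑ i, (1 / (G.degree i : ℝ)) *
                |∑ e ∈ G.edgeFinset.filter (fun e => i ∈ e), x e|) /
              (∑ e ∈ G.edgeFinset, |x e|)}) := by
  refine ⟨cheeger_aux G hE c hc, fun _ => ?_⟩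
  exact cheeger_aux G hE (fun v => 1 / (G.degree v : ℝ)) (fun v => by positivity)
end

section
/- Let G = (V,E) be a finite connected simple graph with #V ≥ 2. Then (1/2)·max{h_int(G), h_ext(G)} ≤ P¹(G) ≤ h_ver(G), where P¹(G), h_int(G), h_ext(G), h_ver(G) are as defined below. -/
open Finset

/-- The 1-Poincaré profile of a finite graph:
`P¹(G) = inf { Σᵢ max_{j∼i}|xᵢ−xⱼ| / Σᵢ|xᵢ| : Σᵢ xᵢ = 0, x ≠ 0 }`. -/
noncomputable def poincareProfile {V : Type*} [Fintype V] (G : SimpleGraph V)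
    [DecidableRel G.Adj] : ℝ :=
  sInf {r : ℝ | ∃ x : V → ℝ, (∑ i, x i) = 0 ∧ x ≠ 0 ∧
    r = (∑ i, ⨆ j, if G.Adj i j then |x i - x j| else 0) / (∑ i, |x i|)}

/-- The internal vertex boundary `∂_int A`. -/
def intBoundary {V : Type*} [Fintype V] [DecidableEq V] (G : SimpleGraph V)
    [DecidableRel G.Adj] (A : Finset V) : Finset V :=
  A.filter (fun i => ∃ j, j ∉ A ∧ G.Adj i j)

/-- The external vertex boundary `∂_ext A`. -/
def extBoundary {V : Type*} [Fintype V] [DecidableEq V] (G : SimpleGraph V)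
    [DecidableRel G.Adj] (A : Finset V) : Finset V :=
  Aᶜ.filter (fun j => ∃ i, i ∈ A ∧ G.Adj i j)

/-- The modified Cheeger constant of `G` with respect to a vertex-boundary
operation `bd`. -/
noncomputable def modCheeger {V : Type*} [Fintype V] [DecidableEq V]
    (G : SimpleGraph V) (bd : Finset V → Finset V) : ℝ :=
  sInf {r : ℝ | ∃ A : Finset V, A ≠ ∅ ∧ A ≠ Finset.univ ∧
    r = ((bd A).card : ℝ) / min (A.card : ℝ) ((Aᶜ).card : ℝ)}

open MeasureTheory

section aux
variable {V : Type*} [Fintype V] [DecidableEq V] (G : SimpleGraph V) [DecidableRel G.Adj]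

lemma supTerm_nonneg [Nonempty V] (x : V → ℝ) (i : V) :
    0 ≤ ⨆ j, if G.Adj i j then |x i - x j| else 0 := by
  have hb : BddAbove (Set.range fun j => if G.Adj i j then |x i - x j| else 0) :=
    Set.Finite.bddAbove (Set.finite_range _)
  refine le_trans ?_ (le_ciSup hb (Classical.arbitrary V))
  positivity

lemma supTerm_ge [Nonempty V] (x : V → ℝ) (i j : V) (h : G.Adj i j) :
    |x i - x j| ≤ ⨆ j, if G.Adj i j then |x i - x j| else 0 := by
  have hb : BddAbove (Set.range fun j => if G.Adj i j then |x i - x j| else 0) :=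
    Set.Finite.bddAbove (Set.finite_range _)
  refine le_trans ?_ (le_ciSup hb j)
  simp [h]

lemma modCheeger_set_nonempty (hcard : 2 ≤ Fintype.card V) (bd : Finset V → Finset V) :
    {r : ℝ | ∃ A : Finset V, A ≠ ∅ ∧ A ≠ Finset.univ ∧
      r = ((bd A).card : ℝ) / min (A.card : ℝ) ((Aᶜ).card : ℝ)}.Nonempty := by
  have : Nonempty V := Fintype.card_pos_iff.mp (by omega)
  obtain ⟨i⟩ := this
  refine ⟨_, {i}, by simp, ?_, rfl⟩
  intro h
  have := Fintype.card_le_of_surjective (fun _ : ({i} : Finset V) => (⟨i, by simp⟩ : ({i} : Finset V)))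
  have h1 : Fintype.card V = 1 := by
    rw [← Finset.card_univ, ← h]; simp
  omega

lemma modCheeger_bddBelow (bd : Finset V → Finset V) :
    BddBelow {r : ℝ | ∃ A : Finset V, A ≠ ∅ ∧ A ≠ Finset.univ ∧
      r = ((bd A).card : ℝ) / min (A.card : ℝ) ((Aᶜ).card : ℝ)} := by
  refine ⟨0, fun r hr => ?_⟩
  obtain ⟨A, -, -, rfl⟩ := hr
  positivity

lemma modCheeger_nonneg (hcard : 2 ≤ Fintype.card V) (bd : Finset V → Finset V) :
    0 ≤ modCheeger G bd :=
  le_csInf (modCheeger_set_nonempty hcard bd) (fun r hr => by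
    obtain ⟨A, -, -, rfl⟩ := hr; positivity)

lemma modCheeger_le (bd : Finset V → Finset V) (A : Finset V) (hA : A ≠ ∅)
    (hA' : A ≠ Finset.univ) :
    modCheeger G bd ≤ ((bd A).card : ℝ) / min (A.card : ℝ) ((Aᶜ).card : ℝ) :=
  csInf_le (modCheeger_bddBelow bd) ⟨A, hA, hA', rfl⟩

lemma modCheeger_mul_le (bd : Finset V → Finset V) (A : Finset V) (hA : A ≠ ∅)
    (hA' : A ≠ Finset.univ) :
    modCheeger G bd * min (A.card : ℝ) ((Aᶜ).card : ℝ) ≤ ((bd A).card : ℝ) := by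
  have h1 : (0:ℝ) < A.card := by
    have := Finset.card_pos.mpr (Finset.nonempty_of_ne_empty hA); exact_mod_cast this
  have h2 : (0:ℝ) < (Aᶜ).card := by
    have : (Aᶜ : Finset V).Nonempty := by
      rw [← Finset.card_pos, Finset.card_compl]
      have : A.card < Fintype.card V :=
        lt_of_le_of_ne (Finset.card_le_univ A) (fun h => hA' (Finset.card_eq_iff_eq_univ A |>.mp h))
      omega
    exact_mod_cast Finset.card_pos.mpr this
  have hmin : (0:ℝ) < min (A.card : ℝ) ((Aᶜ).card : ℝ) := lt_min h1 h2
  have := modCheeger_le G bd A hA hA'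
  calc modCheeger G bd * min (A.card : ℝ) ((Aᶜ).card : ℝ)
      ≤ (((bd A).card : ℝ) / min (A.card : ℝ) ((Aᶜ).card : ℝ)) * min (A.card : ℝ) ((Aᶜ).card : ℝ) :=
        mul_le_mul_of_nonneg_right this hmin.le
    _ = ((bd A).card : ℝ) := div_mul_cancel₀ _ hmin.ne'

end aux

lemma integrableOn_indicator_one {s T : Set ℝ} (hT : MeasurableSet T)
    (hfin : volume s ≠ ⊤) :
    IntegrableOn (Set.indicator T (fun _ => (1:ℝ))) s volume := by
  apply Integrable.mono' (g := fun _ => (1:ℝ)) (integrableOn_const hfin)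
  · exact ((measurable_const.indicator hT).aestronglyMeasurable)
  · filter_upwards with t
    by_cases h : t ∈ T <;> simp [Set.indicator_apply, h]

lemma setIntegral_indicator_one {s T : Set ℝ} (hT : MeasurableSet T) :
    ∫ t in s, Set.indicator T (fun _ => (1:ℝ)) t = (volume (s ∩ T)).toReal := by
  rw [MeasureTheory.setIntegral_indicator hT, setIntegral_const, smul_eq_mul, mul_one, measureReal_def]

lemma vol_inter_Ico_le (s : Set ℝ) (a b : ℝ) :
    (volume (s ∩ Set.Ico a b)).toReal ≤ max (b - a) 0 := by
  rw [← ENNReal.toReal_ofReal' , ← Real.volume_Ico]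
  exact ENNReal.toReal_mono (by rw [Real.volume_Ico]; exact ENNReal.ofReal_ne_top)
    (measure_mono Set.inter_subset_right)

lemma vol_Ioo_le_inter {s : Set ℝ} (hsfin : volume s ≠ ⊤) {c d : ℝ} (h : Set.Ioo c d ⊆ s ∩ Set.Ici c) :
    max (d - c) 0 ≤ (volume (s ∩ Set.Ici c)).toReal := by
  rw [← ENNReal.toReal_ofReal', ← Real.volume_Ioo]
  exact ENNReal.toReal_mono
    (ne_top_of_le_ne_top hsfin (measure_mono Set.inter_subset_left)) (measure_mono h)

lemma vol_Ioo_le_inter' {s : Set ℝ} (hsfin : volume s ≠ ⊤) {c d : ℝ} (h : Set.Ioo c d ⊆ s ∩ Set.Iio d) :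
    max (d - c) 0 ≤ (volume (s ∩ Set.Iio d)).toReal := by
  rw [← ENNReal.toReal_ofReal', ← Real.volume_Ioo]
  exact ENNReal.toReal_mono
    (ne_top_of_le_ne_top hsfin (measure_mono Set.inter_subset_left)) (measure_mono h)

section main
variable {V : Type*} [Fintype V] [DecidableEq V] (G : SimpleGraph V) [DecidableRel G.Adj]

set_option maxHeartbeats 1000000 in
lemma main_aux (hcard : 2 ≤ Fintype.card V) (bd : Finset V → Finset V)
    (x a b : V → ℝ)
    (hmem : ∀ (t : ℝ) (i : V),
      i ∈ bd (univ.filter (fun i => t < x i)) ↔ (a i ≤ t ∧ t < b i))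
    (hab : ∀ i, max (b i - a i) 0 ≤ ⨆ j, if G.Adj i j then |x i - x j| else 0)
    (hx0 : ∑ i, x i = 0) :
    modCheeger G bd * ((1/2) * ∑ i, |x i|) ≤
      ∑ i, ⨆ j, if G.Adj i j then |x i - x j| else 0 := by
  classical
  have hV : Nonempty V := Fintype.card_pos_iff.mp (by omega)
  set n := Fintype.card V with hn
  set h := modCheeger G bd with hh
  have hh0 : 0 ≤ h := modCheeger_nonneg G hcard bd
  -- extremes and the median
  have hSne : (univ.image x).Nonempty := ⟨x (Classical.arbitrary V),
    mem_image_of_mem x (mem_univ _)⟩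
  set lo := (univ.image x).min' hSne with hlo
  set hi := (univ.image x).max' hSne with hhi
  have hxlo : ∀ i, lo ≤ x i := fun i => min'_le _ _ (mem_image_of_mem x (mem_univ i))
  have hxhi : ∀ i, x i ≤ hi := fun i => le_max' _ _ (mem_image_of_mem x (mem_univ i))
  obtain ⟨ilo, -, hilo⟩ := mem_image.mp ((univ.image x).min'_mem hSne)
  obtain ⟨ihi, -, hihi⟩ := mem_image.mp ((univ.image x).max'_mem hSne)
  set T := (univ.image x).filter (fun v => n ≤ 2 * (univ.filter (fun i => x i ≤ v)).card)
    with hT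
  have hhiT : hi ∈ T := by
    rw [hT, mem_filter]
    refine ⟨(univ.image x).max'_mem hSne, ?_⟩
    have : univ.filter (fun i => x i ≤ hi) = univ := by
      apply filter_true_of_mem; intro i _; exact hxhi i
    rw [this, card_univ]; omega
  have hTne : T.Nonempty := ⟨hi, hhiT⟩
  set m := T.min' hTne with hm
  have hmT : m ∈ T := T.min'_mem hTne
  have hmS : m ∈ univ.image x := (mem_filter.mp hmT).1
  have hlom : lo ≤ m := min'_le _ _ hmS
  have hmhi : m ≤ hi := le_max' _ _ hmS
  have P1 : n ≤ 2 * (univ.filter (fun i => x i ≤ m)).card := (mem_filter.mp hmT).2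
  have P2 : 2 * (univ.filter (fun i => x i < m)).card ≤ n := by
    by_contra hlt
    push_neg at hlt
    have hUne : (univ.filter (fun i => x i < m)).Nonempty := by
      rw [← card_pos]; omega
    have hUine : ((univ.filter (fun i => x i < m)).image x).Nonempty := hUne.image x
    set v' := ((univ.filter (fun i => x i < m)).image x).max' hUine with hv'
    obtain ⟨i0, hi0, hi0v⟩ := mem_image.mp (max'_mem _ hUine)
    have hv'm : v' < m := by rw [hv', ← hi0v]; exact (mem_filter.mp hi0).2
    have hsub : univ.filter (fun i => x i < m) ⊆ univ.filter (fun i => x i ≤ v') := by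
      intro i hi
      rw [mem_filter] at hi ⊢
      exact ⟨hi.1, le_max' _ _ (mem_image_of_mem x (mem_filter.mpr ⟨mem_univ i, hi.2⟩))⟩
    have hv'T : v' ∈ T := by
      rw [hT, mem_filter]
      refine ⟨?_, ?_⟩
      · rw [hv', ← hi0v]; exact mem_image_of_mem x (mem_univ i0)
      · have := card_le_card hsub; omega
    exact absurd (T.min'_le _ hv'T) (not_le.mpr hv'm)
  -- the indicator-sum functions
  set Φ : ℝ → ℝ := fun t => ∑ i, Set.indicator (Set.Ico (a i) (b i)) (fun _ => (1:ℝ)) t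
    with hΦdef
  set u1 : ℝ → ℝ := fun t => ∑ i, Set.indicator (Set.Ici (x i)) (fun _ => (1:ℝ)) t with hu1def
  set u2 : ℝ → ℝ := fun t => ∑ i, Set.indicator (Set.Iio (x i)) (fun _ => (1:ℝ)) t with hu2def
  -- pointwise values as cardinalities
  have hu1card : ∀ t : ℝ, u1 t = ((univ.filter (fun i => x i ≤ t)).card : ℝ) := by
    intro t
    have e1 : u1 t = ∑ i, if x i ≤ t then (1:ℝ) else 0 :=
      Finset.sum_congr rfl fun i _ => by
        by_cases hle : x i ≤ t <;> simp [Set.indicator_apply, Set.mem_Ici, hle]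
    rw [e1, Finset.sum_boole]
  have hu2card : ∀ t : ℝ, u2 t = ((univ.filter (fun i => t < x i)).card : ℝ) := by
    intro t
    have e1 : u2 t = ∑ i, if t < x i then (1:ℝ) else 0 :=
      Finset.sum_congr rfl fun i _ => by
        by_cases hle : t < x i <;> simp [Set.indicator_apply, Set.mem_Iio, hle]
    rw [e1, Finset.sum_boole]
  have hΦcard : ∀ t : ℝ, Φ t = ((bd (univ.filter (fun i => t < x i))).card : ℝ) := by
    intro t
    have e1 : Φ t = ∑ i, if a i ≤ t ∧ t < b i then (1:ℝ) else 0 :=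
      Finset.sum_congr rfl fun i _ => by
        by_cases hic : a i ≤ t ∧ t < b i <;> simp [Set.indicator_apply, Set.mem_Ico, hic]
    have e2 : univ.filter (fun i => a i ≤ t ∧ t < b i)
        = bd (univ.filter (fun i => t < x i)) := by
      ext i
      simp only [mem_filter, mem_univ, true_and]
      exact (hmem t i).symm
    rw [e1, Finset.sum_boole, e2]
  -- integrability
  have hIocfin : volume (Set.Ioc lo hi) ≠ ⊤ := by
    rw [Real.volume_Ioc]; exact ENNReal.ofReal_ne_top
  have hIoofin : volume (Set.Ioo lo m) ≠ ⊤ := by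
    rw [Real.volume_Ioo]; exact ENNReal.ofReal_ne_top
  have hIocmfin : volume (Set.Ioc m hi) ≠ ⊤ := by
    rw [Real.volume_Ioc]; exact ENNReal.ofReal_ne_top
  have hΦint : ∀ (s : Set ℝ), volume s ≠ ⊤ → IntegrableOn Φ s volume := by
    intro s hs
    exact integrable_finset_sum _ fun i _ => integrableOn_indicator_one measurableSet_Ico hs
  have hu1int : IntegrableOn u1 (Set.Ioo lo m) volume :=
    integrable_finset_sum _ fun i _ => integrableOn_indicator_one measurableSet_Ici hIoofin
  have hu2int : IntegrableOn u2 (Set.Ioc m hi) volume :=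
    integrable_finset_sum _ fun i _ => integrableOn_indicator_one measurableSet_Iio hIocmfin
  -- pointwise bounds
  have hcardsum : ∀ t : ℝ, (univ.filter (fun i => t < x i)).card
      + (univ.filter (fun i => x i ≤ t)).card = n := by
    intro t
    have e0 := Finset.card_filter_add_card_filter_not
      (s := (univ : Finset V)) (p := fun i => t < x i)
    have e1 : univ.filter (fun i => ¬ t < x i) = univ.filter (fun i => x i ≤ t) :=
      Finset.filter_congr fun i _ => by simp [not_lt]
    rw [e1, Finset.card_univ] at e0
    exact e0
  have hB1 : ∀ t ∈ Set.Ioo lo m, h * u1 t ≤ Φ t := by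
    intro t ht
    rw [hu1card, hΦcard]
    set A := univ.filter (fun i => t < x i) with hA
    have hAc : (univ.filter (fun i => x i ≤ t)) = Aᶜ := by
      rw [hA, Finset.compl_filter]
      apply Finset.filter_congr
      intro i _
      simp [not_lt]
    rw [hAc]
    rcases eq_or_ne (Aᶜ) ∅ with hc | hc
    · rw [hc]; simp [Finset.card_empty]
    · have hAne : A ≠ univ := by
        intro hAu
        rw [hAu, Finset.compl_univ] at hc
        exact hc rfl
      have hAne' : A ≠ ∅ := by
        intro hAe
        have : ihi ∈ A := by
          rw [hA, mem_filter]
          exact ⟨mem_univ _, by rw [hihi]; exact lt_of_lt_of_le ht.2 hmhi⟩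
        rw [hAe] at this
        exact absurd this (Finset.notMem_empty _)
      have hkey := modCheeger_mul_le G bd A hAne' hAne
      have hcsmall : 2 * (Aᶜ).card ≤ n := by
        have hsub : Aᶜ ⊆ univ.filter (fun i => x i < m) := by
          rw [← hAc]
          intro i hi
          rw [mem_filter] at hi ⊢
          exact ⟨hi.1, lt_of_le_of_lt hi.2 ht.2⟩
        have := card_le_card hsub
        omega
      have hccA : A.card + (Aᶜ).card = n := by
        rw [Finset.card_add_card_compl, hn]
      have hminc : min (A.card : ℝ) ((Aᶜ).card : ℝ) = ((Aᶜ).card : ℝ) := by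
        apply min_eq_right
        exact_mod_cast (by omega : (Aᶜ).card ≤ A.card)
      rw [hminc] at hkey
      exact hkey
  have hB2 : ∀ t ∈ Set.Ioc m hi, h * u2 t ≤ Φ t := by
    intro t ht
    rw [hu2card, hΦcard]
    set A := univ.filter (fun i => t < x i) with hA
    rcases eq_or_ne A ∅ with hc | hc
    · rw [hc]; simp [Finset.card_empty]
    · have hAne : A ≠ univ := by
        intro hAu
        have : ilo ∈ A := hAu ▸ mem_univ ilo
        rw [hA, mem_filter] at this
        have : t < x ilo := this.2
        rw [hilo] at this
        exact absurd this (not_lt.mpr (le_trans hlom (le_of_lt ht.1)))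
      have hkey := modCheeger_mul_le G bd A hc hAne
      have hcsmall : 2 * A.card ≤ n := by
        have hsub : A ⊆ univ.filter (fun i => m < x i) := by
          intro i hi
          rw [hA, mem_filter] at hi
          rw [mem_filter]
          exact ⟨hi.1, lt_trans ht.1 hi.2⟩
        have h1 := card_le_card hsub
        have h2 : (univ.filter (fun i => m < x i)).card
            + (univ.filter (fun i => x i ≤ m)).card = n := by
          have e0 := Finset.card_filter_add_card_filter_not
            (s := (univ : Finset V)) (p := fun i => m < x i)
          have e1 : univ.filter (fun i => ¬ m < x i) = univ.filter (fun i => x i ≤ m) :=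
            Finset.filter_congr fun i _ => by simp [not_lt]
          rw [e1, Finset.card_univ] at e0
          exact e0
        omega
      have hccA : A.card + (Aᶜ).card = n := by
        rw [Finset.card_add_card_compl, hn]
      have hminc : min (A.card : ℝ) ((Aᶜ).card : ℝ) = (A.card : ℝ) := by
        apply min_eq_left
        exact_mod_cast (by omega : A.card ≤ (Aᶜ).card)
      rw [hminc] at hkey
      exact hkey
  -- integral bounds
  have hsplit : ∫ t in Set.Ioc lo hi, Φ t =
      (∫ t in Set.Ioo lo m, Φ t) + ∫ t in Set.Ioc m hi, Φ t := by
    rw [← Set.Ioc_union_Ioc_eq_Ioc hlom hmhi,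
      setIntegral_union (Set.Ioc_disjoint_Ioc.mpr (le_trans inf_le_left le_sup_right))
        measurableSet_Ioc (hΦint _ (by rw [Real.volume_Ioc]; exact ENNReal.ofReal_ne_top))
        (hΦint _ hIocmfin),
      MeasureTheory.integral_Ioc_eq_integral_Ioo]
  have hup : ∫ t in Set.Ioc lo hi, Φ t ≤
      ∑ i, ⨆ j, if G.Adj i j then |x i - x j| else 0 := by
    rw [hΦdef, MeasureTheory.integral_finset_sum _
      (fun i _ => integrableOn_indicator_one measurableSet_Ico hIocfin)]
    apply Finset.sum_le_sum
    intro i _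
    refine le_trans ?_ (hab i)
    rw [setIntegral_indicator_one measurableSet_Ico]
    exact vol_inter_Ico_le _ _ _
  have hlow1 : h * (∑ i, max (m - x i) 0) ≤ ∫ t in Set.Ioo lo m, Φ t := by
    have step1 : ∫ t in Set.Ioo lo m, h * u1 t ≤ ∫ t in Set.Ioo lo m, Φ t :=
      setIntegral_mono_on (hu1int.const_mul h) (hΦint _ hIoofin) measurableSet_Ioo hB1
    refine le_trans ?_ step1
    rw [MeasureTheory.integral_const_mul]
    apply mul_le_mul_of_nonneg_left _ hh0
    rw [hu1def, MeasureTheory.integral_finset_sum _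
      (fun i _ => integrableOn_indicator_one measurableSet_Ici hIoofin)]
    apply Finset.sum_le_sum
    intro i _
    rw [setIntegral_indicator_one measurableSet_Ici]
    apply vol_Ioo_le_inter hIoofin
    intro t ht
    exact ⟨⟨lt_of_le_of_lt (hxlo i) ht.1, ht.2⟩, le_of_lt ht.1⟩
  have hlow2 : h * (∑ i, max (x i - m) 0) ≤ ∫ t in Set.Ioc m hi, Φ t := by
    have step1 : ∫ t in Set.Ioc m hi, h * u2 t ≤ ∫ t in Set.Ioc m hi, Φ t :=
      setIntegral_mono_on (hu2int.const_mul h) (hΦint _ hIocmfin) measurableSet_Ioc hB2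
    refine le_trans ?_ step1
    rw [MeasureTheory.integral_const_mul]
    apply mul_le_mul_of_nonneg_left _ hh0
    rw [hu2def, MeasureTheory.integral_finset_sum _
      (fun i _ => integrableOn_indicator_one measurableSet_Iio hIocmfin)]
    apply Finset.sum_le_sum
    intro i _
    rw [setIntegral_indicator_one measurableSet_Iio]
    apply vol_Ioo_le_inter' hIocmfin
    intro t ht
    exact ⟨⟨ht.1, le_trans (le_of_lt ht.2) (hxhi i)⟩, ht.2⟩
  -- combine with median bound
  have habs : ∀ r s : ℝ, max (s - r) 0 + max (r - s) 0 = |r - s| := by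
    intro r s
    rcases le_total r s with hrs | hrs
    · rw [abs_of_nonpos (by linarith), max_eq_left (by linarith),
        max_eq_right (by linarith)]
      ring
    · rw [abs_of_nonneg (by linarith), max_eq_right (by linarith),
        max_eq_left (by linarith)]
      ring
  have hnm : (n : ℝ) * |m| ≤ ∑ i, |x i - m| := by
    have h1 : |∑ i, (x i - m)| ≤ ∑ i, |x i - m| := Finset.abs_sum_le_sum_abs _ _
    have h2 : ∑ i, (x i - m) = -((n : ℝ) * m) := by
      rw [Finset.sum_sub_distrib, hx0, Finset.sum_const, Finset.card_univ]
      push_cast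
      ring
    calc (n : ℝ) * |m| = |(n : ℝ) * m| := by
          rw [abs_mul, Nat.abs_cast]
      _ = |∑ i, (x i - m)| := by rw [h2, abs_neg]
      _ ≤ ∑ i, |x i - m| := h1
  have hD2 : ∑ i, |x i| ≤ 2 * ∑ i, |x i - m| := by
    have h1 : ∑ i, |x i| ≤ ∑ i, (|x i - m| + |m|) := by
      apply Finset.sum_le_sum
      intro i _
      calc |x i| = |(x i - m) + m| := by ring_nf
        _ ≤ |x i - m| + |m| := abs_add_le _ _
    rw [Finset.sum_add_distrib, Finset.sum_const, Finset.card_univ, nsmul_eq_mul] at h1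
    have hcn : ((Fintype.card V : ℕ) : ℝ) = (n : ℝ) := by norm_num [hn]
    rw [hcn] at h1
    linarith [hnm]
  calc h * ((1/2) * ∑ i, |x i|) ≤ h * ∑ i, |x i - m| := by
        apply mul_le_mul_of_nonneg_left _ hh0
        linarith
    _ = h * (∑ i, max (m - x i) 0) + h * (∑ i, max (x i - m) 0) := by
        rw [← mul_add, ← Finset.sum_add_distrib]
        congr 1
        exact (Finset.sum_congr rfl fun i _ => (habs (x i) m).symm)
    _ ≤ (∫ t in Set.Ioo lo m, Φ t) + ∫ t in Set.Ioc m hi, Φ t := add_le_add hlow1 hlow2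
    _ = ∫ t in Set.Ioc lo hi, Φ t := hsplit.symm
    _ ≤ ∑ i, ⨆ j, if G.Adj i j then |x i - x j| else 0 := hup

end main

section final
variable {V : Type*} [Fintype V] [DecidableEq V] (G : SimpleGraph V) [DecidableRel G.Adj]

lemma poincare_bddBelow [Nonempty V] :
    BddBelow {r : ℝ | ∃ x : V → ℝ, (∑ i, x i) = 0 ∧ x ≠ 0 ∧
      r = (∑ i, ⨆ j, if G.Adj i j then |x i - x j| else 0) / (∑ i, |x i|)} := by
  refine ⟨0, fun r hr => ?_⟩
  obtain ⟨x, -, -, rfl⟩ := hr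
  exact div_nonneg (Finset.sum_nonneg fun i _ => supTerm_nonneg G x i)
    (Finset.sum_nonneg fun i _ => abs_nonneg _)

lemma poincare_set_nonempty (hcard : 2 ≤ Fintype.card V) :
    {r : ℝ | ∃ x : V → ℝ, (∑ i, x i) = 0 ∧ x ≠ 0 ∧
      r = (∑ i, ⨆ j, if G.Adj i j then |x i - x j| else 0) / (∑ i, |x i|)}.Nonempty := by
  obtain ⟨i0, j0, hij⟩ := Fintype.exists_pair_of_one_lt_card (α := V) (by omega)
  refine ⟨_, Pi.single i0 (1:ℝ) - Pi.single j0 1, ?_, ?_, rfl⟩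
  · simp only [Pi.sub_apply]
    rw [Finset.sum_sub_distrib, Finset.sum_pi_single', Finset.sum_pi_single']
    simp
  · intro h
    have h0 := congrFun h i0
    simp only [Pi.sub_apply, Pi.single_eq_same, Pi.zero_apply] at h0
    rw [Pi.single_eq_of_ne hij] at h0
    norm_num at h0

theorem poincare_lower (hconn : G.Connected) (hcard : 2 ≤ Fintype.card V) :
    (1 / 2) * max (modCheeger G (intBoundary G)) (modCheeger G (extBoundary G)) ≤
      poincareProfile G := by
  classical
  have hV : Nonempty V := Fintype.card_pos_iff.mp (by omega)
  have hnbr : ∀ i : V, ∃ j, G.Adj i j := by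
    intro i
    obtain ⟨j, hj⟩ := Fintype.exists_ne_of_one_lt_card (by omega) i
    obtain ⟨w⟩ := hconn.preconnected i j
    cases w with
    | nil => exact absurd rfl hj
    | cons h p => exact ⟨_, h⟩
  apply le_csInf (poincare_set_nonempty G hcard)
  rintro r ⟨x, hx0, hxne, rfl⟩
  have hD : 0 < ∑ i, |x i| := by
    obtain ⟨i0, hi0⟩ := Function.ne_iff.mp hxne
    exact Finset.sum_pos' (fun i _ => abs_nonneg _)
      ⟨i0, Finset.mem_univ _, abs_pos.mpr hi0⟩
  rw [le_div_iff₀ hD]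
  -- neighbor value functions
  have hNne : ∀ i : V, ((Finset.univ.filter (G.Adj i)).image x).Nonempty := by
    intro i
    obtain ⟨j, hj⟩ := hnbr i
    exact ⟨x j, Finset.mem_image_of_mem x (Finset.mem_filter.mpr ⟨Finset.mem_univ _, hj⟩)⟩
  have hMne : ∀ j : V, ((Finset.univ.filter (fun i => G.Adj i j)).image x).Nonempty := by
    intro j
    obtain ⟨i, hi⟩ := hnbr j
    exact ⟨x i, Finset.mem_image_of_mem x
      (Finset.mem_filter.mpr ⟨Finset.mem_univ _, hi.symm⟩)⟩
  set c : V → ℝ := fun i => ((Finset.univ.filter (G.Adj i)).image x).min' (hNne i) with hcdef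
  set C : V → ℝ := fun j =>
    ((Finset.univ.filter (fun i => G.Adj i j)).image x).max' (hMne j) with hCdef
  -- int instantiation
  have hmem_int : ∀ (t : ℝ) (i : V),
      i ∈ intBoundary G (univ.filter (fun i => t < x i)) ↔ (c i ≤ t ∧ t < x i) := by
    intro t i
    rw [intBoundary, Finset.mem_filter, Finset.mem_filter]
    constructor
    · rintro ⟨⟨-, hti⟩, j, hjA, hadj⟩
      have hxj : x j ≤ t := by
        by_contra hcc
        exact hjA (Finset.mem_filter.mpr ⟨Finset.mem_univ _, not_le.mp hcc⟩)
      refine ⟨le_trans ?_ hxj, hti⟩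
      exact Finset.min'_le _ _
        (Finset.mem_image_of_mem x (Finset.mem_filter.mpr ⟨Finset.mem_univ _, hadj⟩))
    · rintro ⟨hct, hti⟩
      obtain ⟨j, hjmem, hxj⟩ := Finset.mem_image.mp
        (((Finset.univ.filter (G.Adj i)).image x).min'_mem (hNne i))
      have hadj : G.Adj i j := (Finset.mem_filter.mp hjmem).2
      refine ⟨⟨Finset.mem_univ _, hti⟩, j, ?_, hadj⟩
      simp only [Finset.mem_filter, Finset.mem_univ, true_and, not_lt]
      rw [hxj]
      exact hct
  have hab_int : ∀ i, max (x i - c i) 0 ≤ ⨆ j, if G.Adj i j then |x i - x j| else 0 := by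
    intro i
    obtain ⟨j, hjmem, hxj⟩ := Finset.mem_image.mp
      (((Finset.univ.filter (G.Adj i)).image x).min'_mem (hNne i))
    have hadj : G.Adj i j := (Finset.mem_filter.mp hjmem).2
    calc max (x i - c i) 0 ≤ |x i - c i| := max_le (le_abs_self _) (abs_nonneg _)
      _ = |x i - x j| := by simp only [hcdef]; rw [← hxj]
      _ ≤ _ := supTerm_ge G x i j hadj
  -- ext instantiation
  have hmem_ext : ∀ (t : ℝ) (j : V),
      j ∈ extBoundary G (univ.filter (fun i => t < x i)) ↔ (x j ≤ t ∧ t < C j) := by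
    intro t j
    rw [extBoundary, Finset.mem_filter, Finset.mem_compl, Finset.mem_filter]
    constructor
    · rintro ⟨hjA, i, hiA, hadj⟩
      have hti : t < x i := (Finset.mem_filter.mp hiA).2
      refine ⟨?_, lt_of_lt_of_le hti ?_⟩
      · by_contra hcc
        exact hjA ⟨Finset.mem_univ _, not_le.mp hcc⟩
      · simp only [hCdef]
        exact Finset.le_max' _ (x i) (Finset.mem_image_of_mem x
          ((Finset.mem_filter (p := fun i' => G.Adj i' j) (a := i)).mpr
            ⟨Finset.mem_univ i, hadj⟩))
    · rintro ⟨hxj, htC⟩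
      obtain ⟨i, himem, hxi⟩ := Finset.mem_image.mp
        (((Finset.univ.filter (fun i => G.Adj i j)).image x).max'_mem (hMne j))
      have hadj : G.Adj i j := (Finset.mem_filter.mp himem).2
      exact ⟨fun hc => absurd hc.2 (not_lt.mpr hxj),
        i, Finset.mem_filter.mpr ⟨Finset.mem_univ _, by rw [hxi]; exact htC⟩, hadj⟩
  have hab_ext : ∀ j, max (C j - x j) 0 ≤ ⨆ k, if G.Adj j k then |x j - x k| else 0 := by
    intro j
    obtain ⟨i, himem, hxi⟩ := Finset.mem_image.mp
      (((Finset.univ.filter (fun i => G.Adj i j)).image x).max'_mem (hMne j))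
    have hadj : G.Adj i j := (Finset.mem_filter.mp himem).2
    calc max (C j - x j) 0 ≤ |C j - x j| := max_le (le_abs_self _) (abs_nonneg _)
      _ = |x j - C j| := abs_sub_comm _ _
      _ = |x j - x i| := by simp only [hCdef]; rw [← hxi]
      _ ≤ _ := supTerm_ge G x j i hadj.symm
  have K1 := main_aux G hcard (intBoundary G) x c x hmem_int hab_int hx0
  have K2 := main_aux G hcard (extBoundary G) x x C hmem_ext hab_ext hx0
  rcases max_cases (modCheeger G (intBoundary G)) (modCheeger G (extBoundary G)) with
    ⟨hmax, -⟩ | ⟨hmax, -⟩ <;> rw [hmax] <;> nlinarith [K1, K2]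

end final

section upper
variable {V : Type*} [Fintype V] [DecidableEq V] (G : SimpleGraph V) [DecidableRel G.Adj]

set_option maxHeartbeats 1000000 in
theorem poincare_upper (hcard : 2 ≤ Fintype.card V) :
    poincareProfile G ≤ modCheeger G (fun A => intBoundary G A ∪ extBoundary G A) := by
  classical
  have hV : Nonempty V := Fintype.card_pos_iff.mp (by omega)
  apply le_csInf (modCheeger_set_nonempty hcard _)
  rintro r ⟨A, hAne, hAuniv, rfl⟩
  set N : ℝ := (Fintype.card V : ℝ) with hNdef
  set k : ℝ := (A.card : ℝ) with hkdef
  have hk1 : (1:ℝ) ≤ k := by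
    have := Finset.card_pos.mpr (Finset.nonempty_of_ne_empty hAne)
    rw [hkdef]; exact_mod_cast this
  have hkN : k + 1 ≤ N := by
    have : A.card < Fintype.card V :=
      lt_of_le_of_ne (Finset.card_le_univ A)
        (fun h => hAuniv ((Finset.card_eq_iff_eq_univ A).mp h))
    rw [hkdef, hNdef]; exact_mod_cast this
  have hN0 : (0:ℝ) ≤ N := by linarith
  have hcompl : (((Aᶜ : Finset V)).card : ℝ) = N - k := by
    rw [Finset.card_compl, Nat.cast_sub (Finset.card_le_univ A)]
  set x : V → ℝ := fun i => if i ∈ A then N - k else -k with hxdef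
  have hxA : ∀ i ∈ A, x i = N - k := fun i hi => by simp [hxdef, hi]
  have hxA' : ∀ i ∉ A, x i = -k := fun i hi => by simp [hxdef, hi]
  have hsum : ∑ i, x i = 0 := by
    rw [hxdef, Finset.sum_ite, Finset.sum_const, Finset.sum_const]
    rw [Finset.filter_univ_mem]
    have : Finset.univ.filter (fun i => i ∉ A) = Aᶜ := by
      ext i; simp
    rw [this]
    rw [nsmul_eq_mul, nsmul_eq_mul, ← hkdef, hcompl]
    ring
  have hxne : x ≠ 0 := by
    obtain ⟨i0, hi0⟩ := Finset.nonempty_of_ne_empty hAne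
    intro h
    have := congrFun h i0
    rw [hxA i0 hi0] at this
    simp only [Pi.zero_apply] at this
    linarith
  have hD : ∑ i, |x i| = 2 * k * (N - k) := by
    have : ∀ i, |x i| = if i ∈ A then N - k else k := by
      intro i
      by_cases hi : i ∈ A
      · rw [hxA i hi, if_pos hi, abs_of_nonneg (by linarith)]
      · rw [hxA' i hi, if_neg hi, abs_neg, abs_of_nonneg (by linarith)]
    rw [Finset.sum_congr rfl (fun i _ => this i), Finset.sum_ite, Finset.sum_const,
      Finset.sum_const, Finset.filter_univ_mem]
    have h2 : Finset.univ.filter (fun i => i ∉ A) = Aᶜ := by ext i; simp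
    rw [h2, nsmul_eq_mul, nsmul_eq_mul, ← hkdef, hcompl]
    ring
  -- bounds on x
  have hxlb : ∀ i, -k ≤ x i := by
    intro i
    by_cases hi : i ∈ A
    · rw [hxA i hi]; linarith
    · rw [hxA' i hi]
  have hxub : ∀ i, x i ≤ N - k := by
    intro i
    by_cases hi : i ∈ A
    · rw [hxA i hi]
    · rw [hxA' i hi]; linarith
  set B := intBoundary G A ∪ extBoundary G A with hBdef
  have hsup : ∀ i, (⨆ j, if G.Adj i j then |x i - x j| else 0)
      = if i ∈ B then N else 0 := by
    intro i
    have hb : BddAbove (Set.range fun j => if G.Adj i j then |x i - x j| else 0) :=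
      Set.Finite.bddAbove (Set.finite_range _)
    by_cases hib : i ∈ B
    · rw [if_pos hib]
      apply le_antisymm
      · apply ciSup_le
        intro j
        by_cases hadj : G.Adj i j
        · rw [if_pos hadj]
          rw [abs_le]
          constructor <;> nlinarith [hxlb i, hxub i, hxlb j, hxub j]
        · rw [if_neg hadj]; exact hN0
      · rcases Finset.mem_union.mp hib with hi | hi
        · rw [intBoundary, Finset.mem_filter] at hi
          obtain ⟨hiA, j, hjA, hadj⟩ := hi
          refine le_trans ?_ (le_ciSup hb j)
          rw [if_pos hadj]
          rw [show x i - x j = N by rw [hxA i hiA, hxA' j hjA]; ring]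
          rw [abs_of_nonneg hN0]
        · rw [extBoundary, Finset.mem_filter, Finset.mem_compl] at hi
          obtain ⟨hiA, j, hjA, hadj⟩ := hi
          refine le_trans ?_ (le_ciSup hb j)
          rw [if_pos hadj.symm]
          rw [show x i - x j = -N by rw [hxA' i hiA, hxA j hjA]; ring]
          rw [abs_neg, abs_of_nonneg hN0]
    · rw [if_neg hib]
      have hz : ∀ j, (if G.Adj i j then |x i - x j| else 0) = 0 := by
        intro j
        by_cases hadj : G.Adj i j
        · rw [if_pos hadj]
          have hsame : i ∈ A ↔ j ∈ A := by
            constructor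
            · intro hiA
              by_contra hjA
              exact hib (Finset.mem_union_left _
                (Finset.mem_filter.mpr ⟨hiA, j, hjA, hadj⟩))
            · intro hjA
              by_contra hiA
              exact hib (Finset.mem_union_right _
                (Finset.mem_filter.mpr ⟨Finset.mem_compl.mpr hiA, j, hjA, hadj.symm⟩))
          by_cases hiA : i ∈ A
          · rw [hxA i hiA, hxA j (hsame.mp hiA)]; simp
          · rw [hxA' i hiA, hxA' j (fun h => hiA (hsame.mpr h))]; simp
        · rw [if_neg hadj]
      rw [show (fun j => if G.Adj i j then |x i - x j| else 0) = fun _ => (0:ℝ) from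
        funext hz]
      exact ciSup_const
  have hE : ∑ i, (⨆ j, if G.Adj i j then |x i - x j| else 0) = (B.card : ℝ) * N := by
    rw [Finset.sum_congr rfl (fun i _ => hsup i)]
    rw [Finset.sum_ite, Finset.sum_const, Finset.sum_const, Finset.filter_univ_mem]
    simp [nsmul_eq_mul]
  have hPle : poincareProfile G ≤ ((B.card : ℝ) * N) / (2 * k * (N - k)) := by
    apply csInf_le (poincare_bddBelow G)
    exact ⟨x, hsum, hxne, by rw [hE, hD]⟩
  refine le_trans hPle ?_
  rw [hcompl]
  have hB0 : (0:ℝ) ≤ B.card := Nat.cast_nonneg _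
  have hden1 : (0:ℝ) < 2 * k * (N - k) := by
    have := mul_pos (show (0:ℝ) < k by linarith) (show (0:ℝ) < N - k by linarith)
    linarith
  have hden2 : (0:ℝ) < min k (N - k) := lt_min (by linarith) (by linarith)
  rw [div_le_div_iff₀ hden1 hden2]
  rcases min_cases k (N - k) with ⟨h1, h2⟩ | ⟨h1, h2⟩ <;> rw [h1]
  · nlinarith [mul_nonneg hB0 (mul_nonneg (show (0:ℝ) ≤ k by linarith)
      (show (0:ℝ) ≤ N - 2*k by linarith))]
  · nlinarith [mul_nonneg hB0 (mul_nonneg (show (0:ℝ) ≤ N - k by linarith)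
      (show (0:ℝ) ≤ 2*k - N by linarith))]

end upper


/-- `(1/2)·max{h_int(G), h_ext(G)} ≤ P¹(G) ≤ h_ver(G)` for a finite connected
simple graph on at least two vertices. -/
theorem poincare_profile_cheeger_bounds {V : Type*} [Fintype V] [DecidableEq V]
    (G : SimpleGraph V) [DecidableRel G.Adj]
    (hconn : G.Connected) (hcard : 2 ≤ Fintype.card V) :
    (1 / 2) * max (modCheeger G (intBoundary G)) (modCheeger G (extBoundary G)) ≤
        poincareProfile G ∧
      poincareProfile G ≤
        modCheeger G (fun A => intBoundary G A ∪ extBoundary G A) := by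
  exact ⟨poincare_lower G hconn hcard, poincare_upper G hcard⟩
end
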